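/- arXiv:2006.05917 — 7 statements merged into one kernel-verified Lean document; each statement's English description precedes it below -/
import Mathlib

section
/- For every β ∈ ℝ, E[exp(iβX − iβY + (β²/2)E[X²] + (β²/2)E[Y²]) · Z] = iβ · exp(β² E[XY]) · (E[XZ] − E[YZ]), where i is the imaginary unit and the expectation is that of a complex-valued integrable random variable. -/
open MeasureTheory ProbabilityTheory Real Complex Set

lemma gauss_integral_eq {E : Type*} [NormedAddCommGroup E] [NormedSpace ℝ E]
    {v : NNReal} (hv : v ≠ 0) (g : ℝ → E) :
    ∫ x, g x ∂(gaussianReal 0 v) = ∫ x, gaussianPDFReal 0 v x • g x := by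
  rw [gaussianReal_of_var_ne_zero 0 hv]
  have h : gaussianPDF 0 v = fun x => ((gaussianPDFReal 0 v x).toNNReal : ENNReal) := rfl
  rw [h, integral_withDensity_eq_integral_smul
    (measurable_gaussianPDFReal 0 v).real_toNNReal g]
  congr 1; funext x
  rw [NNReal.smul_def, Real.coe_toNNReal _ (gaussianPDFReal_nonneg 0 v x)]

lemma gauss_integrable_iff {E : Type*} [NormedAddCommGroup E] [NormedSpace ℝ E]
    {v : NNReal} (hv : v ≠ 0) (g : ℝ → E) :
    Integrable g (gaussianReal 0 v) ↔
      Integrable (fun x => gaussianPDFReal 0 v x • g x) volume := by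
  rw [gaussianReal_of_var_ne_zero 0 hv]
  have h : gaussianPDF 0 v = fun x => ((gaussianPDFReal 0 v x).toNNReal : ENNReal) := rfl
  rw [h, integrable_withDensity_iff_integrable_smul
    (measurable_gaussianPDFReal 0 v).real_toNNReal]
  constructor <;> intro hh <;> refine hh.congr (Filter.Eventually.of_forall fun x => ?_) <;>
    simp only [NNReal.smul_def, Real.coe_toNNReal _ (gaussianPDFReal_nonneg 0 v x)]

lemma gauss_sq_integrable (v : NNReal) :
    Integrable (fun x : ℝ => x ^ 2) (gaussianReal 0 v) := by
  rcases eq_or_ne v 0 with rfl | hv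
  · rw [gaussianReal_zero_var]
    refine (integrable_const (0 : ℝ)).congr ?_
    rw [ae_dirac_eq]
    simp [Filter.EventuallyEq, Filter.eventually_pure]
  · rw [gauss_integrable_iff hv]
    have hb : 0 < (2 * (v : ℝ))⁻¹ := by positivity
    have h := ((integrable_rpow_mul_exp_neg_mul_sq hb (s := 2))
      (by norm_num)).const_mul (√(2 * π * v))⁻¹
    refine h.congr (Filter.Eventually.of_forall fun x => ?_)
    have hx : (x : ℝ) ^ (2:ℝ) = x ^ (2:ℕ) := by
      rw [← Real.rpow_natCast x 2]; norm_num
    simp only [gaussianPDFReal_def, smul_eq_mul]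
    rw [hx, show -(2 * (v:ℝ))⁻¹ * x ^ 2 = -(x - 0) ^ 2 / (2 * (v:ℝ)) from by ring]
    ring

lemma gauss_sq_integral (v : NNReal) :
    ∫ x, x ^ 2 ∂(gaussianReal 0 v) = (v : ℝ) := by
  rcases eq_or_ne v 0 with rfl | hv
  · rw [gaussianReal_zero_var, integral_dirac]; simp
  · have hvpos : 0 < (v : ℝ) := lt_of_le_of_ne (v.coe_nonneg) (by exact_mod_cast hv.symm)
    have hb : 0 < (2 * (v : ℝ))⁻¹ := by positivity
    have hrpow : ∀ x : ℝ, x ^ (2:ℝ) = x ^ (2:ℕ) := fun x => by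
      rw [← Real.rpow_natCast x 2]; norm_num
    -- Ioi integral
    have hIoi : ∫ x in Ioi (0:ℝ), x ^ 2 * rexp (-(2 * (v:ℝ))⁻¹ * x ^ 2)
        = ((2*(v:ℝ))⁻¹) ^ (-(3:ℝ)/2) * (1/2) * Real.Gamma (3/2) := by
      have h := _root_.integral_rpow_mul_exp_neg_mul_rpow (p := 2) (q := 2) (b := (2*(v:ℝ))⁻¹)
        (by norm_num) (by norm_num) hb
      rw [show ((2:ℝ)+1)/2 = 3/2 by norm_num, show (-((2:ℝ)+1)/2) = -(3:ℝ)/2 by norm_num] at h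
      rw [← h]
      refine setIntegral_congr_fun measurableSet_Ioi fun x _ => ?_
      rw [hrpow x]
    have hGamma : Real.Gamma (3/2) = √π / 2 := by
      rw [show (3:ℝ)/2 = 1/2 + 1 by norm_num, Real.Gamma_add_one (by norm_num),
        Real.Gamma_one_half_eq]
      ring
    have hfull : ∫ x : ℝ, x ^ 2 * rexp (-(2 * (v:ℝ))⁻¹ * x ^ 2)
        = 2 * ((((2*(v:ℝ))⁻¹) ^ (-(3:ℝ)/2)) * (1/2) * (√π / 2)) := by
      rw [← hGamma, ← hIoi, ← integral_comp_abs (f := fun x => x ^ 2 * rexp (-(2 * (v:ℝ))⁻¹ * x ^ 2))]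
      congr 1; funext x
      rw [_root_.sq_abs]
    rw [gauss_integral_eq hv]
    have : (fun x : ℝ => gaussianPDFReal 0 v x • x ^ 2)
        = fun x : ℝ => (√(2 * π * v))⁻¹ * (x ^ 2 * rexp (-(2 * (v:ℝ))⁻¹ * x ^ 2)) := by
      funext x
      simp only [gaussianPDFReal_def, smul_eq_mul]
      rw [show -(x-0)^2/(2*(v:ℝ)) = -(2*(v:ℝ))⁻¹ * x^2 from by ring]
      ring
    rw [this, integral_const_mul, hfull]
    -- now pure computation
    set s := √(2*(v:ℝ)) with hs
    have hspos : 0 < s := Real.sqrt_pos.mpr (by positivity)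
    have hs2 : s ^ 2 = 2 * (v:ℝ) := Real.sq_sqrt (by positivity)
    have hsqrt : √(2 * π * (v:ℝ)) = s * √π := by
      rw [show 2 * π * (v:ℝ) = (2*(v:ℝ)) * π from by ring, Real.sqrt_mul (by positivity)]
    have hpow : ((2*(v:ℝ))⁻¹) ^ (-(3:ℝ)/2) = s ^ 3 := by
      rw [← hs2, ← Real.rpow_natCast s 2, ← Real.rpow_natCast s 3,
        ← Real.rpow_neg_one, ← Real.rpow_mul hspos.le, ← Real.rpow_mul hspos.le]
      norm_num
    have hπ : (0:ℝ) < √π := Real.sqrt_pos.mpr Real.pi_pos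
    rw [hsqrt, hpow]
    have hs3 : s ^ 3 = 2 * (v:ℝ) * s := by rw [pow_succ, hs2]
    rw [hs3]
    field_simp

lemma gauss_char (v : NNReal) :
    ∫ x, Complex.exp (Complex.I * x) ∂(gaussianReal 0 v)
      = Complex.exp (-((v:ℝ):ℂ) / 2) := by
  rcases eq_or_ne v 0 with rfl | hv
  · rw [gaussianReal_zero_var, integral_dirac]; simp
  · have hvpos : 0 < (v : ℝ) := lt_of_le_of_ne (v.coe_nonneg) (by exact_mod_cast hv.symm)
    have hvc : ((v:ℝ):ℂ) ≠ 0 := by exact_mod_cast hvpos.ne'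
    rw [gauss_integral_eq hv]
    have hb : (-(1/(2*((v:ℝ):ℂ)))).re < 0 := by
      rw [show -(1/(2*((v:ℝ):ℂ))) = ((-(1/(2*(v:ℝ))) : ℝ) : ℂ) from by push_cast; ring]
      rw [Complex.ofReal_re]
      have : 0 < 1/(2*(v:ℝ)) := by positivity
      linarith
    have key := integral_cexp_quadratic hb Complex.I 0
    have heq : (fun x : ℝ => gaussianPDFReal 0 v x • Complex.exp (Complex.I * x))
        = fun x : ℝ => ((√(2*π*(v:ℝ)) : ℝ):ℂ)⁻¹
            * Complex.exp (-(1/(2*((v:ℝ):ℂ))) * x^2 + Complex.I * x + 0) := by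
      funext x
      rw [Complex.real_smul, gaussianPDFReal_def]
      push_cast
      rw [mul_assoc, ← Complex.exp_add]
      congr 2
      ring
    rw [heq, integral_const_mul, key]
    have h1 : ((π:ℂ) / -(-(1/(2*((v:ℝ):ℂ))))) = ((2*π*(v:ℝ) : ℝ) : ℂ) := by
      push_cast
      field_simp
    have h2 : ((0:ℂ) - Complex.I^2/(4 * -(1/(2*((v:ℝ):ℂ))))) = -((v:ℝ):ℂ)/2 := by
      rw [Complex.I_sq]
      field_simp
      ring
    rw [h1, h2]
    have h3 : (((2*π*(v:ℝ) : ℝ)):ℂ) ^ ((1:ℂ)/2) = ((√(2*π*(v:ℝ)) : ℝ) : ℂ) := by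
      rw [Real.sqrt_eq_rpow, show ((1:ℂ)/2) = (((1/2:ℝ)):ℂ) from by norm_num,
        ← Complex.ofReal_cpow (by positivity)]
    rw [h3, ← mul_assoc]
    rw [inv_mul_cancel₀ (by exact_mod_cast (Real.sqrt_pos.mpr (by positivity)).ne'), one_mul]

lemma map_sq_fact {Ω : Type*} [MeasurableSpace Ω] {P : Measure Ω}
    {f : Ω → ℝ} (hf : AEMeasurable f P) {v : NNReal}
    (h : Measure.map f P = gaussianReal 0 v) :
    Integrable (fun ω => f ω ^ 2) P ∧ ∫ ω, f ω ^ 2 ∂P = (v : ℝ) := by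
  have hg : AEStronglyMeasurable (fun x : ℝ => x ^ 2) (Measure.map f P) :=
    (continuous_pow 2).aestronglyMeasurable
  constructor
  · exact (integrable_map_measure hg hf).mp (h ▸ gauss_sq_integrable v)
  · rw [← integral_map hf hg, h, gauss_sq_integral]

lemma map_char_fact {Ω : Type*} [MeasurableSpace Ω] {P : Measure Ω}
    {f : Ω → ℝ} (hf : AEMeasurable f P) {v : NNReal}
    (h : Measure.map f P = gaussianReal 0 v) :
    ∫ ω, Complex.exp (Complex.I * (f ω : ℂ)) ∂P = Complex.exp (-((v:ℝ):ℂ)/2) := by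
  have hg : AEStronglyMeasurable (fun x : ℝ => Complex.exp (Complex.I * (x:ℂ)))
      (Measure.map f P) :=
    (Complex.continuous_exp.comp (continuous_const.mul Complex.continuous_ofReal)).aestronglyMeasurable
  rw [← integral_map hf hg, h] at *
  rw [gauss_char]

/-- **Girsanov-type identity for centered jointly Gaussian vectors (imaginary exponential).**
If the joint law of `(X, Y, Z)` is a centered Gaussian measure on `ℝ³` (equivalently, every
linear combination `a•X + b•Y + c•Z` has a centered Gaussian law), then for every `β ∈ ℝ`,
`E[exp(iβX − iβY + (β²/2)E[X²] + (β²/2)E[Y²]) · Z] = iβ · exp(β² E[XY]) · (E[XZ] − E[YZ])`. -/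
theorem stmt1 {Ω : Type*} [MeasurableSpace Ω] (P : Measure Ω) [IsProbabilityMeasure P]
    (X Y Z : Ω → ℝ) (hX : Measurable X) (hY : Measurable Y) (hZ : Measurable Z)
    (hGauss : ∀ a b c : ℝ, ∃ v : NNReal,
      Measure.map (fun ω => a * X ω + b * Y ω + c * Z ω) P = gaussianReal 0 v)
    (β : ℝ) :
    ∫ ω, Complex.exp (Complex.I * β * X ω - Complex.I * β * Y ω
        + β ^ 2 / 2 * ((∫ ω', X ω' ^ 2 ∂P : ℝ) : ℂ)
        + β ^ 2 / 2 * ((∫ ω', Y ω' ^ 2 ∂P : ℝ) : ℂ)) * (Z ω : ℂ) ∂P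
      = Complex.I * β * Complex.exp (β ^ 2 * ((∫ ω', X ω' * Y ω' ∂P : ℝ) : ℂ))
        * (((∫ ω', X ω' * Z ω' ∂P : ℝ) : ℂ) - ((∫ ω', Y ω' * Z ω' ∂P : ℝ) : ℂ)) := by
  -- notation
  set σXX := ∫ ω', X ω' ^ 2 ∂P with hσXX
  set σYY := ∫ ω', Y ω' ^ 2 ∂P with hσYY
  set σXY := ∫ ω', X ω' * Y ω' ∂P with hσXY
  set σXZ := ∫ ω', X ω' * Z ω' ∂P with hσXZ
  set σYZ := ∫ ω', Y ω' * Z ω' ∂P with hσYZ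
  set σZZ := ∫ ω', Z ω' ^ 2 ∂P with hσZZ
  -- single-variable gaussian laws
  have getlaw : ∀ (f : Ω → ℝ) (a b c : ℝ), (∀ ω, a * X ω + b * Y ω + c * Z ω = f ω) →
      ∃ v : NNReal, Measure.map f P = gaussianReal 0 v := by
    intro f a b c hf
    obtain ⟨v, hv⟩ := hGauss a b c
    exact ⟨v, by rwa [show (fun ω => a * X ω + b * Y ω + c * Z ω) = f from funext hf] at hv⟩
  obtain ⟨vX, hvX⟩ := getlaw X 1 0 0 (fun ω => by ring)
  obtain ⟨vY, hvY⟩ := getlaw Y 0 1 0 (fun ω => by ring)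
  obtain ⟨vZ, hvZ⟩ := getlaw Z 0 0 1 (fun ω => by ring)
  -- square integrability
  have intX2 : Integrable (fun ω => X ω ^ 2) P := (map_sq_fact hX.aemeasurable hvX).1
  have intY2 : Integrable (fun ω => Y ω ^ 2) P := (map_sq_fact hY.aemeasurable hvY).1
  have intZ2 : Integrable (fun ω => Z ω ^ 2) P := (map_sq_fact hZ.aemeasurable hvZ).1
  have memX : MemLp X 2 P := (memLp_two_iff_integrable_sq hX.aestronglyMeasurable).mpr intX2
  have memY : MemLp Y 2 P := (memLp_two_iff_integrable_sq hY.aestronglyMeasurable).mpr intY2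
  have memZ : MemLp Z 2 P := (memLp_two_iff_integrable_sq hZ.aestronglyMeasurable).mpr intZ2
  have hpqr : (1:ENNReal)/1 = 1/2 + 1/2 := by
    rw [ENNReal.div_add_div_same, one_div_one, show (1:ENNReal)+1 = 2 from one_add_one_eq_two,
      ENNReal.div_self two_ne_zero ENNReal.ofNat_ne_top]
  have intXY : Integrable (fun ω => X ω * Y ω) P :=
    memLp_one_iff_integrable.mp (memY.smul memX (r := 1))
  have intXZ : Integrable (fun ω => X ω * Z ω) P :=
    memLp_one_iff_integrable.mp (memZ.smul memX (r := 1))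
  have intYZ : Integrable (fun ω => Y ω * Z ω) P :=
    memLp_one_iff_integrable.mp (memZ.smul memY (r := 1))
  have intZ : Integrable Z P := memZ.integrable one_le_two
  -- second moment expansion
  have hq : ∀ t : ℝ, ∫ ω, (β * X ω + (-β) * Y ω + t * Z ω) ^ 2 ∂P
      = β^2*σXX + β^2*σYY + t^2*σZZ + (-2*β^2)*σXY + (2*β*t)*σXZ + (-2*β*t)*σYZ := by
    intro t
    have e : (fun ω => (β * X ω + (-β) * Y ω + t * Z ω)^2)
        = fun ω => β^2*(X ω^2) + β^2*(Y ω^2) + t^2*(Z ω^2) + (-2*β^2)*(X ω*Y ω)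
            + (2*β*t)*(X ω*Z ω) + (-2*β*t)*(Y ω*Z ω) := by funext ω; ring
    have A1 := intX2.const_mul (β^2)
    have A2 := intY2.const_mul (β^2)
    have A3 := intZ2.const_mul (t^2)
    have A4 := intXY.const_mul (-2*β^2)
    have A5 := intXZ.const_mul (2*β*t)
    have A6 := intYZ.const_mul (-2*β*t)
    have B2 : Integrable (fun ω => β^2*(X ω^2) + β^2*(Y ω^2)) P := A1.add A2
    have B3 : Integrable (fun ω => β^2*(X ω^2) + β^2*(Y ω^2) + t^2*(Z ω^2)) P := B2.add A3
    have B4 : Integrable (fun ω => β^2*(X ω^2) + β^2*(Y ω^2) + t^2*(Z ω^2)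
        + (-2*β^2)*(X ω*Y ω)) P := B3.add A4
    have B5 : Integrable (fun ω => β^2*(X ω^2) + β^2*(Y ω^2) + t^2*(Z ω^2)
        + (-2*β^2)*(X ω*Y ω) + (2*β*t)*(X ω*Z ω)) P := B4.add A5
    rw [e, integral_add B5 A6, integral_add B4 A5, integral_add B3 A4,
      integral_add B2 A3, integral_add A1 A2,
      integral_const_mul, integral_const_mul, integral_const_mul, integral_const_mul,
      integral_const_mul, integral_const_mul]
  -- the quadratic function
  set qf : ℝ → ℝ := fun t =>
    β^2*σXX + β^2*σYY + t^2*σZZ + (-2*β^2)*σXY + (2*β*t)*σXZ + (-2*β*t)*σYZ with hqf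
  -- char function values
  have hm : ∀ t : ℝ, Measurable (fun ω => β * X ω + (-β) * Y ω + t * Z ω) :=
    fun t => ((hX.const_mul β).add (hY.const_mul (-β))).add (hZ.const_mul t)
  have hF : ∀ t : ℝ, ∫ ω, Complex.exp (Complex.I * ((β * X ω + (-β) * Y ω + t * Z ω : ℝ) : ℂ)) ∂P
      = Complex.exp (-((qf t : ℝ) : ℂ) / 2) := by
    intro t
    obtain ⟨v, hv⟩ := hGauss β (-β) t
    have h1 := map_char_fact (hm t).aemeasurable hv
    have h2 := (map_sq_fact (hm t).aemeasurable hv).2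
    rw [hq t] at h2
    rw [h1, ← h2]
  -- derivative of qf at 0
  set D : ℝ := (2*β)*σXZ + (-2*β)*σYZ with hD
  have hq' : HasDerivAt qf D 0 := by
    have hpow : HasDerivAt (fun t : ℝ => t ^ 2) (0:ℝ) 0 := by
      simpa using hasDerivAt_pow 2 (0:ℝ)
    have h3 : HasDerivAt (fun t : ℝ => β^2*σXX + β^2*σYY + t^2*σZZ) (0:ℝ) 0 := by
      simpa using (hpow.mul_const σZZ).const_add (β^2*σXX + β^2*σYY)
    have h4 := h3.add_const ((-2*β^2)*σXY)
    have h5 : HasDerivAt (fun t : ℝ => (2*β*t)*σXZ) ((2*β)*σXZ) 0 := by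
      simpa [mul_assoc] using (((hasDerivAt_id (0:ℝ)).const_mul (2*β)).mul_const σXZ)
    have h6 : HasDerivAt (fun t : ℝ => (-2*β*t)*σYZ) ((-2*β)*σYZ) 0 := by
      simpa [mul_assoc] using (((hasDerivAt_id (0:ℝ)).const_mul (-2*β)).mul_const σYZ)
    have htot := (h4.add h5).add h6
    rw [hqf]
    exact htot.congr_deriv (by rw [hD]; ring)
  -- norm of imaginary exponentials
  have hnorm1 : ∀ r : ℝ, ‖Complex.exp (Complex.I * (r:ℂ))‖ = 1 := by
    intro r
    rw [Complex.norm_exp]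
    norm_num [Complex.mul_re]
  have hmC : ∀ t : ℝ, AEStronglyMeasurable
      (fun ω => Complex.exp (Complex.I * ((β * X ω + (-β) * Y ω + t * Z ω : ℝ):ℂ))) P :=
    fun t => (Complex.measurable_exp.comp
      (measurable_const.mul (Complex.measurable_ofReal.comp (hm t)))).aestronglyMeasurable
  have hder := hasDerivAt_integral_of_dominated_loc_of_deriv_le (μ := P) (x₀ := (0:ℝ))
      (F := fun t ω => Complex.exp (Complex.I * ((β * X ω + (-β) * Y ω + t * Z ω : ℝ):ℂ)))
      (F' := fun t ω => (Complex.I * (Z ω : ℂ)) *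
        Complex.exp (Complex.I * ((β * X ω + (-β) * Y ω + t * Z ω : ℝ):ℂ)))
      (bound := fun ω => |Z ω|) (s := Metric.ball 0 1) (Metric.ball_mem_nhds 0 one_pos)
      (Filter.Eventually.of_forall fun t => hmC t)
      ((integrable_const (1:ℝ)).mono' (hmC 0) (Filter.Eventually.of_forall fun ω => by
          rw [hnorm1]))
      (((measurable_const.mul (Complex.measurable_ofReal.comp hZ)).mul
        (Complex.measurable_exp.comp (measurable_const.mul
          (Complex.measurable_ofReal.comp (hm 0))))).aestronglyMeasurable)
      (Filter.Eventually.of_forall fun ω t _ => by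
          rw [norm_mul, hnorm1, mul_one, norm_mul, Complex.norm_I, one_mul,
            Complex.norm_real, Real.norm_eq_abs])
      intZ.abs
      (Filter.Eventually.of_forall fun ω t _ => by
          have hr : HasDerivAt (fun s : ℝ => β * X ω + (-β) * Y ω + s * Z ω) (Z ω) t := by
            simpa using ((hasDerivAt_id t).mul_const (Z ω)).const_add (β * X ω + (-β) * Y ω)
          have hc := ((hr.ofReal_comp).const_mul Complex.I).cexp
          exact hc.congr_deriv (by ring))
  have hGder : HasDerivAt (fun t : ℝ => Complex.exp (-((qf t : ℝ):ℂ)/2))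
      (Complex.exp (-((qf 0 : ℝ):ℂ)/2) * (-((D:ℝ):ℂ)/2)) 0 := by
    have h1 : HasDerivAt (fun t : ℝ => -((qf t : ℝ):ℂ)/2) (-((D:ℝ):ℂ)/2) 0 :=
      (hq'.ofReal_comp.neg).div_const 2
    exact h1.cexp
  have h2 := hder.2
  rw [show (fun t : ℝ => ∫ ω, Complex.exp
        (Complex.I * ((β * X ω + (-β) * Y ω + t * Z ω : ℝ):ℂ)) ∂P)
      = fun t : ℝ => Complex.exp (-((qf t : ℝ):ℂ)/2) from funext hF] at h2
  have key := h2.unique hGder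
  -- final assembly
  have hpoint : ∀ ω, Complex.exp (Complex.I * β * X ω - Complex.I * β * Y ω
        + β ^ 2 / 2 * (σXX : ℂ) + β ^ 2 / 2 * (σYY : ℂ)) * (Z ω : ℂ)
      = (Complex.exp (β ^ 2 / 2 * (σXX : ℂ) + β ^ 2 / 2 * (σYY : ℂ)) * (-Complex.I)) *
        ((Complex.I * (Z ω : ℂ)) *
          Complex.exp (Complex.I * ((β * X ω + (-β) * Y ω + (0:ℝ) * Z ω : ℝ):ℂ))) := by
    intro ω
    rw [show Complex.I * β * X ω - Complex.I * β * Y ω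
          + β ^ 2 / 2 * (σXX : ℂ) + β ^ 2 / 2 * (σYY : ℂ)
        = (β ^ 2 / 2 * (σXX : ℂ) + β ^ 2 / 2 * (σYY : ℂ))
          + Complex.I * ((β * X ω + (-β) * Y ω + (0:ℝ) * Z ω : ℝ):ℂ) from by
      push_cast; ring, Complex.exp_add]
    linear_combination (Complex.exp (β ^ 2 / 2 * (σXX : ℂ) + β ^ 2 / 2 * (σYY : ℂ))
      * (Z ω : ℂ) * Complex.exp (Complex.I * ((β * X ω + (-β) * Y ω + (0:ℝ) * Z ω : ℝ):ℂ)))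
      * Complex.I_mul_I
  rw [integral_congr_ae (Filter.Eventually.of_forall hpoint), integral_const_mul, key]
  have hexp : Complex.exp (β ^ 2 / 2 * (σXX : ℂ) + β ^ 2 / 2 * (σYY : ℂ))
      * Complex.exp (-((qf 0 : ℝ):ℂ)/2) = Complex.exp (β ^ 2 * (σXY : ℂ)) := by
    rw [← Complex.exp_add]
    congr 1
    rw [show qf 0 = β^2*σXX + β^2*σYY + (-2*β^2)*σXY from by rw [hqf]; ring]
    push_cast
    ring
  rw [show Complex.exp (β ^ 2 / 2 * (σXX : ℂ) + β ^ 2 / 2 * (σYY : ℂ)) * (-Complex.I)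
        * (Complex.exp (-((qf 0 : ℝ):ℂ)/2) * (-((D:ℝ):ℂ)/2))
      = (Complex.exp (β ^ 2 / 2 * (σXX : ℂ) + β ^ 2 / 2 * (σYY : ℂ))
          * Complex.exp (-((qf 0 : ℝ):ℂ)/2)) * (Complex.I * ((D:ℝ):ℂ)/2) from by ring,
    hexp, hD]
  push_cast
  ring
end

section
/- There exists a constant c > 0 (depending only on d, g and K) such that for all η ∈ (0, δ), all u, v ∈ ℝ^d with |u| ≤ 1 and |v| ≤ 1, and all x, y ∈ K with |x − y| > 10η, the second-order difference satisfies |C(x,y) + C(x − ηu, y − ηv) − C(x − ηu, y) − C(x, y − ηv)| ≤ c η² / |x − y|². -/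
open MeasureTheory

open Set in
/-- Mixed second difference bound via the mean value theorem, assuming a Lipschitz bound
for the derivative on a convex set containing the relevant rectangle. -/
lemma mixedDiff {F : Type*} [NormedAddCommGroup F] [NormedSpace ℝ F]
    (f : F → ℝ) (f' : F → F →L[ℝ] ℝ) (S : Set F) (hS : Convex ℝ S)
    (hdf : ∀ z ∈ S, HasFDerivWithinAt f (f' z) S z)
    (M : ℝ) (hL : ∀ a ∈ S, ∀ b ∈ S, ‖f' a - f' b‖ ≤ M * ‖a - b‖)
    (p w₁ w₂ : F)
    (hp : ∀ s ∈ Icc (0:ℝ) 1, ∀ t ∈ Icc (0:ℝ) 1, p - s • w₁ - t • w₂ ∈ S) :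
    |f p + f (p - w₁ - w₂) - f (p - w₁) - f (p - w₂)| ≤ M * ‖w₂‖ * ‖w₁‖ := by
  set S₂ : Set F := S ∩ (fun z => z - w₂) ⁻¹' S with hS₂def
  have hS₂ : Convex ℝ S₂ := by
    intro a ha b hb s t hs ht hst
    refine ⟨hS ha.1 hb.1 hs ht hst, ?_⟩
    have h2 := hS ha.2 hb.2 hs ht hst
    have hw : s • a + t • b - w₂ = s • (a - w₂) + t • (b - w₂) := by
      calc s • a + t • b - w₂ = s • a + t • b - (s + t) • w₂ := by rw [hst, one_smul]
        _ = s • (a - w₂) + t • (b - w₂) := by rw [add_smul, smul_sub, smul_sub]; abel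
    simpa [hw] using h2
  set h : F → ℝ := fun z => f z - f (z - w₂) with hh
  set h' : F → F →L[ℝ] ℝ := fun z => f' z - f' (z - w₂) with hh'
  have hdh : ∀ z ∈ S₂, HasFDerivWithinAt h (h' z) S₂ z := by
    intro z hz
    have h1 : HasFDerivWithinAt f (f' z) S₂ z := (hdf z hz.1).mono inter_subset_left
    have h2 : HasFDerivWithinAt (fun z => f (z - w₂)) (f' (z - w₂)) S₂ z := by
      have hi : HasFDerivWithinAt (fun z : F => z - w₂) (ContinuousLinearMap.id ℝ F) S₂ z :=
        (hasFDerivWithinAt_id z S₂).sub_const w₂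
      have := (hdf (z - w₂) hz.2).comp z hi (fun a ha => ha.2)
      exact this
    exact h1.sub h2
  have hbound : ∀ z ∈ S₂, ‖h' z‖ ≤ M * ‖w₂‖ := by
    intro z hz
    have := hL z hz.1 (z - w₂) hz.2
    simpa using this
  have hmem : ∀ s ∈ Icc (0:ℝ) 1, p - s • w₁ ∈ S₂ := by
    intro s hs
    constructor
    · have := hp s hs 0 ⟨le_refl 0, zero_le_one⟩
      simpa using this
    · have := hp s hs 1 ⟨zero_le_one, le_refl 1⟩
      simpa using this
  have hp0 : p ∈ S₂ := by simpa using hmem 0 ⟨le_refl 0, zero_le_one⟩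
  have hp1 : p - w₁ ∈ S₂ := by simpa using hmem 1 ⟨zero_le_one, le_refl 1⟩
  have key := hS₂.norm_image_sub_le_of_norm_hasFDerivWithin_le hdh hbound hp1 hp0
  have hkey : ‖h p - h (p - w₁)‖ ≤ M * ‖w₂‖ * ‖p - (p - w₁)‖ := key
  simp only [hh] at hkey
  have he : f p + f (p - w₁ - w₂) - f (p - w₁) - f (p - w₂)
      = (f p - f (p - w₂)) - (f (p - w₁) - f (p - w₁ - w₂)) := by ring
  rw [he, ← Real.norm_eq_abs]
  calc ‖(f p - f (p - w₂)) - (f (p - w₁) - f (p - w₁ - w₂))‖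
      ≤ M * ‖w₂‖ * ‖p - (p - w₁)‖ := hkey
    _ = M * ‖w₂‖ * ‖w₁‖ := by rw [sub_sub_cancel]

section LogPart

set_option synthInstance.maxHeartbeats 1000000
set_option maxHeartbeats 1000000

variable {E : Type*} [NormedAddCommGroup E] [InnerProductSpace ℝ E]

/-- The derivative of `z ↦ -log ‖z‖`. -/
noncomputable def phiD (z : E) : E →L[ℝ] ℝ := (-(‖z‖ ^ 2)⁻¹) • innerSL ℝ z

lemma hasFDerivAt_neg_log_norm {z : E} (hz : z ≠ 0) :
    HasFDerivAt (fun w : E => -Real.log ‖w‖) (phiD z) z := by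
  set DQ : E →L[ℝ] ℝ := (fderivInnerCLM ℝ ((z : E), (z : E))).comp
      ((ContinuousLinearMap.id ℝ E).prod (ContinuousLinearMap.id ℝ E)) with hDQ
  have hQ : HasFDerivAt (fun w : E => (inner ℝ w w : ℝ)) DQ z :=
    (hasFDerivAt_id z).inner ℝ (hasFDerivAt_id z)
  have hz' : ‖z‖ ≠ 0 := norm_ne_zero_iff.mpr hz
  have hQz : (inner ℝ z z : ℝ) ≠ 0 := by
    rw [real_inner_self_eq_norm_sq]; positivity
  have hcomp : HasFDerivAt (fun w : E => Real.log (inner ℝ w w : ℝ))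
      (((inner ℝ z z : ℝ))⁻¹ • DQ) z :=
    HasDerivAt.comp_hasFDerivAt (f := fun w : E => (inner ℝ w w : ℝ)) z
      (Real.hasDerivAt_log hQz) hQ
  have hmul := hcomp.const_mul (-(1/2) : ℝ)
  have hfun : (fun w : E => -(1/2) * Real.log (inner ℝ w w : ℝ))
      = fun w : E => -Real.log ‖w‖ := by
    funext w
    rw [real_inner_self_eq_norm_sq, Real.log_pow]
    push_cast; ring
  rw [hfun] at hmul
  refine hmul.congr_fderiv ?_
  ext h
  simp only [phiD, hDQ, ContinuousLinearMap.smul_apply, ContinuousLinearMap.coe_smul',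
    Pi.smul_apply, ContinuousLinearMap.coe_comp', Function.comp_apply,
    ContinuousLinearMap.prod_apply, ContinuousLinearMap.coe_id', id_eq,
    fderivInnerCLM_apply, innerSL_apply_apply, smul_eq_mul]
  rw [real_inner_comm h z, real_inner_self_eq_norm_sq]
  ring

lemma phiD_lipschitz {r : ℝ} (hr : 0 < r) {a b : E}
    (ha1 : 4/5 * r ≤ ‖a‖) (ha2 : ‖a‖ ≤ 6/5 * r)
    (hb1 : 4/5 * r ≤ ‖b‖) (hb2 : ‖b‖ ≤ 6/5 * r) :
    ‖phiD a - phiD b‖ ≤ 10 / r ^ 2 * ‖a - b‖ := by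
  have hna : (0:ℝ) < ‖a‖ := lt_of_lt_of_le (by linarith) ha1
  have hnb : (0:ℝ) < ‖b‖ := lt_of_lt_of_le (by linarith) hb1
  set Qa := ‖a‖ ^ 2 with hQa
  set Qb := ‖b‖ ^ 2 with hQb
  have hQa0 : 0 < Qa := by positivity
  have hQb0 : 0 < Qb := by positivity
  have hsplit : phiD a - phiD b
      = (-(Qa)⁻¹) • (innerSL ℝ a - innerSL ℝ b) + ((Qb)⁻¹ - (Qa)⁻¹) • innerSL ℝ b := by
    simp only [phiD, smul_sub, sub_smul, neg_smul]
    abel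
  have hdiff : innerSL ℝ a - innerSL ℝ b = innerSL ℝ (a - b) := by
    ext h; simp [inner_sub_left]
  have hn1 : ‖(-(Qa)⁻¹) • (innerSL ℝ a - innerSL ℝ b)‖ = (Qa)⁻¹ * ‖a - b‖ := by
    rw [hdiff, norm_smul (β := E →L[ℝ] ℝ) (-(Qa)⁻¹) (innerSL ℝ (a - b)), innerSL_apply_norm,
      Real.norm_eq_abs, abs_neg, abs_of_pos (show (0:ℝ) < Qa⁻¹ by positivity)]
  have hn2 : ‖((Qb)⁻¹ - (Qa)⁻¹) • innerSL ℝ b‖ = |(Qb)⁻¹ - (Qa)⁻¹| * ‖b‖ := by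
    rw [norm_smul (β := E →L[ℝ] ℝ) ((Qb)⁻¹ - (Qa)⁻¹) (innerSL ℝ b), innerSL_apply_norm,
      Real.norm_eq_abs]
  have habs : |Qa - Qb| ≤ (‖a‖ + ‖b‖) * ‖a - b‖ := by
    have h1 : |‖a‖ - ‖b‖| ≤ ‖a - b‖ := abs_norm_sub_norm_le a b
    have h2 : Qa - Qb = (‖a‖ + ‖b‖) * (‖a‖ - ‖b‖) := by rw [hQa, hQb]; ring
    rw [h2, abs_mul, abs_of_pos (by positivity)]
    exact mul_le_mul_of_nonneg_left h1 (by positivity)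
  have hQdiff : |(Qb)⁻¹ - (Qa)⁻¹| ≤ (‖a‖ + ‖b‖) * ‖a - b‖ / (Qa * Qb) := by
    rw [inv_sub_inv (ne_of_gt hQb0) (ne_of_gt hQa0), abs_div,
      abs_of_pos (by positivity : (0:ℝ) < Qb * Qa)]
    calc |Qa - Qb| / (Qb * Qa) ≤ ((‖a‖ + ‖b‖) * ‖a - b‖) / (Qb * Qa) := by
          gcongr
      _ = (‖a‖ + ‖b‖) * ‖a - b‖ / (Qa * Qb) := by ring
  have hc1 : (Qa)⁻¹ ≤ 25 / (16 * r ^ 2) := by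
    rw [← one_div, div_le_div_iff₀ (by positivity) (by positivity)]
    nlinarith [mul_le_mul ha1 ha1 (by positivity) (norm_nonneg a)]
  have hc2 : (‖a‖ + ‖b‖) * ‖b‖ / (Qa * Qb) ≤ 75 / (16 * r ^ 2) := by
    have heq : (‖a‖ + ‖b‖) * ‖b‖ / (Qa * Qb) = (‖a‖ + ‖b‖) / (Qa * ‖b‖) := by
      rw [hQa, hQb]; field_simp
    rw [heq, div_le_div_iff₀ (by positivity) (by positivity)]
    have h1 : (4/5 * r) ^ 2 ≤ Qa := by
      rw [hQa]; nlinarith [mul_le_mul ha1 ha1 (by positivity) (norm_nonneg a)]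
    have h2 : (4/5 * r) ^ 2 * (4/5 * r) ≤ Qa * ‖b‖ :=
      mul_le_mul h1 hb1 (by positivity) (le_of_lt hQa0)
    nlinarith [h2]
  calc ‖phiD a - phiD b‖
      ≤ ‖(-(Qa)⁻¹) • (innerSL ℝ a - innerSL ℝ b)‖
        + ‖((Qb)⁻¹ - (Qa)⁻¹) • innerSL ℝ b‖ := by rw [hsplit]; exact norm_add_le _ _
    _ = (Qa)⁻¹ * ‖a - b‖ + |(Qb)⁻¹ - (Qa)⁻¹| * ‖b‖ := by rw [hn1, hn2]
    _ ≤ (25 / (16 * r ^ 2)) * ‖a - b‖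
        + ((‖a‖ + ‖b‖) * ‖a - b‖ / (Qa * Qb)) * ‖b‖ := by
          gcongr
    _ = (25 / (16 * r ^ 2)) * ‖a - b‖
        + ((‖a‖ + ‖b‖) * ‖b‖ / (Qa * Qb)) * ‖a - b‖ := by ring
    _ ≤ (25 / (16 * r ^ 2)) * ‖a - b‖ + (75 / (16 * r ^ 2)) * ‖a - b‖ := by
          gcongr
    _ = (100 / 16 / r ^ 2) * ‖a - b‖ := by ring
    _ ≤ 10 / r ^ 2 * ‖a - b‖ := by
          gcongr
          norm_num

/-- Mixed second difference bound for `z ↦ -log ‖z‖`. -/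
lemma logMixed (z₀ w₁ w₂ : E) (hr : 0 < ‖z₀‖)
    (h1 : ‖w₁‖ ≤ ‖z₀‖ / 10) (h2 : ‖w₂‖ ≤ ‖z₀‖ / 10) :
    |(-Real.log ‖z₀‖) + (-Real.log ‖z₀ - w₁ - w₂‖) - (-Real.log ‖z₀ - w₁‖)
      - (-Real.log ‖z₀ - w₂‖)| ≤ 10 / ‖z₀‖ ^ 2 * ‖w₂‖ * ‖w₁‖ := by
  set r := ‖z₀‖ with hrdef
  set S := Metric.closedBall z₀ (r / 5) with hSdef
  have hSn : ∀ z ∈ S, 4/5 * r ≤ ‖z‖ ∧ ‖z‖ ≤ 6/5 * r := by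
    intro z hz
    rw [hSdef, Metric.mem_closedBall, dist_eq_norm] at hz
    have h3 : ‖z₀‖ - ‖z‖ ≤ ‖z₀ - z‖ := norm_sub_norm_le z₀ z
    have h4 : ‖z₀ - z‖ = ‖z - z₀‖ := norm_sub_rev z₀ z
    have h5 : ‖z‖ ≤ ‖z₀‖ + ‖z - z₀‖ := by
      calc ‖z‖ = ‖z₀ + (z - z₀)‖ := by rw [add_sub_cancel]
        _ ≤ ‖z₀‖ + ‖z - z₀‖ := norm_add_le _ _
    constructor <;> [linarith; linarith]
  refine mixedDiff (fun w : E => -Real.log ‖w‖) phiD S (convex_closedBall _ _) ?_ _ ?_ z₀ w₁ w₂ ?_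
  · intro z hz
    have hz0 : z ≠ 0 := by
      have := (hSn z hz).1
      intro h; rw [h, norm_zero] at this; linarith
    exact (hasFDerivAt_neg_log_norm hz0).hasFDerivWithinAt
  · intro a ha b hb
    exact phiD_lipschitz hr (hSn a ha).1 (hSn a ha).2 (hSn b hb).1 (hSn b hb).2
  · intro s hs t ht
    rw [hSdef, Metric.mem_closedBall, dist_eq_norm]
    have : z₀ - s • w₁ - t • w₂ - z₀ = -(s • w₁) + -(t • w₂) := by abel
    rw [this]
    calc ‖-(s • w₁) + -(t • w₂)‖ ≤ ‖s • w₁‖ + ‖t • w₂‖ := by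
          refine (norm_add_le _ _).trans ?_
          rw [norm_neg, norm_neg]
      _ ≤ ‖w₁‖ + ‖w₂‖ := by
          rw [norm_smul, norm_smul, Real.norm_eq_abs, Real.norm_eq_abs,
            abs_of_nonneg hs.1, abs_of_nonneg ht.1]
          have hw1 : (0:ℝ) ≤ ‖w₁‖ := norm_nonneg _
          have hw2 : (0:ℝ) ≤ ‖w₂‖ := norm_nonneg _
          nlinarith [hs.1, hs.2, ht.1, ht.2]
      _ ≤ r / 5 := by linarith

end LogPart

set_option maxHeartbeats 4000000 in
set_option synthInstance.maxHeartbeats 1000000 in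
/-- **Second-order difference bound for the log-correlated kernel.**
With `C(x,y) = log(1/|x−y|) + g(x,y)` for `g ∈ C²(U × U)`, `K ⊆ U` compact and
`δ = min(1, dist(K, Uᶜ)/3)` (encoded by `0 < δ ≤ 1` and `ball(x, 3δ) ⊆ U` for `x ∈ K`),
there is `c > 0` so that for all `η ∈ (0,δ)`, `|u|,|v| ≤ 1` and `x, y ∈ K` with
`|x−y| > 10η`, `|C(x,y) + C(x−ηu, y−ηv) − C(x−ηu, y) − C(x, y−ηv)| ≤ c η²/|x−y|²`. -/
theorem stmt2 (d : ℕ) (hd : 2 ≤ d)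
    (U : Set (EuclideanSpace ℝ (Fin d))) (hU : IsOpen U)
    (g : EuclideanSpace ℝ (Fin d) → EuclideanSpace ℝ (Fin d) → ℝ)
    (hg : ContDiffOn ℝ 2
      (fun p : EuclideanSpace ℝ (Fin d) × EuclideanSpace ℝ (Fin d) => g p.1 p.2) (U ×ˢ U))
    (C : EuclideanSpace ℝ (Fin d) → EuclideanSpace ℝ (Fin d) → ℝ)
    (hC : ∀ x y, C x y = Real.log (1 / dist x y) + g x y)
    (K : Set (EuclideanSpace ℝ (Fin d))) (hK : IsCompact K) (hKne : K.Nonempty) (hKU : K ⊆ U)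
    (δ : ℝ) (hδ0 : 0 < δ) (hδ1 : δ ≤ 1)
    (hδU : ∀ x ∈ K, ∀ z : EuclideanSpace ℝ (Fin d), dist z x < 3 * δ → z ∈ U) :
    ∃ c > 0, ∀ η ∈ Set.Ioo (0:ℝ) δ, ∀ u v : EuclideanSpace ℝ (Fin d),
      ‖u‖ ≤ 1 → ‖v‖ ≤ 1 → ∀ x ∈ K, ∀ y ∈ K, 10 * η < dist x y →
      |C x y + C (x - η • u) (y - η • v) - C (x - η • u) y - C x (y - η • v)|
        ≤ c * η ^ 2 / dist x y ^ 2 := by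
  classical
  have hopen : IsOpen (U ×ˢ U) := hU.prod hU
  set G : EuclideanSpace ℝ (Fin d) × EuclideanSpace ℝ (Fin d) → ℝ :=
    fun p => g p.1 p.2 with hGdef
  have hG1 : ContDiffOn ℝ 1 (fderiv ℝ G) (U ×ˢ U) :=
    hg.fderiv_of_isOpen hopen (by norm_num)
  have hG2cont : ContinuousOn (fderiv ℝ (fderiv ℝ G)) (U ×ˢ U) :=
    hG1.continuousOn_fderiv_of_isOpen hopen (le_refl 1)
  set T := Metric.cthickening δ K ×ˢ Metric.cthickening δ K with hTdef
  have hKthick : ∀ z ∈ Metric.cthickening δ K, ∃ x ∈ K, dist z x ≤ δ := by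
    intro z hz
    rw [hK.cthickening_eq_biUnion_closedBall (le_of_lt hδ0)] at hz
    simp only [Set.mem_iUnion, Metric.mem_closedBall] at hz
    obtain ⟨x, hx, hzx⟩ := hz
    exact ⟨x, hx, hzx⟩
  have hthickU : Metric.cthickening δ K ⊆ U := by
    intro z hz
    obtain ⟨x, hx, hzx⟩ := hKthick z hz
    exact hδU x hx z (lt_of_le_of_lt hzx (by linarith))
  have hTU : T ⊆ U ×ˢ U := Set.prod_mono hthickU hthickU
  have hTc : IsCompact T := (hK.cthickening).prod (hK.cthickening)
  obtain ⟨M₀, hM₀⟩ := hTc.exists_bound_of_continuousOn (f := fderiv ℝ (fderiv ℝ G)) (hG2cont.mono hTU)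
  set Mg := max M₀ 0 with hMgdef
  have hMg0 : 0 ≤ Mg := le_max_right _ _
  have hMgb : ∀ z ∈ T, ‖fderiv ℝ (fderiv ℝ G) z‖ ≤ Mg :=
    fun z hz => (hM₀ z hz).trans (le_max_left _ _)
  obtain ⟨D₀, hD₀⟩ := Metric.isBounded_iff.mp hK.isBounded
  set D := max D₀ 1 with hDdef
  have hD1 : (1:ℝ) ≤ D := le_max_right _ _
  have hDb : ∀ x ∈ K, ∀ y ∈ K, dist x y ≤ D :=
    fun x hx y hy => (hD₀ hx hy).trans (le_max_left _ _)
  refine ⟨10 + Mg * D ^ 2, by nlinarith [mul_nonneg hMg0 (sq_nonneg D)], ?_⟩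
  intro η hη u v hu hv x hx y hy hxy
  have hη0 : 0 < η := hη.1
  have hηδ : η < δ := hη.2
  set r := dist x y with hrdef
  have hr0 : 0 < r := lt_trans (by positivity) hxy
  have hrn : ‖x - y‖ = r := (dist_eq_norm x y).symm
  have hwu : ‖η • u‖ ≤ η := by
    rw [norm_smul, Real.norm_eq_abs, abs_of_pos hη0]
    exact mul_le_of_le_one_right (le_of_lt hη0) hu
  have hwv : ‖η • v‖ ≤ η := by
    rw [norm_smul, Real.norm_eq_abs, abs_of_pos hη0]
    exact mul_le_of_le_one_right (le_of_lt hη0) hv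
  have hη10 : η ≤ r / 10 := by linarith
  -- log part
  have hlogbd : |(-Real.log ‖x - y‖) + (-Real.log ‖(x - η • u) - (y - η • v)‖)
      - (-Real.log ‖(x - η • u) - y‖) - (-Real.log ‖x - (y - η • v)‖)|
      ≤ 10 / r ^ 2 * η * η := by
    have h1 : ‖η • u‖ ≤ ‖x - y‖ / 10 := by rw [hrn]; linarith
    have h2 : ‖-(η • v)‖ ≤ ‖x - y‖ / 10 := by rw [norm_neg, hrn]; linarith
    have hz0 : (0:ℝ) < ‖x - y‖ := by rw [hrn]; exact hr0
    have key := logMixed (x - y) (η • u) (-(η • v)) hz0 h1 h2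
    have e2 : x - y - η • u - -(η • v) = (x - η • u) - (y - η • v) := by abel
    have e3 : x - y - η • u = (x - η • u) - y := by abel
    have e4 : x - y - -(η • v) = x - (y - η • v) := by abel
    rw [e2, e3, e4] at key
    refine key.trans ?_
    rw [hrn, norm_neg]
    have h10 : (0:ℝ) ≤ 10 / r ^ 2 := by positivity
    calc 10 / r ^ 2 * ‖η • v‖ * ‖η • u‖ ≤ 10 / r ^ 2 * η * ‖η • u‖ := by
          apply mul_le_mul_of_nonneg_right _ (norm_nonneg _)
          exact mul_le_mul_of_nonneg_left hwv h10
      _ ≤ 10 / r ^ 2 * η * η := by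
          apply mul_le_mul_of_nonneg_left hwu
          positivity
  -- g part
  set S := Metric.closedBall x δ ×ˢ Metric.closedBall y δ with hSdef
  have hballK : ∀ w ∈ K, Metric.closedBall w δ ⊆ Metric.cthickening δ K :=
    fun w hw => Metric.closedBall_subset_cthickening hw δ
  have hST : S ⊆ T := Set.prod_mono (hballK x hx) (hballK y hy)
  have hSUU : S ⊆ U ×ˢ U := hST.trans hTU
  have hconv : Convex ℝ S := (convex_closedBall x δ).prod (convex_closedBall y δ)
  have hdfG : ∀ z ∈ S, HasFDerivWithinAt G (fderiv ℝ G z) S z := by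
    intro z hz
    exact (((hg.differentiableOn (by norm_num)).differentiableAt
      (hopen.mem_nhds (hSUU hz))).hasFDerivAt).hasFDerivWithinAt
  have hdfG' : ∀ z ∈ S, HasFDerivWithinAt (fderiv ℝ G) (fderiv ℝ (fderiv ℝ G) z) S z := by
    intro z hz
    exact (((hG1.differentiableOn one_ne_zero).differentiableAt
      (hopen.mem_nhds (hSUU hz))).hasFDerivAt).hasFDerivWithinAt
  have hLip : ∀ a ∈ S, ∀ b ∈ S, ‖fderiv ℝ G a - fderiv ℝ G b‖ ≤ Mg * ‖a - b‖ := by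
    intro a ha b hb
    exact hconv.norm_image_sub_le_of_norm_hasFDerivWithin_le hdfG'
      (fun z hz => hMgb z (hST hz)) hb ha
  have hp : ∀ s ∈ Set.Icc (0:ℝ) 1, ∀ t ∈ Set.Icc (0:ℝ) 1,
      ((x, y) : EuclideanSpace ℝ (Fin d) × EuclideanSpace ℝ (Fin d))
        - s • ((η • u, 0) : EuclideanSpace ℝ (Fin d) × EuclideanSpace ℝ (Fin d))
        - t • ((0, η • v) : EuclideanSpace ℝ (Fin d) × EuclideanSpace ℝ (Fin d)) ∈ S := by
    intro s hs t ht
    have hcomp : ((x, y) : EuclideanSpace ℝ (Fin d) × EuclideanSpace ℝ (Fin d))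
        - s • ((η • u, 0) : EuclideanSpace ℝ (Fin d) × EuclideanSpace ℝ (Fin d))
        - t • ((0, η • v) : EuclideanSpace ℝ (Fin d) × EuclideanSpace ℝ (Fin d))
        = (x - s • η • u, y - t • η • v) := by
      simp [Prod.ext_iff, Prod.smul_mk]
    rw [hcomp, hSdef, Set.mem_prod]
    constructor
    · rw [Metric.mem_closedBall, dist_eq_norm]
      have : x - s • η • u - x = -(s • η • u) := by abel
      rw [this, norm_neg, norm_smul, Real.norm_eq_abs, abs_of_nonneg hs.1]
      calc s * ‖η • u‖ ≤ 1 * η := mul_le_mul hs.2 hwu (norm_nonneg _) zero_le_one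
        _ ≤ δ := by linarith
    · rw [Metric.mem_closedBall, dist_eq_norm]
      have : y - t • η • v - y = -(t • η • v) := by abel
      rw [this, norm_neg, norm_smul, Real.norm_eq_abs, abs_of_nonneg ht.1]
      calc t * ‖η • v‖ ≤ 1 * η := mul_le_mul ht.2 hwv (norm_nonneg _) zero_le_one
        _ ≤ δ := by linarith
  have hgbd0 := mixedDiff G (fderiv ℝ G) S hconv hdfG Mg hLip
    ((x, y)) ((η • u, 0)) ((0, η • v)) hp
  simp only [Prod.mk_sub_mk, sub_zero, hGdef] at hgbd0
  have hnw1 : ‖((η • u, (0 : EuclideanSpace ℝ (Fin d))) :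
      EuclideanSpace ℝ (Fin d) × EuclideanSpace ℝ (Fin d))‖ ≤ η := by
    rw [Prod.norm_def]
    simp only [norm_zero]
    exact max_le hwu hη0.le
  have hnw2 : ‖(((0 : EuclideanSpace ℝ (Fin d)), η • v) :
      EuclideanSpace ℝ (Fin d) × EuclideanSpace ℝ (Fin d))‖ ≤ η := by
    rw [Prod.norm_def]
    simp only [norm_zero]
    exact max_le hη0.le hwv
  have hgbd : |g x y + g (x - η • u) (y - η • v) - g (x - η • u) y - g x (y - η • v)|
      ≤ Mg * η * η := by
    refine hgbd0.trans ?_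
    calc Mg * ‖(((0 : EuclideanSpace ℝ (Fin d)), η • v) :
          EuclideanSpace ℝ (Fin d) × EuclideanSpace ℝ (Fin d))‖
          * ‖((η • u, (0 : EuclideanSpace ℝ (Fin d))) :
          EuclideanSpace ℝ (Fin d) × EuclideanSpace ℝ (Fin d))‖
        ≤ Mg * η * ‖((η • u, (0 : EuclideanSpace ℝ (Fin d))) :
          EuclideanSpace ℝ (Fin d) × EuclideanSpace ℝ (Fin d))‖ :=
          mul_le_mul_of_nonneg_right (mul_le_mul_of_nonneg_left hnw2 hMg0) (norm_nonneg _)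
      _ ≤ Mg * η * η :=
          mul_le_mul_of_nonneg_left hnw1 (mul_nonneg hMg0 hη0.le)
  -- combine
  have hCr : ∀ a b : EuclideanSpace ℝ (Fin d), C a b = -Real.log ‖a - b‖ + g a b := by
    intro a b; rw [hC, one_div, Real.log_inv, dist_eq_norm]
  rw [hCr x y, hCr (x - η • u) (y - η • v), hCr (x - η • u) y, hCr x (y - η • v)]
  have heq : (-Real.log ‖x - y‖ + g x y)
      + (-Real.log ‖x - η • u - (y - η • v)‖ + g (x - η • u) (y - η • v))
      - (-Real.log ‖x - η • u - y‖ + g (x - η • u) y)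
      - (-Real.log ‖x - (y - η • v)‖ + g x (y - η • v))
      = ((-Real.log ‖x - y‖) + (-Real.log ‖(x - η • u) - (y - η • v)‖)
        - (-Real.log ‖(x - η • u) - y‖) - (-Real.log ‖x - (y - η • v)‖))
      + (g x y + g (x - η • u) (y - η • v) - g (x - η • u) y - g x (y - η • v)) := by
    ring
  rw [heq]
  refine (abs_add_le _ _).trans ?_
  refine (add_le_add hlogbd hgbd).trans ?_
  have hr2 : r ^ 2 ≤ D ^ 2 := by nlinarith [hDb x hx y hy]
  have hMgle : Mg * η * η ≤ Mg * D ^ 2 * η ^ 2 / r ^ 2 := by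
    rw [le_div_iff₀ (by positivity)]
    have h := mul_le_mul_of_nonneg_left hr2 (mul_nonneg hMg0 (sq_nonneg η))
    nlinarith [h]
  have h10 : 10 / r ^ 2 * η * η = 10 * η ^ 2 / r ^ 2 := by ring
  rw [h10]
  calc 10 * η ^ 2 / r ^ 2 + Mg * η * η
      ≤ 10 * η ^ 2 / r ^ 2 + Mg * D ^ 2 * η ^ 2 / r ^ 2 := by linarith
    _ = (10 + Mg * D ^ 2) * η ^ 2 / r ^ 2 := by ring
end

section
/- For every β > 0 there exists a constant c > 0 (depending only on d, g, K and β) such that for all η ∈ (0, δ), all u, v ∈ ℝ^d with |u| ≤ 1 and |v| ≤ 1, and all x, y ∈ K with |x − y| > 10η, one has |exp(β²(C(x,y) + C(x − ηu, y − ηv) − C(x − ηu, y) − C(x, y − ηv))) − 1| ≤ c η² / |x − y|². -/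
open MeasureTheory


lemma aux_exp_bound (x : ℝ) : |Real.exp x - 1| ≤ |x| * Real.exp |x| := by
  rcases le_or_gt 0 x with h | h
  · have e1 : Real.exp (-x) * Real.exp x = 1 := by rw [← Real.exp_add]; simp
    rw [abs_of_nonneg h, abs_of_nonneg (by linarith [Real.one_le_exp h] : (0:ℝ) ≤ Real.exp x - 1)]
    nlinarith [Real.add_one_le_exp (-x), Real.exp_pos x]
  · rw [abs_of_neg h, abs_of_nonpos (by simp [Real.exp_le_one_iff.2 h.le] : Real.exp x - 1 ≤ 0)]
    nlinarith [Real.add_one_le_exp x, Real.exp_pos (-x), Real.one_le_exp (by linarith : (0:ℝ) ≤ -x)]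


local notation "⟪" x ", " y "⟫" => @inner ℝ _ _ x y

lemma aux_secondDiff (f ft fst : ℝ → ℝ → ℝ) (M : ℝ)
    (hft : ∀ s ∈ Set.Icc (0:ℝ) 1, ∀ t ∈ Set.Icc (0:ℝ) 1,
      HasDerivWithinAt (fun t' => f s t') (ft s t) (Set.Icc 0 1) t)
    (hfst : ∀ t ∈ Set.Icc (0:ℝ) 1, ∀ s ∈ Set.Icc (0:ℝ) 1,
      HasDerivWithinAt (fun s' => ft s' t) (fst s t) (Set.Icc 0 1) s)
    (hb : ∀ s ∈ Set.Icc (0:ℝ) 1, ∀ t ∈ Set.Icc (0:ℝ) 1, |fst s t| ≤ M) :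
    |f 1 1 - f 1 0 - f 0 1 + f 0 0| ≤ M := by
  have h0 : (0:ℝ) ∈ Set.Icc (0:ℝ) 1 := by norm_num
  have h1 : (1:ℝ) ∈ Set.Icc (0:ℝ) 1 := by norm_num
  have key : ∀ t ∈ Set.Icc (0:ℝ) 1, |ft 1 t - ft 0 t| ≤ M := by
    intro t ht
    have := Convex.norm_image_sub_le_of_norm_hasDerivWithin_le
      (f := fun s => ft s t) (f' := fun s => fst s t) (C := M)
      (fun s hs => hfst t ht s hs) (fun s hs => hb s hs t ht) (convex_Icc 0 1) h0 h1
    simpa using this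
  have main := Convex.norm_image_sub_le_of_norm_hasDerivWithin_le
    (f := fun t => f 1 t - f 0 t) (f' := fun t => ft 1 t - ft 0 t) (C := M)
    (fun t ht => (hft 1 h1 t ht).sub (hft 0 h0 t ht)) key (convex_Icc 0 1) h0 h1
  simp only [Real.norm_eq_abs, sub_zero] at main
  calc |f 1 1 - f 1 0 - f 0 1 + f 0 0| = |(f 1 1 - f 0 1) - (f 1 0 - f 0 0)| := by ring_nf
    _ ≤ M := by simpa using main

lemma aux_gpart {E : Type*} [NormedAddCommGroup E] [NormedSpace ℝ E]
    (G : E → ℝ) (V : Set E) (hV : IsOpen V) (hG : ContDiffOn ℝ 2 G V)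
    (M : ℝ) (S : Set E) (hSV : S ⊆ V)
    (hM : ∀ w ∈ S, ‖fderiv ℝ (fderiv ℝ G) w‖ ≤ M)
    (x p q : E)
    (hmem : ∀ s ∈ Set.Icc (0:ℝ) 1, ∀ t ∈ Set.Icc (0:ℝ) 1, x - s • p - t • q ∈ S) :
    |G x + G (x - p - q) - G (x - p) - G (x - q)| ≤ M * ‖p‖ * ‖q‖ := by
  have hQmem : ∀ s ∈ Set.Icc (0:ℝ) 1, ∀ t ∈ Set.Icc (0:ℝ) 1, x - s • p - t • q ∈ V :=
    fun s hs t ht => hSV (hmem s hs t ht)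
  have hft : ∀ s ∈ Set.Icc (0:ℝ) 1, ∀ t ∈ Set.Icc (0:ℝ) 1,
      HasDerivWithinAt (fun t' => G (x - s • p - t' • q))
        ((fderiv ℝ G (x - s • p - t • q)) (-q)) (Set.Icc 0 1) t := by
    intro s hs t ht
    have hpath : HasDerivAt (fun t' : ℝ => x - s • p - t' • q) (-q) t := by
      simpa using ((hasDerivAt_id t).smul_const q).const_sub (x - s • p)
    have hdiff : DifferentiableAt ℝ G (x - s • p - t • q) :=
      (hG.contDiffAt (hV.mem_nhds (hQmem s hs t ht))).differentiableAt (by norm_num)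
    exact (hdiff.hasFDerivAt.comp_hasDerivAt t hpath).hasDerivWithinAt
  have hfst : ∀ t ∈ Set.Icc (0:ℝ) 1, ∀ s ∈ Set.Icc (0:ℝ) 1,
      HasDerivWithinAt (fun s' => (fderiv ℝ G (x - s' • p - t • q)) (-q))
        ((fderiv ℝ (fderiv ℝ G) (x - s • p - t • q)) (-p) (-q)) (Set.Icc 0 1) s := by
    intro t ht s hs
    have hpath : HasDerivAt (fun s' : ℝ => x - s' • p - t • q) (-p) s := by
      have : HasDerivAt (fun s' : ℝ => x - s' • p) (-p) s := by
        simpa using ((hasDerivAt_id s).smul_const p).const_sub x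
      simpa using this.sub_const (t • q)
    have hfd2 : HasFDerivAt (fderiv ℝ G)
        (fderiv ℝ (fderiv ℝ G) (x - s • p - t • q)) (x - s • p - t • q) := by
      have h1 : ContDiffAt ℝ 1 (fderiv ℝ G) (x - s • p - t • q) :=
        (hG.contDiffAt (hV.mem_nhds (hQmem s hs t ht))).fderiv_right (by norm_num)
      exact (h1.differentiableAt (by norm_num)).hasFDerivAt
    have hcomp := hfd2.comp_hasDerivAt s hpath
    have := hcomp.clm_apply (hasDerivAt_const s (-q))
    simpa using this.hasDerivWithinAt
  have hb : ∀ s ∈ Set.Icc (0:ℝ) 1, ∀ t ∈ Set.Icc (0:ℝ) 1,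
      |(fderiv ℝ (fderiv ℝ G) (x - s • p - t • q)) (-p) (-q)| ≤ M * ‖p‖ * ‖q‖ := by
    intro s hs t ht
    have h1 : ‖(fderiv ℝ (fderiv ℝ G) (x - s • p - t • q)) (-p) (-q)‖
        ≤ ‖(fderiv ℝ (fderiv ℝ G) (x - s • p - t • q)) (-p)‖ * ‖(-q : E)‖ :=
      ContinuousLinearMap.le_opNorm _ _
    have h2 : ‖(fderiv ℝ (fderiv ℝ G) (x - s • p - t • q)) (-p)‖
        ≤ ‖fderiv ℝ (fderiv ℝ G) (x - s • p - t • q)‖ * ‖(-p : E)‖ :=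
      ContinuousLinearMap.le_opNorm _ _
    have h3 := hM _ (hmem s hs t ht)
    rw [Real.norm_eq_abs] at h1
    have hq0 : (0:ℝ) ≤ ‖q‖ := norm_nonneg q
    have hp0 : (0:ℝ) ≤ ‖p‖ := norm_nonneg p
    rw [norm_neg] at h1 h2
    calc |(fderiv ℝ (fderiv ℝ G) (x - s • p - t • q)) (-p) (-q)|
        ≤ ‖(fderiv ℝ (fderiv ℝ G) (x - s • p - t • q)) (-p)‖ * ‖q‖ := h1
      _ ≤ (‖fderiv ℝ (fderiv ℝ G) (x - s • p - t • q)‖ * ‖p‖) * ‖q‖ :=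
          mul_le_mul_of_nonneg_right h2 hq0
      _ ≤ M * ‖p‖ * ‖q‖ :=
          mul_le_mul_of_nonneg_right (mul_le_mul_of_nonneg_right h3 hp0) hq0
  have main := aux_secondDiff (fun s t => G (x - s • p - t • q))
    (fun s t => (fderiv ℝ G (x - s • p - t • q)) (-q))
    (fun s t => (fderiv ℝ (fderiv ℝ G) (x - s • p - t • q)) (-p) (-q))
    (M * ‖p‖ * ‖q‖) hft hfst hb
  have e : ∀ w : E, ∀ s t : ℝ, x - s • p - t • q = w → True := fun _ _ _ _ => trivial
  simp only [zero_smul, one_smul, sub_zero] at main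
  calc |G x + G (x - p - q) - G (x - p) - G (x - q)|
      = |G (x - p - q) - G (x - p) - G (x - q) + G x| := by ring_nf
    _ ≤ M * ‖p‖ * ‖q‖ := main

set_option maxHeartbeats 1000000 in
lemma aux_logpart {E : Type*} [NormedAddCommGroup E] [InnerProductSpace ℝ E]
    (x y a b : E) (η r : ℝ) (hη : 0 < η) (ha : ‖a‖ ≤ η) (hb : ‖b‖ ≤ η)
    (hr : dist x y = r) (h10 : 10 * η < r) :
    |Real.log (1 / dist x y) + Real.log (1 / dist (x - a) (y - b))
      - Real.log (1 / dist (x - a) y) - Real.log (1 / dist x (y - b))| ≤ 5 * η ^ 2 / r ^ 2 := by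
  have hr0 : 0 < r := lt_trans (by positivity) h10
  have h0m : (0:ℝ) ∈ Set.Icc (0:ℝ) 1 := by norm_num
  have h1m : (1:ℝ) ∈ Set.Icc (0:ℝ) 1 := by norm_num
  have hzlb : ∀ s ∈ Set.Icc (0:ℝ) 1, ∀ t ∈ Set.Icc (0:ℝ) 1,
      4/5 * r ≤ ‖(x - s • a) - (y - t • b)‖ := by
    intro s hs t ht
    have he : (x - s • a) - (y - t • b) = (x - y) - (s • a - t • b) := by abel
    have h1 : ‖s • a‖ ≤ η := by
      rw [norm_smul, Real.norm_eq_abs, abs_of_nonneg hs.1]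
      nlinarith [hs.2, norm_nonneg a]
    have h2 : ‖t • b‖ ≤ η := by
      rw [norm_smul, Real.norm_eq_abs, abs_of_nonneg ht.1]
      nlinarith [ht.2, norm_nonneg b]
    have h3 : ‖s • a - t • b‖ ≤ 2 * η := le_trans (norm_sub_le _ _) (by linarith)
    have h4 := norm_sub_norm_le (x - y) (s • a - t • b)
    rw [← he] at h4
    have h5 : ‖x - y‖ = r := by rw [← dist_eq_norm, hr]
    linarith
  -- derivative facts for the affine path
  have hzt : ∀ s t : ℝ, HasDerivAt (fun t' : ℝ => (x - s • a) - (y - t' • b)) b t := by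
    intro s t
    have h1 : HasDerivAt (fun t' : ℝ => y - t' • b) (-((1:ℝ) • b)) t :=
      ((hasDerivAt_id t).smul_const b).const_sub y
    simpa using h1.const_sub (x - s • a)
  have hzs : ∀ s t : ℝ, HasDerivAt (fun s' : ℝ => (x - s' • a) - (y - t • b)) (-a) s := by
    intro s t
    have h1 : HasDerivAt (fun s' : ℝ => x - s' • a) (-((1:ℝ) • a)) s :=
      ((hasDerivAt_id s).smul_const a).const_sub x
    simpa using h1.sub_const (y - t • b)
  have hQpos : ∀ s ∈ Set.Icc (0:ℝ) 1, ∀ t ∈ Set.Icc (0:ℝ) 1,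
      (0:ℝ) < ⟪(x - s • a) - (y - t • b), (x - s • a) - (y - t • b)⟫ := by
    intro s hs t ht
    rw [real_inner_self_eq_norm_sq]
    have := hzlb s hs t ht
    nlinarith
  have hft : ∀ s ∈ Set.Icc (0:ℝ) 1, ∀ t ∈ Set.Icc (0:ℝ) 1,
      HasDerivWithinAt
        (fun t' => -(1/2 : ℝ) * Real.log ⟪(x - s • a) - (y - t' • b), (x - s • a) - (y - t' • b)⟫)
        (-(1/2 : ℝ) * ((⟪(x - s • a) - (y - t • b), b⟫ + ⟪b, (x - s • a) - (y - t • b)⟫)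
          / ⟪(x - s • a) - (y - t • b), (x - s • a) - (y - t • b)⟫))
        (Set.Icc 0 1) t := by
    intro s hs t ht
    have hQ : HasDerivAt (fun t' => ⟪(x - s • a) - (y - t' • b), (x - s • a) - (y - t' • b)⟫)
        (⟪(x - s • a) - (y - t • b), b⟫ + ⟪b, (x - s • a) - (y - t • b)⟫) t :=
      (hzt s t).inner ℝ (hzt s t)
    exact ((hQ.log (ne_of_gt (hQpos s hs t ht))).const_mul (-(1/2 : ℝ))).hasDerivWithinAt
  have hfst : ∀ t ∈ Set.Icc (0:ℝ) 1, ∀ s ∈ Set.Icc (0:ℝ) 1,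
      HasDerivWithinAt
        (fun s' => -(1/2 : ℝ) * ((⟪(x - s' • a) - (y - t • b), b⟫ + ⟪b, (x - s' • a) - (y - t • b)⟫)
          / ⟪(x - s' • a) - (y - t • b), (x - s' • a) - (y - t • b)⟫))
        (-(1/2 : ℝ) * (((⟪(-a : E), b⟫ + ⟪b, (-a : E)⟫)
            * ⟪(x - s • a) - (y - t • b), (x - s • a) - (y - t • b)⟫
          - (⟪(x - s • a) - (y - t • b), b⟫ + ⟪b, (x - s • a) - (y - t • b)⟫)
            * (⟪(x - s • a) - (y - t • b), (-a : E)⟫ + ⟪(-a : E), (x - s • a) - (y - t • b)⟫))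
          / ⟪(x - s • a) - (y - t • b), (x - s • a) - (y - t • b)⟫ ^ 2))
        (Set.Icc 0 1) s := by
    intro t ht s hs
    have hN : HasDerivAt
        (fun s' => ⟪(x - s' • a) - (y - t • b), b⟫ + ⟪b, (x - s' • a) - (y - t • b)⟫)
        (⟪(-a : E), b⟫ + ⟪b, (-a : E)⟫) s := by
      have h1 := (hzs s t).inner ℝ (hasDerivAt_const s b)
      have h2 := (hasDerivAt_const s b).inner ℝ (hzs s t)
      have h3 := h1.add h2
      simp only [inner_zero_right, inner_zero_left, add_zero, zero_add] at h3
      exact h3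
    have hQs : HasDerivAt
        (fun s' => ⟪(x - s' • a) - (y - t • b), (x - s' • a) - (y - t • b)⟫)
        (⟪(x - s • a) - (y - t • b), (-a : E)⟫ + ⟪(-a : E), (x - s • a) - (y - t • b)⟫) s :=
      (hzs s t).inner ℝ (hzs s t)
    exact ((hN.div hQs (ne_of_gt (hQpos s hs t ht))).const_mul (-(1/2 : ℝ))).hasDerivWithinAt
  have hbound : ∀ s ∈ Set.Icc (0:ℝ) 1, ∀ t ∈ Set.Icc (0:ℝ) 1,
      |(-(1/2 : ℝ) * (((⟪(-a : E), b⟫ + ⟪b, (-a : E)⟫)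
            * ⟪(x - s • a) - (y - t • b), (x - s • a) - (y - t • b)⟫
          - (⟪(x - s • a) - (y - t • b), b⟫ + ⟪b, (x - s • a) - (y - t • b)⟫)
            * (⟪(x - s • a) - (y - t • b), (-a : E)⟫ + ⟪(-a : E), (x - s • a) - (y - t • b)⟫))
          / ⟪(x - s • a) - (y - t • b), (x - s • a) - (y - t • b)⟫ ^ 2))| ≤ 5 * η ^ 2 / r ^ 2 := by
    intro s hs t ht
    set z := (x - s • a) - (y - t • b) with hzdef
    set L := ‖z‖ with hLdef
    have hL : 4/5 * r ≤ L := hzlb s hs t ht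
    have hL0 : 0 < L := by nlinarith
    have hQ : ⟪z, z⟫ = L ^ 2 := real_inner_self_eq_norm_sq z
    have i1 : |⟪(-a : E), b⟫| ≤ η * η := by
      calc |⟪(-a : E), b⟫| ≤ ‖(-a : E)‖ * ‖b‖ := abs_real_inner_le_norm _ _
        _ ≤ η * η := by rw [norm_neg]; exact mul_le_mul ha hb (norm_nonneg b) hη.le
    have i2 : |⟪b, (-a : E)⟫| ≤ η * η := by
      calc |⟪b, (-a : E)⟫| ≤ ‖b‖ * ‖(-a : E)‖ := abs_real_inner_le_norm _ _
        _ ≤ η * η := by rw [norm_neg]; exact mul_le_mul hb ha (norm_nonneg a) hη.le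
    have i3 : |⟪z, b⟫| ≤ L * η := by
      calc |⟪z, b⟫| ≤ ‖z‖ * ‖b‖ := abs_real_inner_le_norm _ _
        _ ≤ L * η := mul_le_mul le_rfl hb (norm_nonneg b) hL0.le
    have i4 : |⟪b, z⟫| ≤ L * η := by
      calc |⟪b, z⟫| ≤ ‖b‖ * ‖z‖ := abs_real_inner_le_norm _ _
        _ ≤ L * η := by rw [mul_comm]; exact mul_le_mul le_rfl hb (norm_nonneg b) hL0.le
    have i5 : |⟪z, (-a : E)⟫| ≤ L * η := by
      calc |⟪z, (-a : E)⟫| ≤ ‖z‖ * ‖(-a : E)‖ := abs_real_inner_le_norm _ _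
        _ ≤ L * η := by rw [norm_neg]; exact mul_le_mul le_rfl ha (norm_nonneg a) hL0.le
    have i6 : |⟪(-a : E), z⟫| ≤ L * η := by
      calc |⟪(-a : E), z⟫| ≤ ‖(-a : E)‖ * ‖z‖ := abs_real_inner_le_norm _ _
        _ ≤ L * η := by rw [norm_neg, mul_comm]; exact mul_le_mul le_rfl ha (norm_nonneg a) hL0.le
    have hnum : |(⟪(-a : E), b⟫ + ⟪b, (-a : E)⟫) * ⟪z, z⟫
        - (⟪z, b⟫ + ⟪b, z⟫) * (⟪z, (-a : E)⟫ + ⟪(-a : E), z⟫)| ≤ 6 * η ^ 2 * L ^ 2 := by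
      have t1 : |(⟪(-a : E), b⟫ + ⟪b, (-a : E)⟫) * ⟪z, z⟫| ≤ 2 * η ^ 2 * L ^ 2 := by
        rw [abs_mul, hQ, abs_of_nonneg (sq_nonneg L)]
        have h := le_trans (abs_add_le ⟪(-a : E), b⟫ ⟪b, (-a : E)⟫) (by linarith : |⟪(-a : E), b⟫| + |⟪b, (-a : E)⟫| ≤ 2 * (η * η))
        nlinarith [sq_nonneg L, abs_nonneg ((⟪(-a : E), b⟫ + ⟪b, (-a : E)⟫))]
      have t2 : |(⟪z, b⟫ + ⟪b, z⟫) * (⟪z, (-a : E)⟫ + ⟪(-a : E), z⟫)| ≤ 4 * η ^ 2 * L ^ 2 := by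
        rw [abs_mul]
        have u1 := le_trans (abs_add_le ⟪z, b⟫ ⟪b, z⟫) (by linarith : |⟪z, b⟫| + |⟪b, z⟫| ≤ 2 * (L * η))
        have u2 := le_trans (abs_add_le ⟪z, (-a : E)⟫ ⟪(-a : E), z⟫) (by linarith : |⟪z, (-a : E)⟫| + |⟪(-a : E), z⟫| ≤ 2 * (L * η))
        nlinarith [abs_nonneg (⟪z, b⟫ + ⟪b, z⟫), abs_nonneg (⟪z, (-a : E)⟫ + ⟪(-a : E), z⟫)]
      calc |(⟪(-a : E), b⟫ + ⟪b, (-a : E)⟫) * ⟪z, z⟫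
          - (⟪z, b⟫ + ⟪b, z⟫) * (⟪z, (-a : E)⟫ + ⟪(-a : E), z⟫)|
          ≤ |(⟪(-a : E), b⟫ + ⟪b, (-a : E)⟫) * ⟪z, z⟫|
            + |(⟪z, b⟫ + ⟪b, z⟫) * (⟪z, (-a : E)⟫ + ⟪(-a : E), z⟫)| := abs_sub _ _
        _ ≤ 6 * η ^ 2 * L ^ 2 := by linarith
    rw [abs_mul, abs_div, hQ]
    have e1 : |-(1/2 : ℝ)| = 1/2 := by norm_num
    have e2 : |(L ^ 2) ^ 2| = L ^ 4 := by rw [abs_of_nonneg (by positivity)]; ring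
    rw [e1, e2]
    have hstep := hnum
    rw [hQ] at hstep
    have hL2 : 16/25 * r ^ 2 ≤ L ^ 2 := by nlinarith
    have hfin : (1:ℝ)/2 * ((6 * η ^ 2 * L ^ 2) / L ^ 4) ≤ 5 * η ^ 2 / r ^ 2 := by
      have he : (1:ℝ)/2 * ((6 * η ^ 2 * L ^ 2) / L ^ 4) = 3 * η ^ 2 / L ^ 2 := by
        field_simp; ring
      rw [he, div_le_div_iff₀ (by positivity) (by positivity)]
      nlinarith [mul_le_mul_of_nonneg_left hL2 (by positivity : (0:ℝ) ≤ η ^ 2), sq_nonneg η]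
    calc (1:ℝ)/2 * (|(⟪(-a : E), b⟫ + ⟪b, (-a : E)⟫) * (L ^ 2)
          - (⟪z, b⟫ + ⟪b, z⟫) * (⟪z, (-a : E)⟫ + ⟪(-a : E), z⟫)| / L ^ 4)
        ≤ (1:ℝ)/2 * ((6 * η ^ 2 * L ^ 2) / L ^ 4) := by gcongr
      _ ≤ 5 * η ^ 2 / r ^ 2 := hfin
  have main := aux_secondDiff
    (fun s t => -(1/2 : ℝ) * Real.log ⟪(x - s • a) - (y - t • b), (x - s • a) - (y - t • b)⟫)
    (fun s t => -(1/2 : ℝ) * ((⟪(x - s • a) - (y - t • b), b⟫ + ⟪b, (x - s • a) - (y - t • b)⟫)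
      / ⟪(x - s • a) - (y - t • b), (x - s • a) - (y - t • b)⟫))
    (fun s t => -(1/2 : ℝ) * (((⟪(-a : E), b⟫ + ⟪b, (-a : E)⟫)
        * ⟪(x - s • a) - (y - t • b), (x - s • a) - (y - t • b)⟫
      - (⟪(x - s • a) - (y - t • b), b⟫ + ⟪b, (x - s • a) - (y - t • b)⟫)
        * (⟪(x - s • a) - (y - t • b), (-a : E)⟫ + ⟪(-a : E), (x - s • a) - (y - t • b)⟫))
      / ⟪(x - s • a) - (y - t • b), (x - s • a) - (y - t • b)⟫ ^ 2))
    (5 * η ^ 2 / r ^ 2) hft hfst hbound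
  simp only [zero_smul, one_smul, sub_zero] at main
  -- identify endpoints
  have hw : ∀ w : E, 0 < ‖w‖ → Real.log (1 / ‖w‖) = -(1/2 : ℝ) * Real.log ⟪w, w⟫ := by
    intro w h
    rw [real_inner_self_eq_norm_sq, Real.log_pow, one_div, Real.log_inv]
    push_cast; ring
  have p00 : 0 < ‖x - y‖ := by
    have := hzlb 0 h0m 0 h0m; simp only [zero_smul, sub_zero] at this; nlinarith
  have p11 : 0 < ‖(x - a) - (y - b)‖ := by
    have := hzlb 1 h1m 1 h1m; simp only [one_smul] at this; nlinarith
  have p10 : 0 < ‖(x - a) - y‖ := by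
    have := hzlb 1 h1m 0 h0m; simp only [one_smul, zero_smul, sub_zero] at this; nlinarith
  have p01 : 0 < ‖x - (y - b)‖ := by
    have := hzlb 0 h0m 1 h1m; simp only [one_smul, zero_smul, sub_zero] at this; nlinarith
  rw [dist_eq_norm, dist_eq_norm, dist_eq_norm, dist_eq_norm,
    hw _ p00, hw _ p11, hw _ p10, hw _ p01]
  calc |(-(1/2 : ℝ) * Real.log ⟪x - y, x - y⟫)
        + (-(1/2 : ℝ) * Real.log ⟪(x - a) - (y - b), (x - a) - (y - b)⟫)
        - (-(1/2 : ℝ) * Real.log ⟪(x - a) - y, (x - a) - y⟫)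
        - (-(1/2 : ℝ) * Real.log ⟪x - (y - b), x - (y - b)⟫)|
      = |(-(1/2 : ℝ) * Real.log ⟪(x - a) - (y - b), (x - a) - (y - b)⟫)
        - (-(1/2 : ℝ) * Real.log ⟪(x - a) - y, (x - a) - y⟫)
        - (-(1/2 : ℝ) * Real.log ⟪x - (y - b), x - (y - b)⟫)
        + (-(1/2 : ℝ) * Real.log ⟪x - y, x - y⟫)| := by ring_nf
    _ ≤ 5 * η ^ 2 / r ^ 2 := main


set_option maxHeartbeats 1000000

/-- **The factor `E` is `1 + O(η²/|x−y|²)` at a single scale.**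
With `C(x,y) = log(1/|x−y|) + g(x,y)` for `g ∈ C²(U × U)`, `K ⊆ U` compact and
`δ = min(1, dist(K, Uᶜ)/3)` (encoded by `0 < δ ≤ 1` and `ball(x, 3δ) ⊆ U` for `x ∈ K`),
for every `β > 0` there is `c > 0` so that for all `η ∈ (0,δ)`, `|u|,|v| ≤ 1` and
`x, y ∈ K` with `|x−y| > 10η`,
`|exp(β²(C(x,y) + C(x−ηu, y−ηv) − C(x−ηu, y) − C(x, y−ηv))) − 1| ≤ c η²/|x−y|²`. -/
theorem stmt4 (d : ℕ) (hd : 2 ≤ d)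
    (U : Set (EuclideanSpace ℝ (Fin d))) (hU : IsOpen U)
    (g : EuclideanSpace ℝ (Fin d) → EuclideanSpace ℝ (Fin d) → ℝ)
    (hg : ContDiffOn ℝ 2
      (fun p : EuclideanSpace ℝ (Fin d) × EuclideanSpace ℝ (Fin d) => g p.1 p.2) (U ×ˢ U))
    (C : EuclideanSpace ℝ (Fin d) → EuclideanSpace ℝ (Fin d) → ℝ)
    (hC : ∀ x y, C x y = Real.log (1 / dist x y) + g x y)
    (K : Set (EuclideanSpace ℝ (Fin d))) (hK : IsCompact K) (hKne : K.Nonempty) (hKU : K ⊆ U)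
    (δ : ℝ) (hδ0 : 0 < δ) (hδ1 : δ ≤ 1)
    (hδU : ∀ x ∈ K, ∀ z : EuclideanSpace ℝ (Fin d), dist z x < 3 * δ → z ∈ U)
    (β : ℝ) (hβ : 0 < β) :
    ∃ c > 0, ∀ η ∈ Set.Ioo (0:ℝ) δ, ∀ u v : EuclideanSpace ℝ (Fin d),
      ‖u‖ ≤ 1 → ‖v‖ ≤ 1 → ∀ x ∈ K, ∀ y ∈ K, 10 * η < dist x y →
      |Real.exp (β ^ 2 * (C x y + C (x - η • u) (y - η • v)
          - C (x - η • u) y - C x (y - η • v))) - 1|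
        ≤ c * η ^ 2 / dist x y ^ 2 := by
  have hVopen : IsOpen (U ×ˢ U) := hU.prod hU
  set Kd := Metric.cthickening δ K with hKd_def
  have hKdc : IsCompact Kd := hK.cthickening
  have hKdU : Kd ⊆ U := by
    intro z hz
    have h1 : z ∈ Metric.thickening (3 * δ) K :=
      Metric.cthickening_subset_thickening' (by linarith) (by linarith) K hz
    rw [Metric.mem_thickening_iff] at h1
    obtain ⟨w, hwK, hwd⟩ := h1
    exact hδU w hwK z hwd
  obtain ⟨M, hM⟩ := (hKdc.prod hKdc).exists_bound_of_continuousOn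
    ((((hg.fderiv_of_isOpen hVopen (by norm_num)).continuousOn_fderiv_of_isOpen hVopen
      le_rfl)).mono (Set.prod_mono hKdU hKdU))
  set M2 := max M 0 with hM2def
  have hM2 : ∀ w ∈ Kd ×ˢ Kd,
      ‖fderiv ℝ (fderiv ℝ (fun p : EuclideanSpace ℝ (Fin d) × EuclideanSpace ℝ (Fin d) =>
        g p.1 p.2)) w‖ ≤ M2 := fun w hw => le_trans (hM w hw) (le_max_left _ _)
  have hM20 : 0 ≤ M2 := le_max_right _ _
  obtain ⟨R0, hR0⟩ := Metric.isBounded_iff.1 hK.isBounded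
  set R := max R0 1 with hRdef
  have hR1 : (1:ℝ) ≤ R := le_max_right _ _
  have hRb : ∀ x ∈ K, ∀ y ∈ K, dist x y ≤ R := fun x hx y hy =>
    le_trans (hR0 hx hy) (le_max_left _ _)
  set c0 : ℝ := 5 + M2 * R ^ 2 with hc0def
  have hc00 : 0 < c0 := by nlinarith
  set B := β ^ 2 * c0 with hBdef
  have hB0 : 0 < B := by positivity
  refine ⟨B * Real.exp (B / 100) + 1, by positivity, ?_⟩
  intro η hη u v hu hv x hx y hy hr
  obtain ⟨hη0, hηδ⟩ := hη
  have hr0 : 0 < dist x y := lt_trans (by linarith) hr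
  have hau : ‖η • u‖ ≤ η := by
    rw [norm_smul, Real.norm_eq_abs, abs_of_pos hη0]; nlinarith [norm_nonneg u]
  have hbv : ‖η • v‖ ≤ η := by
    rw [norm_smul, Real.norm_eq_abs, abs_of_pos hη0]; nlinarith [norm_nonneg v]
  have hlog := aux_logpart x y (η • u) (η • v) η (dist x y) hη0 hau hbv rfl hr
  -- membership for the g-part
  have hmem : ∀ s ∈ Set.Icc (0:ℝ) 1, ∀ t ∈ Set.Icc (0:ℝ) 1,
      ((x, y) : EuclideanSpace ℝ (Fin d) × EuclideanSpace ℝ (Fin d))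
        - s • (η • u, 0) - t • (0, η • v) ∈ Kd ×ˢ Kd := by
    intro s hs t ht
    have hsm : ∀ (p : EuclideanSpace ℝ (Fin d)) (w : EuclideanSpace ℝ (Fin d)) (τ : ℝ),
        p ∈ K → 0 ≤ τ → τ ≤ 1 → ‖w‖ ≤ η → p - τ • w ∈ Kd := by
      intro p w τ hp hτ0 hτ1 hw
      apply Metric.mem_cthickening_of_dist_le (p - τ • w) p δ K hp
      rw [dist_eq_norm]
      have : p - τ • w - p = -(τ • w) := by abel
      rw [this, norm_neg, norm_smul, Real.norm_eq_abs, abs_of_nonneg hτ0]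
      nlinarith [norm_nonneg w]
    have he : ((x, y) : EuclideanSpace ℝ (Fin d) × EuclideanSpace ℝ (Fin d))
        - s • (η • u, 0) - t • (0, η • v) = (x - s • (η • u), y - t • (η • v)) := by
      simp [Prod.ext_iff, smul_zero]
    rw [he]
    exact ⟨hsm x (η • u) s hx hs.1 hs.2 hau, hsm y (η • v) t hy ht.1 ht.2 hbv⟩
  have hgpart := aux_gpart
    (fun p : EuclideanSpace ℝ (Fin d) × EuclideanSpace ℝ (Fin d) => g p.1 p.2)
    (U ×ˢ U) hVopen hg M2 (Kd ×ˢ Kd) (Set.prod_mono hKdU hKdU) hM2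
    (x, y) (η • u, 0) (0, η • v) hmem
  simp only [Prod.mk_sub_mk, sub_zero] at hgpart
  have hpn : ‖((η • u, 0) : EuclideanSpace ℝ (Fin d) × EuclideanSpace ℝ (Fin d))‖ ≤ η := by
    rw [Prod.norm_def]
    simp only [norm_zero]
    rw [max_eq_left (norm_nonneg _)]
    exact hau
  have hqn : ‖((0, η • v) : EuclideanSpace ℝ (Fin d) × EuclideanSpace ℝ (Fin d))‖ ≤ η := by
    rw [Prod.norm_def]
    simp only [norm_zero]
    rw [max_eq_right (norm_nonneg _)]
    exact hbv
  have hgb : |g x y + g (x - η • u) (y - η • v) - g (x - η • u) y - g x (y - η • v)|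
      ≤ M2 * η ^ 2 := by
    refine le_trans hgpart ?_
    calc M2 * ‖((η • u, 0) : EuclideanSpace ℝ (Fin d) × EuclideanSpace ℝ (Fin d))‖
          * ‖((0, η • v) : EuclideanSpace ℝ (Fin d) × EuclideanSpace ℝ (Fin d))‖
        ≤ M2 * η * η := by
          apply mul_le_mul (mul_le_mul le_rfl hpn (norm_nonneg _) hM20) hqn (norm_nonneg _)
          positivity
      _ = M2 * η ^ 2 := by ring
  -- combine
  have hCsplit : C x y + C (x - η • u) (y - η • v) - C (x - η • u) y - C x (y - η • v)
      = (Real.log (1 / dist x y) + Real.log (1 / dist (x - η • u) (y - η • v))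
          - Real.log (1 / dist (x - η • u) y) - Real.log (1 / dist x (y - η • v)))
        + (g x y + g (x - η • u) (y - η • v) - g (x - η • u) y - g x (y - η • v)) := by
    rw [hC, hC, hC, hC]; ring
  have hΔ : |C x y + C (x - η • u) (y - η • v) - C (x - η • u) y - C x (y - η • v)|
      ≤ c0 * η ^ 2 / dist x y ^ 2 := by
    rw [hCsplit]
    have htri := abs_add_le
      (Real.log (1 / dist x y) + Real.log (1 / dist (x - η • u) (y - η • v))
        - Real.log (1 / dist (x - η • u) y) - Real.log (1 / dist x (y - η • v)))
      (g x y + g (x - η • u) (y - η • v) - g (x - η • u) y - g x (y - η • v))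
    have hg2 : M2 * η ^ 2 ≤ M2 * R ^ 2 * η ^ 2 / dist x y ^ 2 := by
      rw [le_div_iff₀ (by positivity)]
      have hd2 : dist x y ^ 2 ≤ R ^ 2 := by nlinarith [hRb x hx y hy, hr0]
      nlinarith [mul_le_mul_of_nonneg_left hd2 (mul_nonneg hM20 (sq_nonneg η))]
    have hsum : 5 * η ^ 2 / dist x y ^ 2 + M2 * R ^ 2 * η ^ 2 / dist x y ^ 2
        = c0 * η ^ 2 / dist x y ^ 2 := by rw [hc0def]; ring
    linarith
  -- exponential step
  have hAa : |β ^ 2 * (C x y + C (x - η • u) (y - η • v) - C (x - η • u) y - C x (y - η • v))|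
      ≤ B * η ^ 2 / dist x y ^ 2 := by
    rw [abs_mul, abs_of_nonneg (sq_nonneg β)]
    calc β ^ 2 * |C x y + C (x - η • u) (y - η • v) - C (x - η • u) y - C x (y - η • v)|
        ≤ β ^ 2 * (c0 * η ^ 2 / dist x y ^ 2) := by
          exact mul_le_mul_of_nonneg_left hΔ (sq_nonneg β)
      _ = B * η ^ 2 / dist x y ^ 2 := by rw [hBdef]; ring
  have hq100 : η ^ 2 / dist x y ^ 2 ≤ 1 / 100 := by
    rw [div_le_div_iff₀ (by positivity) (by norm_num)]
    nlinarith
  have hA1 : |β ^ 2 * (C x y + C (x - η • u) (y - η • v) - C (x - η • u) y - C x (y - η • v))|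
      ≤ B / 100 := by
    refine le_trans hAa ?_
    calc B * η ^ 2 / dist x y ^ 2 = B * (η ^ 2 / dist x y ^ 2) := by ring
      _ ≤ B * (1 / 100) := mul_le_mul_of_nonneg_left hq100 hB0.le
      _ = B / 100 := by ring
  calc |Real.exp (β ^ 2 * (C x y + C (x - η • u) (y - η • v)
          - C (x - η • u) y - C x (y - η • v))) - 1|
      ≤ |β ^ 2 * (C x y + C (x - η • u) (y - η • v) - C (x - η • u) y - C x (y - η • v))|
        * Real.exp |β ^ 2 * (C x y + C (x - η • u) (y - η • v)
          - C (x - η • u) y - C x (y - η • v))| := aux_exp_bound _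
    _ ≤ (B * η ^ 2 / dist x y ^ 2) * Real.exp (B / 100) := by
        apply mul_le_mul hAa (Real.exp_le_exp.2 hA1) (Real.exp_pos _).le (by positivity)
    _ = (B * Real.exp (B / 100)) * η ^ 2 / dist x y ^ 2 := by ring
    _ ≤ (B * Real.exp (B / 100) + 1) * η ^ 2 / dist x y ^ 2 := by
        gcongr
        linarith [Real.exp_pos (B / 100)]
end

section
/- For every β > 0 there exists a constant c > 0 (depending only on d, g, K and β) such that for all η₁, η₂ with 0 < η₁ < η₂/100 and η₂ < δ, all u, v ∈ ℝ^d with |u| ≤ 1 and |v| ≤ 1, and all x, y ∈ K satisfying |x − y| > 10η₁ and |x − y + η₂v| > 10η₁, one has |exp(β²(C(x,y) + C(x − η₁u, y − η₂v) − C(x − η₁u, y) − C(x, y − η₂v))) − 1| ≤ c η₁ (1/|x − y| + 1/|x − y + η₂v|). -/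
open MeasureTheory

lemma expaux5 {s B : ℝ} (h : |s| ≤ B) : |Real.exp s - 1| ≤ Real.exp B * |s| := by
  have hB1 : 1 ≤ Real.exp B := Real.one_le_exp ((abs_nonneg s).trans h)
  rcases le_or_gt 0 s with hs | hs
  · have h1 : Real.exp s - 1 ≤ s * Real.exp s := by
      have h2 : (-s) + 1 ≤ Real.exp (-s) := Real.add_one_le_exp _
      have h3 := mul_le_mul_of_nonneg_left h2 (Real.exp_pos s).le
      rw [← Real.exp_add, add_neg_cancel, Real.exp_zero] at h3
      nlinarith
    have h4 : Real.exp s ≤ Real.exp B := Real.exp_le_exp.mpr ((le_abs_self s).trans h)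
    rw [abs_of_nonneg (by nlinarith [Real.add_one_le_exp s] : (0:ℝ) ≤ Real.exp s - 1),
      abs_of_nonneg hs]
    nlinarith
  · have h1 : s + 1 ≤ Real.exp s := Real.add_one_le_exp s
    have h2 : Real.exp s ≤ 1 := by
      rw [show (1:ℝ) = Real.exp 0 by simp]; exact Real.exp_le_exp.mpr hs.le
    rw [abs_of_nonpos (by linarith), abs_of_neg hs]
    nlinarith

lemma loglem5 {a b η : ℝ} (hη : 0 ≤ η) (ha : 10 * η < a) (hab : |b - a| ≤ η) :
    |Real.log b - Real.log a| ≤ 10 / 9 * (η / a) := by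
  have ha0 : 0 < a := by linarith
  have hab' := abs_le.mp hab
  have hb0 : 0 < b := by linarith
  rw [← Real.log_div hb0.ne' ha0.ne']
  set t := b / a with htdef
  have ht0 : 0 < t := div_pos hb0 ha0
  have ht9 : 9 / 10 ≤ t := by rw [htdef, le_div_iff₀ ha0]; nlinarith
  have htu : |t - 1| ≤ η / a := by
    have he : t - 1 = (b - a) / a := by rw [htdef]; field_simp
    rw [he, abs_div, abs_of_pos ha0]
    gcongr
  have hlog : |Real.log t| ≤ 10 / 9 * |t - 1| := by
    rcases le_or_gt 1 t with h1 | h1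
    · rw [abs_of_nonneg (Real.log_nonneg h1), abs_of_nonneg (by linarith)]
      nlinarith [Real.log_le_sub_one_of_pos ht0]
    · have hinv : Real.log (1 / t) ≤ 1 / t - 1 :=
        Real.log_le_sub_one_of_pos (by positivity)
      rw [one_div, Real.log_inv] at hinv
      have hti : t * t⁻¹ = 1 := mul_inv_cancel₀ ht0.ne'
      have h2 : t⁻¹ - 1 ≤ 10 / 9 * (1 - t) := by nlinarith [inv_pos.mpr ht0]
      rw [abs_of_nonpos (Real.log_nonpos ht0.le h1.le), abs_of_nonpos (by linarith)]
      linarith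
  calc |Real.log t| ≤ 10 / 9 * |t - 1| := hlog
    _ ≤ 10 / 9 * (η / a) := by linarith

set_option maxHeartbeats 1600000 in
/-- **The factor `E` is `1 + O(η₁/|x−y|) + O(η₁/|x−y+η₂v|)` at two scales.**
With `C(x,y) = log(1/|x−y|) + g(x,y)` for `g ∈ C²(U × U)`, `K ⊆ U` compact and
`δ = min(1, dist(K, Uᶜ)/3)` (encoded by `0 < δ ≤ 1` and `ball(x, 3δ) ⊆ U` for `x ∈ K`),
for every `β > 0` there is `c > 0` so that for all `0 < η₁ < η₂/100`, `η₂ < δ`,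
`|u|,|v| ≤ 1` and `x, y ∈ K` with `|x−y| > 10η₁` and `|x−y+η₂v| > 10η₁`,
`|exp(β²(C(x,y) + C(x−η₁u, y−η₂v) − C(x−η₁u, y) − C(x, y−η₂v))) − 1|
  ≤ c η₁ (1/|x−y| + 1/|x−y+η₂v|)`. -/
theorem stmt5 (d : ℕ) (hd : 2 ≤ d)
    (U : Set (EuclideanSpace ℝ (Fin d))) (hU : IsOpen U)
    (g : EuclideanSpace ℝ (Fin d) → EuclideanSpace ℝ (Fin d) → ℝ)
    (hg : ContDiffOn ℝ 2
      (fun p : EuclideanSpace ℝ (Fin d) × EuclideanSpace ℝ (Fin d) => g p.1 p.2) (U ×ˢ U))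
    (C : EuclideanSpace ℝ (Fin d) → EuclideanSpace ℝ (Fin d) → ℝ)
    (hC : ∀ x y, C x y = Real.log (1 / dist x y) + g x y)
    (K : Set (EuclideanSpace ℝ (Fin d))) (hK : IsCompact K) (hKne : K.Nonempty) (hKU : K ⊆ U)
    (δ : ℝ) (hδ0 : 0 < δ) (hδ1 : δ ≤ 1)
    (hδU : ∀ x ∈ K, ∀ z : EuclideanSpace ℝ (Fin d), dist z x < 3 * δ → z ∈ U)
    (β : ℝ) (hβ : 0 < β) :
    ∃ c > 0, ∀ η₁ η₂ : ℝ, 0 < η₁ → η₁ < η₂ / 100 → η₂ < δ →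
      ∀ u v : EuclideanSpace ℝ (Fin d), ‖u‖ ≤ 1 → ‖v‖ ≤ 1 →
      ∀ x ∈ K, ∀ y ∈ K, 10 * η₁ < dist x y → 10 * η₁ < ‖x - y + η₂ • v‖ →
      |Real.exp (β ^ 2 * (C x y + C (x - η₁ • u) (y - η₂ • v)
          - C (x - η₁ • u) y - C x (y - η₂ • v))) - 1|
        ≤ c * η₁ * (1 / dist x y + 1 / ‖x - y + η₂ • v‖) := by
  classical
  set G : EuclideanSpace ℝ (Fin d) × EuclideanSpace ℝ (Fin d) → ℝ := fun p => g p.1 p.2 with hGdef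
  have hUU : IsOpen (U ×ˢ U) := hU.prod hU
  have hdiff : ∀ p ∈ U ×ˢ U, DifferentiableAt ℝ G p := fun p hp =>
    (hg.contDiffAt (hUU.mem_nhds hp)).differentiableAt (by norm_num)
  have hfc : ContinuousOn (fun p => fderiv ℝ G p) (U ×ˢ U) :=
    hg.continuousOn_fderiv_of_isOpen hUU (by norm_num)
  set K₂ := Metric.cthickening δ K with hK₂def
  have hK₂c : IsCompact K₂ := hK.cthickening
  have hK₂U : K₂ ⊆ U := by
    intro z hz
    have hz2 : z ∈ Metric.thickening (2 * δ) K :=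
      Metric.cthickening_subset_thickening' (by linarith) (by linarith) K hz
    obtain ⟨w, hw, hdw⟩ := Metric.mem_thickening_iff.mp hz2
    exact hδU w hw z (by linarith)
  have hK₂K : K ⊆ K₂ := Metric.self_subset_cthickening K
  have hKKU : K₂ ×ˢ K₂ ⊆ U ×ˢ U := Set.prod_mono hK₂U hK₂U
  obtain ⟨M, hM⟩ := (hK₂c.prod hK₂c).exists_bound_of_continuousOn (hfc.mono hKKU)
  set M' := max M 0 with hM'def
  have hM'0 : 0 ≤ M' := le_max_right _ _
  set R := Metric.diam K + 1 with hRdef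
  have hR1 : 1 ≤ R := by
    have := Metric.diam_nonneg (s := K); linarith
  set B := β ^ 2 * (1 + 2 * M') with hBdef
  have hc0 : 0 < Real.exp B * β ^ 2 * (10 / 9 + 2 * M' * R) := by
    positivity
  refine ⟨Real.exp B * β ^ 2 * (10 / 9 + 2 * M' * R), hc0, ?_⟩
  intro η₁ η₂ hη₁ hη12 hη₂δ u v hu hv x hx y hy hxy hxyv
  have hη₂0 : 0 < η₂ := by linarith
  have hη₁δ : η₁ ≤ δ := by linarith
  have hη₂δ' : η₂ ≤ δ := hη₂δ.le
  have hη₁1 : η₁ ≤ 1 := hη₁δ.trans hδ1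
  have hnu : ‖η₁ • u‖ ≤ η₁ := by
    rw [norm_smul, Real.norm_of_nonneg hη₁.le]
    nlinarith
  have hnv : ‖η₂ • v‖ ≤ η₂ := by
    rw [norm_smul, Real.norm_of_nonneg hη₂0.le]
    nlinarith
  set x' := x - η₁ • u with hx'def
  set y' := y - η₂ • v with hy'def
  set a := dist x y with hadef
  set a' := ‖x - y + η₂ • v‖ with ha'def
  set b := dist x' y with hbdef
  set b' := dist x' y' with hb'def
  have ha0 : 0 < a := by linarith
  have ha'0 : 0 < a' := by linarith
  have haxy' : dist x y' = a' := by
    rw [dist_eq_norm, ha'def, hy'def]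
    congr 1
    abel
  have hba : |b - a| ≤ η₁ := by
    rw [hbdef, hadef, dist_eq_norm, dist_eq_norm]
    calc |‖x' - y‖ - ‖x - y‖| ≤ ‖(x' - y) - (x - y)‖ := abs_norm_sub_norm_le _ _
      _ = ‖η₁ • u‖ := by rw [show (x' - y) - (x - y) = -(η₁ • u) by rw [hx'def]; abel, norm_neg]
      _ ≤ η₁ := hnu
  have hb'a' : |b' - a'| ≤ η₁ := by
    rw [hb'def, ha'def, dist_eq_norm]
    calc |‖x' - y'‖ - ‖x - y + η₂ • v‖| ≤ ‖(x' - y') - (x - y + η₂ • v)‖ :=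
        abs_norm_sub_norm_le _ _
      _ = ‖η₁ • u‖ := by
          rw [show (x' - y') - (x - y + η₂ • v) = -(η₁ • u) by rw [hx'def, hy'def]; abel,
            norm_neg]
      _ ≤ η₁ := hnu
  have L1 : |Real.log b - Real.log a| ≤ 10 / 9 * (η₁ / a) := loglem5 hη₁.le hxy hba
  have L2 : |Real.log b' - Real.log a'| ≤ 10 / 9 * (η₁ / a') := loglem5 hη₁.le hxyv hb'a'
  -- Lipschitz bound for g on a convex neighbourhood
  set s : Set (EuclideanSpace ℝ (Fin d) × EuclideanSpace ℝ (Fin d)) := (Metric.closedBall x δ) ×ˢ (Metric.closedBall y δ) with hsdef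
  have hsK : s ⊆ K₂ ×ˢ K₂ :=
    Set.prod_mono (Metric.closedBall_subset_cthickening hx δ)
      (Metric.closedBall_subset_cthickening hy δ)
  have hsU : s ⊆ U ×ˢ U := hsK.trans hKKU
  have hconv : Convex ℝ s := (convex_closedBall x δ).prod (convex_closedBall y δ)
  have hgl : ∀ p ∈ s, ∀ q ∈ s, ‖G q - G p‖ ≤ M' * ‖q - p‖ := fun p hp q hq =>
    hconv.norm_image_sub_le_of_norm_fderiv_le (fun z hz => hdiff z (hsU hz))
      (fun z hz => (hM z (hsK hz)).trans (le_max_left _ _)) hp hq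
  have hxs : x ∈ Metric.closedBall x δ := Metric.mem_closedBall_self hδ0.le
  have hys : y ∈ Metric.closedBall y δ := Metric.mem_closedBall_self hδ0.le
  have hx's : x' ∈ Metric.closedBall x δ := by
    rw [Metric.mem_closedBall, dist_eq_norm,
      show x' - x = -(η₁ • u) by rw [hx'def]; abel, norm_neg]
    linarith
  have hy's : y' ∈ Metric.closedBall y δ := by
    rw [Metric.mem_closedBall, dist_eq_norm,
      show y' - y = -(η₂ • v) by rw [hy'def]; abel, norm_neg]
    linarith
  have hprodnorm : ∀ z : EuclideanSpace ℝ (Fin d), ‖((η₁ • u : EuclideanSpace ℝ (Fin d)), (0 : EuclideanSpace ℝ (Fin d)))‖ = ‖(η₁ • u : EuclideanSpace ℝ (Fin d))‖ := by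
    intro z
    rw [Prod.norm_def]
    simp [max_eq_left (norm_nonneg _)]
  have hg1 : |g x y - g x' y| ≤ M' * η₁ := by
    have h := hgl (x', y) (Set.mk_mem_prod hx's hys) (x, y) (Set.mk_mem_prod hxs hys)
    have he : ((x, y) : EuclideanSpace ℝ (Fin d) × EuclideanSpace ℝ (Fin d)) - (x', y) = ((η₁ • u : EuclideanSpace ℝ (Fin d)), (0 : EuclideanSpace ℝ (Fin d))) := by
      rw [Prod.mk_sub_mk, hx'def]
      congr 1 <;> abel
    rw [he, hprodnorm x] at h
    simp only [hGdef, Real.norm_eq_abs] at h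
    exact h.trans (mul_le_mul_of_nonneg_left hnu hM'0)
  have hg2 : |g x y' - g x' y'| ≤ M' * η₁ := by
    have h := hgl (x', y') (Set.mk_mem_prod hx's hy's) (x, y') (Set.mk_mem_prod hxs hy's)
    have he : ((x, y') : EuclideanSpace ℝ (Fin d) × EuclideanSpace ℝ (Fin d)) - (x', y') = ((η₁ • u : EuclideanSpace ℝ (Fin d)), (0 : EuclideanSpace ℝ (Fin d))) := by
      rw [Prod.mk_sub_mk, hx'def]
      congr 1 <;> abel
    rw [he, hprodnorm x] at h
    simp only [hGdef, Real.norm_eq_abs] at h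
    exact h.trans (mul_le_mul_of_nonneg_left hnu hM'0)
  -- Rewrite the exponent
  set D := C x y + C x' y' - C x' y - C x y' with hDdef
  have hD : D = ((Real.log b - Real.log a) + (Real.log a' - Real.log b'))
      + ((g x y - g x' y) - (g x y' - g x' y')) := by
    rw [hDdef, hC x y, hC x' y', hC x' y, hC x y', haxy']
    simp only [one_div, Real.log_inv, ← hadef, ← hbdef, ← hb'def]
    ring
  have hDabs : |D| ≤ 10 / 9 * (η₁ / a) + 10 / 9 * (η₁ / a') + 2 * (M' * η₁) := by
    rw [hD]
    have t1 := abs_add_le ((Real.log b - Real.log a) + (Real.log a' - Real.log b'))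
      ((g x y - g x' y) - (g x y' - g x' y'))
    have t2 := abs_add_le (Real.log b - Real.log a) (Real.log a' - Real.log b')
    have t3 := abs_sub (g x y - g x' y) (g x y' - g x' y')
    have t4 : |Real.log a' - Real.log b'| = |Real.log b' - Real.log a'| := abs_sub_comm _ _
    linarith
  have hfa : η₁ / a ≤ 1 / 10 := by rw [div_le_iff₀ ha0]; linarith
  have hfa' : η₁ / a' ≤ 1 / 10 := by rw [div_le_iff₀ ha'0]; linarith
  have hDB : |β ^ 2 * D| ≤ B := by
    rw [abs_mul, abs_of_nonneg (by positivity : (0:ℝ) ≤ β ^ 2), hBdef]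
    have : |D| ≤ 1 + 2 * M' := by nlinarith
    nlinarith [sq_nonneg β]
  have hexp := expaux5 hDB
  have haR : a ≤ R := by
    have := Metric.dist_le_diam_of_mem hK.isBounded hx hy
    rw [hRdef]; linarith
  have h1a : 1 ≤ R * (1 / a) := by
    rw [mul_one_div, le_div_iff₀ ha0]; linarith
  have hDfin : |D| ≤ (10 / 9 + 2 * M' * R) * η₁ * (1 / a + 1 / a') := by
    have e1 : 10 / 9 * (η₁ / a) + 10 / 9 * (η₁ / a') = 10 / 9 * η₁ * (1 / a + 1 / a') := by
      field_simp
    have e2 : 2 * (M' * η₁) ≤ 2 * M' * R * η₁ * (1 / a + 1 / a') := by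
      have h1 : 0 < 1 / a' := by positivity
      have h2 : 0 ≤ M' * η₁ := mul_nonneg hM'0 hη₁.le
      nlinarith [mul_le_mul_of_nonneg_left h1a h2,
        mul_nonneg (mul_nonneg h2 (by linarith : (0:ℝ) ≤ R)) h1.le]
    nlinarith
  calc |Real.exp (β ^ 2 * D) - 1| ≤ Real.exp B * |β ^ 2 * D| := hexp
    _ = Real.exp B * β ^ 2 * |D| := by
        rw [abs_mul, abs_of_nonneg (by positivity : (0:ℝ) ≤ β ^ 2)]; ring
    _ ≤ Real.exp B * β ^ 2 * ((10 / 9 + 2 * M' * R) * η₁ * (1 / a + 1 / a')) := by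
        have : (0:ℝ) < Real.exp B * β ^ 2 := by positivity
        nlinarith
    _ = Real.exp B * β ^ 2 * (10 / 9 + 2 * M' * R) * η₁ * (1 / a + 1 / a') := by ring
end

section
/- For every compact set K ⊆ ℝ² there exists a constant c > 0 such that for all η ∈ (0, 1/2) and all w ∈ ℝ², ∫∫ over {(x,y) ∈ K × K : |x − y| > η and |x − y + w| > η} of 1 / (|x − y| · |x − y + w|) dx dy ≤ c log(1/η). -/
open MeasureTheory Metric Set

noncomputable section StmtAux

/-- Auxiliary: the truncated kernel `‖z‖⁻²` on the annulus `η < ‖z‖ < 1`, as an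
`ℝ≥0∞`-valued function. -/
def stmt12annf (η : ℝ) : EuclideanSpace ℝ (Fin 2) → ENNReal :=
  {z : EuclideanSpace ℝ (Fin 2) | η < ‖z‖ ∧ ‖z‖ < 1}.indicator
    (fun z => ENNReal.ofReal ((‖z‖^2)⁻¹))

local notation "E2" => EuclideanSpace ℝ (Fin 2)

lemma stmt12_ann_meas (η : ℝ) : MeasurableSet {z : E2 | η < ‖z‖ ∧ ‖z‖ < 1} := by
  have : {z : E2 | η < ‖z‖ ∧ ‖z‖ < 1} = (fun z : E2 => ‖z‖) ⁻¹' (Set.Ioo η 1) := rfl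
  rw [this]
  exact (continuous_norm.measurable) measurableSet_Ioo

lemma stmt12annf_meas (η : ℝ) : Measurable (stmt12annf η) :=
  Measurable.indicator ((continuous_norm.pow 2).measurable.inv).ennreal_ofReal
    (stmt12_ann_meas η)

lemma stmt12_ann_integrable {η : ℝ} (hη : 0 < η) :
    IntegrableOn (fun z : E2 => (‖z‖^2)⁻¹) {z : E2 | η < ‖z‖ ∧ ‖z‖ < 1} := by
  have hsub : {z : E2 | η < ‖z‖ ∧ ‖z‖ < 1} ⊆ ball (0:E2) 1 := by
    intro z hz; simpa [mem_ball, dist_zero_right] using hz.2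
  have hmeas : AEStronglyMeasurable (fun z : E2 => (‖z‖^2)⁻¹)
      (volume.restrict {z : E2 | η < ‖z‖ ∧ ‖z‖ < 1}) :=
    ((continuous_norm.pow 2).measurable.inv).aestronglyMeasurable
  have hfin : volume {z : E2 | η < ‖z‖ ∧ ‖z‖ < 1} < ⊤ :=
    lt_of_le_of_lt (measure_mono hsub) measure_ball_lt_top
  refine Integrable.mono' (g := fun _ => (η^2)⁻¹)
    (integrableOn_const hfin.ne) hmeas ?_
  filter_upwards [ae_restrict_mem (stmt12_ann_meas η)] with z hz
  rw [Real.norm_eq_abs, abs_of_nonneg (by positivity)]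
  exact inv_anti₀ (by positivity) (by nlinarith [hz.1])

lemma stmt12annf_lintegral {η : ℝ} (hη : 0 < η) (hη1 : η < 1) :
    ∫⁻ z, stmt12annf η z
      = ENNReal.ofReal (2 * (volume (ball (0:E2) 1)).toReal * Real.log (1/η)) := by
  rw [stmt12annf, lintegral_indicator (stmt12_ann_meas η)]
  rw [← ofReal_integral_eq_lintegral_ofReal (stmt12_ann_integrable hη)
    (Filter.Eventually.of_forall fun z => by positivity)]
  congr 1
  have h1 : ∫ z : E2 in {z : E2 | η < ‖z‖ ∧ ‖z‖ < 1}, (‖z‖^2)⁻¹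
      = ∫ z : E2, (Set.Ioo η 1).indicator (fun r => (r^2)⁻¹) ‖z‖ := by
    rw [← integral_indicator (stmt12_ann_meas η)]
    congr 1
  rw [h1, integral_fun_norm_addHaar (volume : Measure E2)
    ((Set.Ioo η 1).indicator (fun r => (r^2)⁻¹))]
  have hdim : Module.finrank ℝ E2 = 2 := finrank_euclideanSpace_fin
  rw [hdim]
  have hkey : ∀ y : ℝ, y ^ (2-1) • (Set.Ioo η 1).indicator (fun r => (r^2)⁻¹) y
      = (Set.Ioo η 1).indicator (fun r => r⁻¹) y := by
    intro y
    by_cases hy : y ∈ Set.Ioo η 1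
    · have hy0 : y ≠ 0 := ne_of_gt (lt_trans hη hy.1)
      rw [Set.indicator_of_mem hy, Set.indicator_of_mem hy]
      simp only [pow_one, smul_eq_mul]
      field_simp
      ring
    · simp [Set.indicator_of_notMem hy]
  have h2 : ∫ y in Set.Ioi (0:ℝ), y ^ (2-1) • (Set.Ioo η 1).indicator (fun r => (r^2)⁻¹) y
      = Real.log (1/η) := by
    simp_rw [hkey]
    rw [setIntegral_indicator measurableSet_Ioo]
    have : Set.Ioi (0:ℝ) ∩ Set.Ioo η 1 = Set.Ioo η 1 := by
      apply Set.inter_eq_self_of_subset_right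
      intro y hy; exact lt_trans hη hy.1
    rw [this, ← integral_Ioc_eq_integral_Ioo,
      ← intervalIntegral.integral_of_le (le_of_lt hη1), integral_inv_of_pos hη one_pos]
  rw [h2]
  simp only [smul_eq_mul, nsmul_eq_mul]
  push_cast
  simp only [Measure.real]
  ring

lemma stmt12lemL (K : Set E2) (hKm : MeasurableSet K) {η : ℝ} (hη : 0 < η) (v : E2) :
    ∫⁻ y : E2, ({y : E2 | y ∈ K ∧ η < ‖v - y‖}.indicator
        (fun y => ENNReal.ofReal ((‖v - y‖^2)⁻¹))) y
      ≤ (∫⁻ z, stmt12annf η z) + volume K := by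
  have hpt : ∀ y : E2, ({y : E2 | y ∈ K ∧ η < ‖v - y‖}.indicator
      (fun y => ENNReal.ofReal ((‖v - y‖^2)⁻¹))) y
      ≤ stmt12annf η (v - y) + K.indicator (fun _ => (1:ENNReal)) y := by
    intro y
    by_cases hy : y ∈ {y : E2 | y ∈ K ∧ η < ‖v - y‖}
    · rw [Set.indicator_of_mem hy]
      by_cases h1 : ‖v - y‖ < 1
      · have hmem : v - y ∈ {z : E2 | η < ‖z‖ ∧ ‖z‖ < 1} := ⟨hy.2, h1⟩
        have hval : stmt12annf η (v - y) = ENNReal.ofReal ((‖v - y‖^2)⁻¹) :=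
          Set.indicator_of_mem hmem _
        calc ENNReal.ofReal ((‖v - y‖^2)⁻¹) = stmt12annf η (v - y) := hval.symm
          _ ≤ _ := le_self_add
      · push_neg at h1
        have hle : ENNReal.ofReal ((‖v - y‖^2)⁻¹) ≤ 1 := by
          rw [← ENNReal.ofReal_one]
          apply ENNReal.ofReal_le_ofReal
          rw [inv_le_one_iff₀]
          right; nlinarith
        calc ENNReal.ofReal ((‖v - y‖^2)⁻¹) ≤ K.indicator (fun _ => (1:ENNReal)) y := by
              rw [Set.indicator_of_mem hy.1]; exact hle
          _ ≤ _ := le_add_self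
    · rw [Set.indicator_of_notMem hy]; exact zero_le
  calc ∫⁻ y : E2, ({y : E2 | y ∈ K ∧ η < ‖v - y‖}.indicator
        (fun y => ENNReal.ofReal ((‖v - y‖^2)⁻¹))) y
      ≤ ∫⁻ y : E2, (stmt12annf η (v - y) + K.indicator (fun _ => (1:ENNReal)) y) :=
        lintegral_mono hpt
    _ = (∫⁻ y : E2, stmt12annf η (v - y)) + ∫⁻ y : E2, K.indicator (fun _ => (1:ENNReal)) y :=
        lintegral_add_left ((stmt12annf_meas η).comp (measurable_const.sub measurable_id)) _
    _ = (∫⁻ z, stmt12annf η z) + volume K := by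
        have hmp := (Measure.measurePreserving_sub_left (volume : Measure E2) v).lintegral_comp
          (stmt12annf_meas η)
        rw [hmp]
        congr 1
        rw [lintegral_indicator hKm]
        simp

lemma stmt12lemM (K : Set E2) (hKm : MeasurableSet K) {η : ℝ} (hη : 0 < η) (w : E2) :
    ∫⁻ p : E2 × E2, ({p : E2 × E2 | p.1 ∈ K ∧ p.2 ∈ K ∧ η < ‖p.1 - p.2 + w‖}.indicator
        (fun p => ENNReal.ofReal ((‖p.1 - p.2 + w‖^2)⁻¹))) p
      ≤ ((∫⁻ z, stmt12annf η z) + volume K) * volume K := by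
  have hcont : Continuous fun p : E2 × E2 => ‖p.1 - p.2 + w‖ :=
    ((continuous_fst.sub continuous_snd).add continuous_const).norm
  have hS2 : MeasurableSet {p : E2 × E2 | p.1 ∈ K ∧ p.2 ∈ K ∧ η < ‖p.1 - p.2 + w‖} :=
    (hKm.preimage measurable_fst).inter ((hKm.preimage measurable_snd).inter
      (measurableSet_lt measurable_const hcont.measurable))
  have hg : Measurable fun p : E2 × E2 => ENNReal.ofReal ((‖p.1 - p.2 + w‖^2)⁻¹) :=
    ((hcont.pow 2).measurable.inv).ennreal_ofReal
  have hmeas : Measurable ({p : E2 × E2 | p.1 ∈ K ∧ p.2 ∈ K ∧ η < ‖p.1 - p.2 + w‖}.indicator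
      (fun p => ENNReal.ofReal ((‖p.1 - p.2 + w‖^2)⁻¹))) := hg.indicator hS2
  rw [Measure.volume_eq_prod, lintegral_prod _ hmeas.aemeasurable]
  calc ∫⁻ x : E2, ∫⁻ y : E2, ({p : E2 × E2 | p.1 ∈ K ∧ p.2 ∈ K ∧ η < ‖p.1 - p.2 + w‖}.indicator
        (fun p => ENNReal.ofReal ((‖p.1 - p.2 + w‖^2)⁻¹))) (x, y)
      ≤ ∫⁻ x : E2, K.indicator (fun _ => (∫⁻ z, stmt12annf η z) + volume K) x := by
        apply lintegral_mono
        intro x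
        by_cases hx : x ∈ K
        · rw [Set.indicator_of_mem hx]
          refine le_trans (lintegral_mono ?_) (stmt12lemL K hKm hη (x + w))
          intro y
          show ({p : E2 × E2 | p.1 ∈ K ∧ p.2 ∈ K ∧ η < ‖p.1 - p.2 + w‖}.indicator
            (fun p => ENNReal.ofReal ((‖p.1 - p.2 + w‖^2)⁻¹))) (x, y)
            ≤ ({y : E2 | y ∈ K ∧ η < ‖(x + w) - y‖}.indicator
              (fun y => ENNReal.ofReal ((‖(x + w) - y‖^2)⁻¹))) y
          have hrw : x - y + w = x + w - y := by abel
          by_cases hy : (x, y) ∈ {p : E2 × E2 | p.1 ∈ K ∧ p.2 ∈ K ∧ η < ‖p.1 - p.2 + w‖}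
          · rw [Set.indicator_of_mem hy]
            have hy' : y ∈ {y : E2 | y ∈ K ∧ η < ‖(x + w) - y‖} := by
              refine ⟨hy.2.1, ?_⟩
              show η < ‖x + w - y‖
              rw [← hrw]; exact hy.2.2
            rw [Set.indicator_of_mem hy']
            show ENNReal.ofReal ((‖x - y + w‖^2)⁻¹) ≤ ENNReal.ofReal ((‖x + w - y‖^2)⁻¹)
            rw [hrw]
          · rw [Set.indicator_of_notMem hy]; exact zero_le
        · rw [Set.indicator_of_notMem hx]
          have hz : ∀ y : E2, ({p : E2 × E2 | p.1 ∈ K ∧ p.2 ∈ K ∧ η < ‖p.1 - p.2 + w‖}.indicator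
              (fun p => ENNReal.ofReal ((‖p.1 - p.2 + w‖^2)⁻¹))) (x, y) = 0 := by
            intro y
            apply Set.indicator_of_notMem
            intro hmem; exact hx hmem.1
          calc ∫⁻ y : E2, ({p : E2 × E2 | p.1 ∈ K ∧ p.2 ∈ K ∧ η < ‖p.1 - p.2 + w‖}.indicator
              (fun p => ENNReal.ofReal ((‖p.1 - p.2 + w‖^2)⁻¹))) (x, y)
              = ∫⁻ _ : E2, 0 := by simp only [hz]
            _ = 0 := lintegral_zero
            _ ≤ _ := zero_le
    _ = ((∫⁻ z, stmt12annf η z) + volume K) * volume K := by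
        rw [lintegral_indicator hKm, setLIntegral_const]

end StmtAux

open MeasureTheory

/-- **Off-diagonal integral of `1/(|x−y| |x−y+w|)` over a compact set in `ℝ²`.**
For every compact `K ⊆ ℝ²` there is `c > 0` such that for all `η ∈ (0, 1/2)` and all
`w ∈ ℝ²`, `∫∫_{x,y ∈ K, |x−y| > η, |x−y+w| > η} 1/(|x−y| |x−y+w|) dx dy ≤ c log(1/η)`. -/
theorem stmt12 (K : Set (EuclideanSpace ℝ (Fin 2))) (hK : IsCompact K) :
    ∃ c > 0, ∀ η : ℝ, η ∈ Set.Ioo (0:ℝ) (1/2) → ∀ w : EuclideanSpace ℝ (Fin 2),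
      IntegrableOn
        (fun p : EuclideanSpace ℝ (Fin 2) × EuclideanSpace ℝ (Fin 2) =>
          1 / (dist p.1 p.2 * ‖p.1 - p.2 + w‖))
        {p : EuclideanSpace ℝ (Fin 2) × EuclideanSpace ℝ (Fin 2) |
          p.1 ∈ K ∧ p.2 ∈ K ∧ η < dist p.1 p.2 ∧ η < ‖p.1 - p.2 + w‖} volume ∧
      (∫ p : EuclideanSpace ℝ (Fin 2) × EuclideanSpace ℝ (Fin 2) in
          {p : EuclideanSpace ℝ (Fin 2) × EuclideanSpace ℝ (Fin 2) |
            p.1 ∈ K ∧ p.2 ∈ K ∧ η < dist p.1 p.2 ∧ η < ‖p.1 - p.2 + w‖},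
          1 / (dist p.1 p.2 * ‖p.1 - p.2 + w‖))
        ≤ c * Real.log (1 / η) := by
  classical
  have hKm : MeasurableSet K := hK.isClosed.measurableSet
  set B : ℝ := (volume (ball (0 : EuclideanSpace ℝ (Fin 2)) 1)).toReal with hBdef
  set V : ℝ := (volume K).toReal with hVdef
  have hV0 : 0 ≤ V := ENNReal.toReal_nonneg
  have hB0 : 0 ≤ B := ENNReal.toReal_nonneg
  have hlog2 : (0:ℝ) < Real.log 2 := Real.log_pos one_lt_two
  refine ⟨4*V*B + 2*V^2/Real.log 2 + 1, by positivity, ?_⟩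
  intro η hη w
  obtain ⟨hη0, hη2⟩ := hη
  set L : ℝ := Real.log (1/η) with hLdef
  have h2L : Real.log 2 ≤ L := by
    apply Real.log_le_log (by norm_num)
    rw [le_div_iff₀ hη0]
    linarith
  have hL0 : (0:ℝ) < L := lt_of_lt_of_le hlog2 h2L
  set S := {p : EuclideanSpace ℝ (Fin 2) × EuclideanSpace ℝ (Fin 2) |
    p.1 ∈ K ∧ p.2 ∈ K ∧ η < dist p.1 p.2 ∧ η < ‖p.1 - p.2 + w‖} with hSdef
  have hcontd : Continuous fun p : EuclideanSpace ℝ (Fin 2) × EuclideanSpace ℝ (Fin 2) =>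
      dist p.1 p.2 := continuous_fst.dist continuous_snd
  have hcontn : Continuous fun p : EuclideanSpace ℝ (Fin 2) × EuclideanSpace ℝ (Fin 2) =>
      ‖p.1 - p.2 + w‖ := ((continuous_fst.sub continuous_snd).add continuous_const).norm
  have hS : MeasurableSet S := by
    exact (hKm.preimage measurable_fst).inter ((hKm.preimage measurable_snd).inter
      ((measurableSet_lt measurable_const hcontd.measurable).inter
        (measurableSet_lt measurable_const hcontn.measurable)))
  have hGmeas : Measurable (fun p : EuclideanSpace ℝ (Fin 2) × EuclideanSpace ℝ (Fin 2) =>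
      1 / (dist p.1 p.2 * ‖p.1 - p.2 + w‖)) := by
    simp only [one_div]; exact (hcontd.mul hcontn).measurable.inv
  have hGnn : ∀ p : EuclideanSpace ℝ (Fin 2) × EuclideanSpace ℝ (Fin 2),
      0 ≤ 1 / (dist p.1 p.2 * ‖p.1 - p.2 + w‖) := fun p => by positivity
  -- the annulus integral
  set A : ENNReal := ∫⁻ z, stmt12annf η z with hAdef
  have hA : A = ENNReal.ofReal (2 * B * L) := by
    rw [hAdef, stmt12annf_lintegral hη0 (by linarith)]
  have hVK : volume K = ENNReal.ofReal V := by
    rw [hVdef, ENNReal.ofReal_toReal hK.measure_lt_top.ne]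
  -- bound for each of the two kernels
  have bound2 : ∫⁻ p in S, ENNReal.ofReal ((‖p.1 - p.2 + w‖^2)⁻¹)
      ≤ (A + volume K) * volume K := by
    have hsub : S ⊆ {p : EuclideanSpace ℝ (Fin 2) × EuclideanSpace ℝ (Fin 2) |
        p.1 ∈ K ∧ p.2 ∈ K ∧ η < ‖p.1 - p.2 + w‖} := fun p hp => ⟨hp.1, hp.2.1, hp.2.2.2⟩
    rw [← lintegral_indicator hS]
    refine le_trans (lintegral_mono (Set.indicator_le_indicator_of_subset
      hsub (fun _ => zero_le))) ?_
    exact stmt12lemM K hKm hη0 w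
  have bound1 : ∫⁻ p in S, ENNReal.ofReal ((dist p.1 p.2 ^2)⁻¹)
      ≤ (A + volume K) * volume K := by
    have hsub : S ⊆ {p : EuclideanSpace ℝ (Fin 2) × EuclideanSpace ℝ (Fin 2) |
        p.1 ∈ K ∧ p.2 ∈ K ∧ η < dist p.1 p.2} := fun p hp => ⟨hp.1, hp.2.1, hp.2.2.1⟩
    rw [← lintegral_indicator hS]
    refine le_trans (lintegral_mono (Set.indicator_le_indicator_of_subset
      hsub (fun _ => zero_le))) ?_
    have h := stmt12lemM K hKm hη0 0
    simp only [add_zero] at h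
    simp only [dist_eq_norm]
    exact h
  -- pointwise AM-GM on `S`
  have hpt : ∀ p ∈ S, ENNReal.ofReal (1 / (dist p.1 p.2 * ‖p.1 - p.2 + w‖))
      ≤ ENNReal.ofReal ((dist p.1 p.2 ^2)⁻¹) + ENNReal.ofReal ((‖p.1 - p.2 + w‖^2)⁻¹) := by
    intro p hp
    set a := dist p.1 p.2
    set b := ‖p.1 - p.2 + w‖
    have ha : 0 < a := lt_trans hη0 hp.2.2.1
    have hb : 0 < b := lt_trans hη0 hp.2.2.2
    rw [← ENNReal.ofReal_add (by positivity) (by positivity)]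
    apply ENNReal.ofReal_le_ofReal
    rw [one_div]
    have h1 : (a^2)⁻¹ + (b^2)⁻¹ = (b^2 + a^2)/(a^2*b^2) := by field_simp
    have h2 : (a*b)⁻¹ = (a*b)/(a^2*b^2) := by
      rw [eq_div_iff (by positivity)]
      field_simp
    rw [h1, h2]
    gcongr
    nlinarith [sq_nonneg (a - b)]
  -- main lintegral bound
  have hbound : ∫⁻ p in S, ENNReal.ofReal (1 / (dist p.1 p.2 * ‖p.1 - p.2 + w‖))
      ≤ ENNReal.ofReal ((4*V*B + 2*V^2/Real.log 2 + 1) * L) := by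
    calc ∫⁻ p in S, ENNReal.ofReal (1 / (dist p.1 p.2 * ‖p.1 - p.2 + w‖))
        ≤ ∫⁻ p in S, (ENNReal.ofReal ((dist p.1 p.2 ^2)⁻¹)
            + ENNReal.ofReal ((‖p.1 - p.2 + w‖^2)⁻¹)) := setLIntegral_mono' hS hpt
      _ = (∫⁻ p in S, ENNReal.ofReal ((dist p.1 p.2 ^2)⁻¹))
            + ∫⁻ p in S, ENNReal.ofReal ((‖p.1 - p.2 + w‖^2)⁻¹) :=
          lintegral_add_left (((hcontd.pow 2).measurable.inv).ennreal_ofReal) _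
      _ ≤ (A + volume K) * volume K + (A + volume K) * volume K := add_le_add bound1 bound2
      _ = ENNReal.ofReal ((2*B*L + V) * V) + ENNReal.ofReal ((2*B*L + V) * V) := by
          rw [hA, hVK, ← ENNReal.ofReal_add (by positivity) hV0, ← ENNReal.ofReal_mul
            (by positivity)]
      _ = ENNReal.ofReal ((2*B*L + V) * V + (2*B*L + V) * V) := by
          rw [ENNReal.ofReal_add (by positivity) (by positivity)]
      _ ≤ ENNReal.ofReal ((4*V*B + 2*V^2/Real.log 2 + 1) * L) := by
          apply ENNReal.ofReal_le_ofReal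
          have e1 : 2*V^2 = (2*V^2/Real.log 2) * Real.log 2 := by field_simp
          have e2 : (2*V^2/Real.log 2) * Real.log 2 ≤ (2*V^2/Real.log 2) * L :=
            mul_le_mul_of_nonneg_left h2L (by positivity)
          nlinarith [hL0.le, hB0, hV0]
  have hnn : 0 ≤ᵐ[volume.restrict S]
      (fun p : EuclideanSpace ℝ (Fin 2) × EuclideanSpace ℝ (Fin 2) =>
        1 / (dist p.1 p.2 * ‖p.1 - p.2 + w‖)) :=
    Filter.Eventually.of_forall hGnn
  have hint : IntegrableOn
      (fun p : EuclideanSpace ℝ (Fin 2) × EuclideanSpace ℝ (Fin 2) =>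
        1 / (dist p.1 p.2 * ‖p.1 - p.2 + w‖)) S volume := by
    refine ⟨hGmeas.aestronglyMeasurable.restrict, ?_⟩
    rw [hasFiniteIntegral_iff_ofReal hnn]
    exact lt_of_le_of_lt hbound ENNReal.ofReal_lt_top
  refine ⟨hint, ?_⟩
  rw [integral_eq_lintegral_of_nonneg_ae hnn hGmeas.aestronglyMeasurable.restrict]
  calc (∫⁻ p in S, ENNReal.ofReal (1 / (dist p.1 p.2 * ‖p.1 - p.2 + w‖))).toReal
      ≤ (ENNReal.ofReal ((4*V*B + 2*V^2/Real.log 2 + 1) * L)).toReal :=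
        ENNReal.toReal_mono ENNReal.ofReal_ne_top hbound
    _ = (4*V*B + 2*V^2/Real.log 2 + 1) * L := ENNReal.toReal_ofReal (by positivity)
end

section
/- For every smooth compactly supported function f on U, the quadruple integral J(η₁, η₂) := ∫∫∫∫ f(x) (∂₁f)(y + η₂v) ∂₁C(x − η₁u, y) φ(u) φ(v) du dv dx dy (over u, v, x, y ∈ ℝ^d, with the integrand set to 0 outside its domain of definition, and with 0 < η₁, η₂ < dist(supp f, ℝ^d ∖ U)/4) converges, as (η₁, η₂) → (0, 0), to ∫∫ f(x) (∂₁f)(y) ∂₁C(x, y) dx dy. -/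
open MeasureTheory Filter Set Metric
open scoped ContDiff Topology Classical ENNReal

lemma aux_integrableOn_inv_norm (d : ℕ) (hd : 2 ≤ d) (R : ℝ) :
    IntegrableOn (fun z : EuclideanSpace ℝ (Fin d) => ‖z‖⁻¹) (Metric.closedBall 0 R) volume := by
  haveI : Nonempty (Fin d) := ⟨⟨0, by omega⟩⟩
  have hdim : Module.finrank ℝ (EuclideanSpace ℝ (Fin d)) = d := finrank_euclideanSpace_fin
  rcases le_or_gt R 0 with hR | hR
  · have hsub : Metric.closedBall (0 : EuclideanSpace ℝ (Fin d)) R ⊆ {0} := by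
      rcases lt_or_eq_of_le hR with h | h
      · rw [Metric.closedBall_eq_empty.2 h]; exact empty_subset _
      · subst h; rw [Metric.closedBall_zero]
    have h0 : volume (Metric.closedBall (0 : EuclideanSpace ℝ (Fin d)) R) = 0 :=
      measure_mono_null hsub (measure_singleton 0)
    rw [IntegrableOn, Measure.restrict_eq_zero.mpr h0]
    exact integrable_zero_measure
  · refine ⟨measurable_norm.inv.aestronglyMeasurable, ?_⟩
    have hnn : ∀ z : EuclideanSpace ℝ (Fin d), 0 ≤ ‖z‖⁻¹ := fun z => by positivity
    rw [hasFiniteIntegral_iff_ofReal (Eventually.of_forall fun z => hnn z)]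
    rw [lintegral_eq_lintegral_meas_le _ (Eventually.of_forall fun z => hnn z)
      measurable_norm.inv.aemeasurable]
    set μr := volume.restrict (Metric.closedBall (0 : EuclideanSpace ℝ (Fin d)) R) with hμr
    have hsub2 : ∀ t : ℝ, 0 < t →
        {a : EuclideanSpace ℝ (Fin d) | t ≤ ‖a‖⁻¹} ⊆ Metric.closedBall 0 t⁻¹ := by
      intro t ht a ha
      simp only [mem_setOf_eq] at ha
      rcases eq_or_ne a 0 with rfl | h0
      · simp [Metric.mem_closedBall, dist_zero_left, inv_nonneg, ht.le]
      · have hna : 0 < ‖a‖ := norm_pos_iff.mpr h0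
        have : ‖a‖ ≤ t⁻¹ := by
          rw [← one_div, le_div_iff₀ ht]
          calc ‖a‖ * t ≤ ‖a‖ * ‖a‖⁻¹ := by gcongr
            _ = 1 := mul_inv_cancel₀ hna.ne'
        simpa [Metric.mem_closedBall, dist_zero_right] using this
    have key : ∀ t ∈ Ioi (0:ℝ), μr {a | t ≤ ‖a‖⁻¹} ≤
        min (volume (Metric.closedBall (0 : EuclideanSpace ℝ (Fin d)) R))
          (volume (Metric.closedBall (0 : EuclideanSpace ℝ (Fin d)) t⁻¹)) := by
      intro t ht
      refine le_min ?_ ?_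
      · rw [hμr, Measure.restrict_apply' measurableSet_closedBall]
        exact measure_mono inter_subset_right
      · refine le_trans (Measure.restrict_le_self _) (measure_mono (hsub2 t ht))
    calc ∫⁻ t in Ioi (0:ℝ), μr {a | t ≤ ‖a‖⁻¹}
        ≤ ∫⁻ t in Ioc (0:ℝ) R⁻¹ ∪ Ioi R⁻¹, μr {a | t ≤ ‖a‖⁻¹} :=
          lintegral_mono_set Ioi_subset_Ioc_union_Ioi
      _ ≤ (∫⁻ t in Ioc (0:ℝ) R⁻¹, μr {a | t ≤ ‖a‖⁻¹}) +
          ∫⁻ t in Ioi R⁻¹, μr {a | t ≤ ‖a‖⁻¹} := lintegral_union_le _ _ _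
      _ < ⊤ := by
          refine ENNReal.add_lt_top.2 ⟨?_, ?_⟩
          · calc ∫⁻ t in Ioc (0:ℝ) R⁻¹, μr {a | t ≤ ‖a‖⁻¹}
                ≤ ∫⁻ _ in Ioc (0:ℝ) R⁻¹,
                  volume (Metric.closedBall (0 : EuclideanSpace ℝ (Fin d)) R) := by
                  refine setLIntegral_mono' measurableSet_Ioc fun t ht => ?_
                  exact (key t ht.1).trans (min_le_left _ _)
              _ = volume (Metric.closedBall (0 : EuclideanSpace ℝ (Fin d)) R) *
                  volume (Ioc (0:ℝ) R⁻¹) := setLIntegral_const _ _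
              _ < ⊤ := ENNReal.mul_lt_top measure_closedBall_lt_top
                  (by rw [Real.volume_Ioc]; exact ENNReal.ofReal_lt_top)
          · have hRinv : (0:ℝ) < R⁻¹ := by positivity
            have hdlt : -(d:ℝ) < -1 := by
              have : (1:ℝ) < d := by exact_mod_cast (by omega : 1 < d)
              linarith
            have heq : ∀ t ∈ Ioi R⁻¹, μr {a | t ≤ ‖a‖⁻¹} ≤
                ENNReal.ofReal (t ^ (-(d:ℝ))) *
                  volume (Metric.ball (0 : EuclideanSpace ℝ (Fin d)) 1) := by
              intro t ht
              have ht0 : (0:ℝ) < t := lt_trans hRinv ht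
              refine le_trans ((key t ht0).trans (min_le_right _ _)) ?_
              rw [Measure.addHaar_closedBall _ _ (by positivity : (0:ℝ) ≤ t⁻¹), hdim]
              have hpow : t⁻¹ ^ d = t ^ (-(d:ℝ)) := by
                rw [← Real.rpow_natCast t⁻¹ d, Real.inv_rpow ht0.le,
                  ← Real.rpow_neg ht0.le]
              rw [hpow]
            calc ∫⁻ t in Ioi R⁻¹, μr {a | t ≤ ‖a‖⁻¹}
                ≤ ∫⁻ t in Ioi R⁻¹, ENNReal.ofReal (t ^ (-(d:ℝ))) *
                    volume (Metric.ball (0 : EuclideanSpace ℝ (Fin d)) 1) :=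
                  setLIntegral_mono' measurableSet_Ioi heq
              _ = (∫⁻ t in Ioi R⁻¹, ENNReal.ofReal (t ^ (-(d:ℝ)))) *
                    volume (Metric.ball (0 : EuclideanSpace ℝ (Fin d)) 1) :=
                  lintegral_mul_const' _ _ measure_ball_lt_top.ne
              _ < ⊤ := ENNReal.mul_lt_top
                  (integrableOn_Ioi_rpow_of_lt hdlt hRinv).setLIntegral_lt_top
                  measure_ball_lt_top

lemma aux_W_integrable (d : ℕ) (hd : 2 ≤ d) (K : Set (EuclideanSpace ℝ (Fin d)))
    (hK : IsCompact K) (M : ℝ) (hM : 0 ≤ M) :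
    Integrable ((K ×ˢ K).indicator
      (fun q : EuclideanSpace ℝ (Fin d) × EuclideanSpace ℝ (Fin d) => ‖q.1 - q.2‖⁻¹ + M))
      volume := by
  obtain ⟨R, hR⟩ := hK.isBounded.subset_closedBall 0
  set gb : EuclideanSpace ℝ (Fin d) → ℝ :=
    (Metric.closedBall (0 : EuclideanSpace ℝ (Fin d)) (2*R)).indicator (fun z => ‖z‖⁻¹) with hgb
  have hgb_int : Integrable gb volume :=
    (aux_integrableOn_inv_norm d hd (2*R)).integrable_indicator measurableSet_closedBall
  have hK_ind : Integrable (K.indicator (fun _ => (1:ℝ))) volume :=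
    (integrableOn_const hK.measure_lt_top.ne).integrable_indicator hK.measurableSet
  -- convolution-type integrand : (p : E × E) ↦ 1_K p.2 * gb (p.1 - p.2)
  have hconv : Integrable (fun p : EuclideanSpace ℝ (Fin d) × EuclideanSpace ℝ (Fin d) =>
      K.indicator (fun _ => (1:ℝ)) p.2 * gb (p.1 - p.2)) ((volume : Measure (EuclideanSpace ℝ (Fin d))).prod volume) := by
    exact hK_ind.convolution_integrand (ContinuousLinearMap.mul ℝ ℝ) hgb_int
  -- swap to get (x, y) ↦ 1_K x * gb (y - x)
  have hswap : Integrable (fun p : EuclideanSpace ℝ (Fin d) × EuclideanSpace ℝ (Fin d) =>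
      K.indicator (fun _ => (1:ℝ)) p.1 * gb (p.1 - p.2)) ((volume : Measure (EuclideanSpace ℝ (Fin d))).prod volume) := by
    have hemb : MeasurableEmbedding (Prod.swap :
        (EuclideanSpace ℝ (Fin d) × EuclideanSpace ℝ (Fin d)) →
        EuclideanSpace ℝ (Fin d) × EuclideanSpace ℝ (Fin d)) :=
      MeasurableEquiv.prodComm.measurableEmbedding
    have hsw := (Measure.measurePreserving_swap
        (μ := (volume : Measure (EuclideanSpace ℝ (Fin d)))) (ν := volume)).integrable_comp_emb
        hemb
        (g := fun p : EuclideanSpace ℝ (Fin d) × EuclideanSpace ℝ (Fin d) =>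
          K.indicator (fun _ => (1:ℝ)) p.2 * gb (p.1 - p.2))
    have := hsw.mpr hconv
    refine this.congr (Eventually.of_forall fun p => ?_)
    simp only [Function.comp, Prod.snd_swap, Prod.fst_swap, Prod.swap]
    congr 1
    have : gb (p.1 - p.2) = gb (p.2 - p.1) := by
      rw [hgb]
      have h1 : p.1 - p.2 ∈ Metric.closedBall (0 : EuclideanSpace ℝ (Fin d)) (2*R)
          ↔ p.2 - p.1 ∈ Metric.closedBall (0 : EuclideanSpace ℝ (Fin d)) (2*R) := by
        simp [mem_closedBall, dist_zero_right, norm_sub_rev p.1 p.2]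
      by_cases h : p.1 - p.2 ∈ Metric.closedBall (0 : EuclideanSpace ℝ (Fin d)) (2*R)
      · rw [indicator_of_mem h, indicator_of_mem (h1.mp h), norm_sub_rev]
      · rw [indicator_of_notMem h, indicator_of_notMem (fun hc => h (h1.mpr hc))]
    rw [this]
  have hconst : Integrable ((K ×ˢ K).indicator (fun _ => M)) volume := by
    refine (integrableOn_const (ne_of_lt ?_)).integrable_indicator
      (hK.measurableSet.prod hK.measurableSet)
    exact (hK.prod hK).measure_lt_top
  have hdom : Integrable (fun p : EuclideanSpace ℝ (Fin d) × EuclideanSpace ℝ (Fin d) =>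
      K.indicator (fun _ => (1:ℝ)) p.1 * gb (p.1 - p.2) + (K ×ˢ K).indicator (fun _ => M) p)
      volume := by
    rw [Measure.volume_eq_prod] at hconst ⊢
    exact hswap.add hconst
  refine hdom.mono' ?_ (Eventually.of_forall fun p => ?_)
  · refine AEStronglyMeasurable.indicator ?_ (hK.measurableSet.prod hK.measurableSet)
    exact ((measurable_fst.sub measurable_snd).norm.inv.add measurable_const).aestronglyMeasurable
  · by_cases hp : p ∈ K ×ˢ K
    · rw [indicator_of_mem hp]
      have h1 : ‖p.1 - p.2‖ ≤ 2*R := by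
        have := hR hp.1; have := hR hp.2
        simp only [mem_closedBall, dist_zero_right] at *
        calc ‖p.1 - p.2‖ ≤ ‖p.1‖ + ‖p.2‖ := norm_sub_le _ _
          _ ≤ 2*R := by linarith
      have hnn : 0 ≤ ‖p.1 - p.2‖⁻¹ + M := by positivity
      rw [Real.norm_of_nonneg hnn]
      rw [indicator_of_mem hp.1, hgb, indicator_of_mem (mem_closedBall_zero_iff.mpr h1),
        indicator_of_mem hp]
      simp
    · rw [indicator_of_notMem hp, indicator_of_notMem hp]
      simp only [norm_zero]
      have h1 : 0 ≤ K.indicator (fun _ => (1:ℝ)) p.1 := indicator_nonneg (fun _ _ => one_pos.le) _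
      have h2 : 0 ≤ gb (p.1 - p.2) := by
        rw [hgb]; exact indicator_nonneg (fun z _ => by positivity) _
      positivity

section Main

variable {d : ℕ}

local notation "E" => EuclideanSpace ℝ (Fin d)

-- the measure-preserving shear
lemma aux_shear (d : ℕ) (c : ℝ) :
    ∃ T : ((E × E) × E × E) ≃ᵐ ((E × E) × E × E),
      MeasurePreserving T volume volume ∧
      ∀ p : (E × E) × E × E, T p = (p.1, (p.2.1 + c • p.1.1, p.2.2)) := by
  refine ⟨{ toFun := fun p => (p.1, (p.2.1 + c • p.1.1, p.2.2))
            invFun := fun p => (p.1, (p.2.1 - c • p.1.1, p.2.2))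
            left_inv := fun p => by simp
            right_inv := fun p => by simp
            measurable_toFun := ?_
            measurable_invFun := ?_ }, ?_, fun p => rfl⟩
  · exact measurable_fst.prodMk
      (((measurable_fst.comp measurable_snd).add
        ((measurable_fst.comp measurable_fst).const_smul c)).prodMk
        (measurable_snd.comp measurable_snd))
  · exact measurable_fst.prodMk
      (((measurable_fst.comp measurable_snd).sub
        ((measurable_fst.comp measurable_fst).const_smul c)).prodMk
        (measurable_snd.comp measurable_snd))
  · have hmap : ∀ a : E × E,
        Measure.map (fun q : E × E => (q.1 + c • a.1, q.2)) volume = volume := by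
      intro a
      have h1 : MeasurePreserving (fun q : E × E => (q.1 + c • a.1, q.2))
          ((volume : Measure E).prod volume) ((volume : Measure E).prod volume) :=
        (measurePreserving_add_right volume (c • a.1)).prod (MeasurePreserving.id _)
      rw [Measure.volume_eq_prod]
      exact h1.map_eq
    have hmp : MeasurePreserving
        (fun p : (E × E) × E × E => (p.1, (p.2.1 + c • p.1.1, p.2.2)))
        ((volume : Measure (E × E)).prod volume) ((volume : Measure (E × E)).prod volume) := by
      refine MeasurePreserving.skew_product (MeasurePreserving.id _) ?_
        (Eventually.of_forall fun a => hmap a)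
      exact ((measurable_fst.comp measurable_snd).add
        ((measurable_fst.comp measurable_fst).const_smul c)).prodMk
        (measurable_snd.comp measurable_snd)
    rw [Measure.volume_eq_prod]
    exact hmp

end Main

set_option maxHeartbeats 2000000 in
/-- **Convergence of the mollified quadruple integral.**
With `C(x,y) = log(1/|x−y|) + g(x,y)` for `g ∈ C²(U × U)`, `∂₁C` its partial derivative
in the first coordinate of the first variable (extended by `0` outside its domain of
definition), `φ` a mollifier supported in the annulus `B(0,1) ∖ B(0,1/2)` with `∫φ = 1`,
and `f` smooth compactly supported on `U`: the quadruple integrals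
`J(η₁,η₂) = ∫∫∫∫ f(x) (∂₁f)(y+η₂v) ∂₁C(x−η₁u, y) φ(u) φ(v) du dv dx dy`, defined for
`0 < η₁, η₂ < dist(supp f, Uᶜ)/4` (the distance being encoded by `D`), converge to
`∫∫ f(x) (∂₁f)(y) ∂₁C(x,y) dx dy` as `(η₁, η₂) → (0,0)`. -/
theorem stmt15 (d : ℕ) (hd : 2 ≤ d)
    (U : Set (EuclideanSpace ℝ (Fin d))) (hU : IsOpen U)
    (g : EuclideanSpace ℝ (Fin d) → EuclideanSpace ℝ (Fin d) → ℝ)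
    (hg : ContDiffOn ℝ 2
      (fun p : EuclideanSpace ℝ (Fin d) × EuclideanSpace ℝ (Fin d) => g p.1 p.2) (U ×ˢ U))
    (C₁ : EuclideanSpace ℝ (Fin d) → EuclideanSpace ℝ (Fin d) → ℝ)
    (hC₁ : ∀ x y, C₁ x y = if x ∈ U ∧ y ∈ U ∧ x ≠ y then
      -((x ⟨0, by omega⟩ - y ⟨0, by omega⟩) / dist x y ^ 2)
        + fderiv ℝ (fun x' => g x' y) x (EuclideanSpace.single ⟨0, by omega⟩ 1) else 0)
    (φ : EuclideanSpace ℝ (Fin d) → ℝ) (hφ : ContDiff ℝ ∞ φ) (hφ0 : ∀ z, 0 ≤ φ z)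
    (hφsupp : tsupport φ ⊆ Metric.closedBall 0 1 \ Metric.ball 0 (1/2))
    (hφint : ∫ z, φ z = 1)
    (f : EuclideanSpace ℝ (Fin d) → ℝ)
    (hf : ContDiff ℝ ∞ f) (hfc : HasCompactSupport f) (hfU : tsupport f ⊆ U)
    (D : ℝ) (hD : 0 < D)
    (hDU : ∀ x ∈ tsupport f, ∀ z : EuclideanSpace ℝ (Fin d), dist z x < D → z ∈ U) :
    (∀ η₁ ∈ Set.Ioo (0:ℝ) (D / 4), ∀ η₂ ∈ Set.Ioo (0:ℝ) (D / 4),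
      Integrable (fun p : (EuclideanSpace ℝ (Fin d) × EuclideanSpace ℝ (Fin d)) ×
          EuclideanSpace ℝ (Fin d) × EuclideanSpace ℝ (Fin d) =>
        f p.2.1 * fderiv ℝ f (p.2.2 + η₂ • p.1.2) (EuclideanSpace.single ⟨0, by omega⟩ 1)
          * C₁ (p.2.1 - η₁ • p.1.1) p.2.2 * φ p.1.1 * φ p.1.2) volume) ∧
    Tendsto (fun η : ℝ × ℝ =>
        ∫ p : (EuclideanSpace ℝ (Fin d) × EuclideanSpace ℝ (Fin d)) ×
            EuclideanSpace ℝ (Fin d) × EuclideanSpace ℝ (Fin d),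
          f p.2.1 * fderiv ℝ f (p.2.2 + η.2 • p.1.2) (EuclideanSpace.single ⟨0, by omega⟩ 1)
            * C₁ (p.2.1 - η.1 • p.1.1) p.2.2 * φ p.1.1 * φ p.1.2)
      ((𝓝[>] (0:ℝ)) ×ˢ (𝓝[>] (0:ℝ)))
      (𝓝 (∫ q : EuclideanSpace ℝ (Fin d) × EuclideanSpace ℝ (Fin d),
        f q.1 * fderiv ℝ f q.2 (EuclideanSpace.single ⟨0, by omega⟩ 1) * C₁ q.1 q.2)) := by
  classical
  set i0 : Fin d := ⟨0, by omega⟩ with hi0def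
  set e₀ : (EuclideanSpace ℝ (Fin d)) := EuclideanSpace.single i0 (1:ℝ) with he₀def
  set Gj : (EuclideanSpace ℝ (Fin d)) × (EuclideanSpace ℝ (Fin d)) → ℝ := fun q => g q.1 q.2 with hGjdef
  -- the compact set K
  set K : Set (EuclideanSpace ℝ (Fin d)) := Metric.cthickening (D/4) (tsupport f) with hKdef
  have hD4 : (0:ℝ) < D/4 := by linarith
  have hKc : IsCompact K := hfc.cthickening
  have hmemK : ∀ z ∈ tsupport f, ∀ w : (EuclideanSpace ℝ (Fin d)), dist w z ≤ D/4 → w ∈ K := by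
    intro z hz w hw
    exact Metric.mem_cthickening_of_dist_le w z _ _ hz hw
  have hKU : K ⊆ U := by
    intro z hz
    have h1 : EMetric.infEdist z (tsupport f) ≤ ENNReal.ofReal (D/4) := hz
    have h2 : EMetric.infEdist z (tsupport f) < ENNReal.ofReal (D/2) :=
      lt_of_le_of_lt h1 (by
        rw [ENNReal.ofReal_lt_ofReal_iff (by linarith)]
        linarith)
    obtain ⟨y, hy, hyd⟩ := EMetric.infEdist_lt_iff.mp h2
    have : dist z y < D/2 := by
      rw [← edist_lt_ofReal]; exact hyd
    exact hDU y hy z (by linarith)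
  -- bound for C₁ on K × K
  have hpartial : ∀ p : (EuclideanSpace ℝ (Fin d)) × (EuclideanSpace ℝ (Fin d)), p ∈ U ×ˢ U →
      fderiv ℝ (fun x' => g x' p.2) p.1 e₀ = fderiv ℝ Gj p (e₀, 0) := by
    intro p hp
    have hdAt : DifferentiableAt ℝ Gj p :=
      (hg.contDiffAt ((hU.prod hU).mem_nhds hp)).differentiableAt two_ne_zero
    have hinc : HasFDerivAt (fun x' : (EuclideanSpace ℝ (Fin d)) => (x', p.2))
        (ContinuousLinearMap.inl ℝ (EuclideanSpace ℝ (Fin d)) (EuclideanSpace ℝ (Fin d))) p.1 := hasFDerivAt_prodMk_left _ _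
    have hcomp := (hdAt.hasFDerivAt.comp p.1 hinc)
    have heq : fderiv ℝ (fun x' => g x' p.2) p.1
        = (fderiv ℝ Gj p).comp (ContinuousLinearMap.inl ℝ (EuclideanSpace ℝ (Fin d)) (EuclideanSpace ℝ (Fin d))) := hcomp.fderiv
    rw [heq]
    simp
  obtain ⟨M0, hM0⟩ : ∃ M0, ∀ p ∈ K ×ˢ K, ‖fderiv ℝ Gj p‖ ≤ M0 := by
    have hcont : ContinuousOn (fderiv ℝ Gj) (K ×ˢ K) :=
      (hg.continuousOn_fderiv_of_isOpen (hU.prod hU) one_le_two).mono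
        (prod_mono hKU hKU)
    obtain ⟨M0, hM0⟩ := (hKc.prod hKc).exists_bound_of_continuousOn hcont
    exact ⟨M0, hM0⟩
  set M : ℝ := max M0 0 with hMdef
  have hMnn : 0 ≤ M := le_max_right _ _
  have hC₁bdd : ∀ x ∈ K, ∀ y ∈ K, |C₁ x y| ≤ ‖x - y‖⁻¹ + M := by
    intro x hx y hy
    rw [hC₁]
    by_cases hcond : x ∈ U ∧ y ∈ U ∧ x ≠ y
    · rw [if_pos hcond]
      have hxy : x ≠ y := hcond.2.2
      have hdist : (0:ℝ) < dist x y := dist_pos.mpr hxy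
      have habs : |x i0 - y i0| ≤ dist x y := by
        have h1 : x i0 - y i0 = inner ℝ (x - y) e₀ := by
          rw [he₀def]
          rw [EuclideanSpace.inner_single_right]
          simp [PiLp.sub_apply]
        rw [dist_eq_norm, h1]
        calc |inner ℝ (x - y) e₀| ≤ ‖x - y‖ * ‖e₀‖ := abs_real_inner_le_norm _ _
          _ = ‖x - y‖ := by rw [he₀def, EuclideanSpace.norm_single]; simp
      have hterm1 : |(-((x i0 - y i0) / dist x y ^ 2))| ≤ ‖x - y‖⁻¹ := by
        rw [abs_neg, abs_div]
        rw [div_le_iff₀ (by positivity)]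
        rw [← dist_eq_norm]
        calc |x i0 - y i0| ≤ dist x y := habs
          _ = (dist x y)⁻¹ * |dist x y ^ 2| := by
              rw [abs_of_nonneg (by positivity)]
              field_simp
      have hterm2 : |fderiv ℝ (fun x' => g x' y) x e₀| ≤ M := by
        rw [hpartial (x, y) ⟨hcond.1, hcond.2.1⟩]
        calc |fderiv ℝ Gj (x, y) (e₀, 0)| ≤ ‖fderiv ℝ Gj (x, y)‖ * ‖((e₀ : (EuclideanSpace ℝ (Fin d))), (0:(EuclideanSpace ℝ (Fin d))))‖ :=
              (fderiv ℝ Gj (x, y)).le_opNorm _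
          _ ≤ M0 * 1 := by
              refine mul_le_mul (hM0 (x, y) ⟨hx, hy⟩) ?_ (norm_nonneg _)
                ((norm_nonneg _).trans (hM0 (x, y) ⟨hx, hy⟩))
              rw [Prod.norm_def]
              simp [he₀def, EuclideanSpace.norm_single]
          _ ≤ M := by rw [hMdef]; simp
      calc |(-((x i0 - y i0) / dist x y ^ 2)) + fderiv ℝ (fun x' => g x' y) x e₀|
          ≤ |(-((x i0 - y i0) / dist x y ^ 2))| + |fderiv ℝ (fun x' => g x' y) x e₀| :=
            abs_add_le _ _
        _ ≤ ‖x - y‖⁻¹ + M := add_le_add hterm1 hterm2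
    · rw [if_neg hcond]
      simp only [abs_zero]
      positivity
  -- measurability of C₁
  have hQmeas : MeasurableSet {p : (EuclideanSpace ℝ (Fin d)) × (EuclideanSpace ℝ (Fin d)) | p.1 ∈ U ∧ p.2 ∈ U ∧ p.1 ≠ p.2} := by
    have hset : {p : (EuclideanSpace ℝ (Fin d)) × (EuclideanSpace ℝ (Fin d)) |
        p.1 ∈ U ∧ p.2 ∈ U ∧ p.1 ≠ p.2} =
        (Prod.fst ⁻¹' U) ∩ ((Prod.snd ⁻¹' U) ∩ (Set.diagonal (EuclideanSpace ℝ (Fin d)))ᶜ) := by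
      ext p
      simp only [Set.mem_setOf_eq, Set.mem_inter_iff, Set.mem_preimage, Set.mem_compl_iff,
        Set.mem_diagonal_iff]
    rw [hset]
    exact ((hU.preimage continuous_fst).inter ((hU.preimage continuous_snd).inter
      isClosed_diagonal.isOpen_compl)).measurableSet
  have hc₁meas : Measurable (fun q : (EuclideanSpace ℝ (Fin d)) × (EuclideanSpace ℝ (Fin d)) => C₁ q.1 q.2) := by
    have heq : (fun q : (EuclideanSpace ℝ (Fin d)) × (EuclideanSpace ℝ (Fin d)) => C₁ q.1 q.2) =
        fun q => if q.1 ∈ U ∧ q.2 ∈ U ∧ q.1 ≠ q.2 then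
          (-((q.1 i0 - q.2 i0) / dist q.1 q.2 ^ 2) + fderiv ℝ Gj q (e₀, 0)) else 0 := by
      funext q
      rw [hC₁]
      by_cases hq : q.1 ∈ U ∧ q.2 ∈ U ∧ q.1 ≠ q.2
      · rw [if_pos hq, if_pos hq, hpartial q ⟨hq.1, hq.2.1⟩]
      · rw [if_neg hq, if_neg hq]
    rw [heq]
    refine Measurable.ite hQmeas ?_ measurable_const
    refine Measurable.add ?_ (measurable_fderiv_apply_const ℝ Gj (e₀, 0))
    refine Measurable.neg ?_
    refine Measurable.div ?_ ?_
    · exact (((EuclideanSpace.proj i0).continuous.comp continuous_fst).sub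
        ((EuclideanSpace.proj i0).continuous.comp continuous_snd)).measurable
    · exact ((continuous_fst.dist continuous_snd).measurable).pow_const 2
  -- bounds for f and its derivative
  obtain ⟨B₁, hB₁⟩ : ∃ B₁, ∀ x, ‖f x‖ ≤ B₁ := hfc.exists_bound_of_continuous hf.continuous
  have hB₁nn : 0 ≤ B₁ := (norm_nonneg _).trans (hB₁ 0)
  have hdf_cont : Continuous (fun y : EuclideanSpace ℝ (Fin d) => fderiv ℝ f y e₀) :=
    (ContinuousLinearMap.apply ℝ ℝ e₀).continuous.comp (hf.continuous_fderiv (by norm_num))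
  have hdf_cs : HasCompactSupport (fun y : EuclideanSpace ℝ (Fin d) => fderiv ℝ f y e₀) :=
    (HasCompactSupport.fderiv (𝕜 := ℝ) hfc).comp_left (g := fun L : (EuclideanSpace ℝ (Fin d)) →L[ℝ] ℝ => L e₀) (by simp)
  obtain ⟨B₂, hB₂⟩ : ∃ B₂, ∀ y, ‖fderiv ℝ f y e₀‖ ≤ B₂ :=
    hdf_cs.exists_bound_of_continuous hdf_cont
  have hB₂nn : 0 ≤ B₂ := (norm_nonneg _).trans (hB₂ 0)
  -- φ is integrable
  have hφcs : HasCompactSupport φ :=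
    IsCompact.of_isClosed_subset (isCompact_closedBall 0 1) (isClosed_tsupport φ)
      (hφsupp.trans diff_subset)
  have hφL1 : Integrable φ volume := hφ.continuous.integrable_of_hasCompactSupport hφcs
  -- the dominating function
  set W : (EuclideanSpace ℝ (Fin d)) × (EuclideanSpace ℝ (Fin d)) → ℝ :=
    (K ×ˢ K).indicator (fun q => ‖q.1 - q.2‖⁻¹ + M) with hWdef
  have hWnn : ∀ q, 0 ≤ W q := fun q =>
    indicator_nonneg (fun z _ => by positivity) q
  set Φ : ((EuclideanSpace ℝ (Fin d)) × (EuclideanSpace ℝ (Fin d))) ×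
      (EuclideanSpace ℝ (Fin d)) × (EuclideanSpace ℝ (Fin d)) → ℝ :=
    fun p => (φ p.1.1 * φ p.1.2) * (B₁ * B₂ * W p.2) with hΦdef
  have hΦnn : ∀ p, 0 ≤ Φ p := by
    intro p
    have := hφ0 p.1.1; have := hφ0 p.1.2; have := hWnn p.2
    positivity
  have hΦint : Integrable Φ volume := by
    rw [Measure.volume_eq_prod]
    have h1 : Integrable (fun w : (EuclideanSpace ℝ (Fin d)) × (EuclideanSpace ℝ (Fin d)) =>
        φ w.1 * φ w.2) volume := by
      rw [Measure.volume_eq_prod]; exact hφL1.mul_prod hφL1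
    have h2 : Integrable (fun q : (EuclideanSpace ℝ (Fin d)) × (EuclideanSpace ℝ (Fin d)) =>
        B₁ * B₂ * W q) volume :=
      (aux_W_integrable d hd K hKc M hMnn).const_mul _
    exact h1.mul_prod h2
  -- measurability of the transformed integrand
  have hGmeas : ∀ η : ℝ × ℝ, AEStronglyMeasurable (fun p :
      ((EuclideanSpace ℝ (Fin d)) × (EuclideanSpace ℝ (Fin d))) ×
      (EuclideanSpace ℝ (Fin d)) × (EuclideanSpace ℝ (Fin d)) =>
      f (p.2.1 + η.1 • p.1.1) * fderiv ℝ f (p.2.2 + η.2 • p.1.2) e₀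
        * C₁ p.2.1 p.2.2 * φ p.1.1 * φ p.1.2) volume := by
    intro η
    have m1 : Measurable fun p : ((EuclideanSpace ℝ (Fin d)) × (EuclideanSpace ℝ (Fin d))) ×
        (EuclideanSpace ℝ (Fin d)) × (EuclideanSpace ℝ (Fin d)) => f (p.2.1 + η.1 • p.1.1) :=
      hf.continuous.measurable.comp (((measurable_fst.comp measurable_snd).add
        ((measurable_fst.comp measurable_fst).const_smul η.1)))
    have m2 : Measurable fun p : ((EuclideanSpace ℝ (Fin d)) × (EuclideanSpace ℝ (Fin d))) ×
        (EuclideanSpace ℝ (Fin d)) × (EuclideanSpace ℝ (Fin d)) =>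
        fderiv ℝ f (p.2.2 + η.2 • p.1.2) e₀ :=
      hdf_cont.measurable.comp (((measurable_snd.comp measurable_snd).add
        ((measurable_snd.comp measurable_fst).const_smul η.2)))
    have m3 : Measurable fun p : ((EuclideanSpace ℝ (Fin d)) × (EuclideanSpace ℝ (Fin d))) ×
        (EuclideanSpace ℝ (Fin d)) × (EuclideanSpace ℝ (Fin d)) => C₁ p.2.1 p.2.2 :=
      hc₁meas.comp measurable_snd
    have m4 : Measurable fun p : ((EuclideanSpace ℝ (Fin d)) × (EuclideanSpace ℝ (Fin d))) ×
        (EuclideanSpace ℝ (Fin d)) × (EuclideanSpace ℝ (Fin d)) => φ p.1.1 :=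
      hφ.continuous.measurable.comp (measurable_fst.comp measurable_fst)
    have m5 : Measurable fun p : ((EuclideanSpace ℝ (Fin d)) × (EuclideanSpace ℝ (Fin d))) ×
        (EuclideanSpace ℝ (Fin d)) × (EuclideanSpace ℝ (Fin d)) => φ p.1.2 :=
      hφ.continuous.measurable.comp (measurable_snd.comp measurable_fst)
    exact ((((m1.mul m2).mul m3).mul m4).mul m5).aestronglyMeasurable
  -- domination
  have hGbound : ∀ η : ℝ × ℝ, η ∈ Set.Ioo (0:ℝ) (D/4) ×ˢ Set.Ioo (0:ℝ) (D/4) →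
      ∀ p : ((EuclideanSpace ℝ (Fin d)) × (EuclideanSpace ℝ (Fin d))) ×
      (EuclideanSpace ℝ (Fin d)) × (EuclideanSpace ℝ (Fin d)),
      ‖f (p.2.1 + η.1 • p.1.1) * fderiv ℝ f (p.2.2 + η.2 • p.1.2) e₀
        * C₁ p.2.1 p.2.2 * φ p.1.1 * φ p.1.2‖ ≤ Φ p := by
    intro η hη p
    by_cases h0 : f (p.2.1 + η.1 • p.1.1) = 0 ∨ fderiv ℝ f (p.2.2 + η.2 • p.1.2) e₀ = 0 ∨
        φ p.1.1 = 0 ∨ φ p.1.2 = 0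
    · have : f (p.2.1 + η.1 • p.1.1) * fderiv ℝ f (p.2.2 + η.2 • p.1.2) e₀
          * C₁ p.2.1 p.2.2 * φ p.1.1 * φ p.1.2 = 0 := by
        rcases h0 with h | h | h | h <;> rw [h] <;> ring
      rw [this, norm_zero]
      exact hΦnn p
    · push_neg at h0
      obtain ⟨hne1, hne2, hne3, hne4⟩ := h0
      have hu1 : ‖p.1.1‖ ≤ 1 := by
        have := hφsupp (subset_tsupport φ (Function.mem_support.mpr hne3))
        exact mem_closedBall_zero_iff.mp this.1
      have hu2 : ‖p.1.2‖ ≤ 1 := by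
        have := hφsupp (subset_tsupport φ (Function.mem_support.mpr hne4))
        exact mem_closedBall_zero_iff.mp this.1
      have hx : p.2.1 ∈ K := by
        refine hmemK (p.2.1 + η.1 • p.1.1) (subset_tsupport f (Function.mem_support.mpr hne1)) _ ?_
        rw [dist_eq_norm, sub_add_cancel_left, norm_neg, norm_smul, Real.norm_eq_abs,
          abs_of_pos hη.1.1]
        calc η.1 * ‖p.1.1‖ ≤ (D/4) * 1 :=
            mul_le_mul hη.1.2.le hu1 (norm_nonneg _) hD4.le
          _ = D/4 := mul_one _
      have hy : p.2.2 ∈ K := by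
        have hLne : fderiv ℝ f (p.2.2 + η.2 • p.1.2) ≠ 0 := by
          intro hc; rw [hc] at hne2; simp at hne2
        refine hmemK (p.2.2 + η.2 • p.1.2)
          (support_fderiv_subset ℝ (Function.mem_support.mpr hLne)) _ ?_
        rw [dist_eq_norm, sub_add_cancel_left, norm_neg, norm_smul, Real.norm_eq_abs,
          abs_of_pos hη.2.1]
        calc η.2 * ‖p.1.2‖ ≤ (D/4) * 1 :=
            mul_le_mul hη.2.2.le hu2 (norm_nonneg _) hD4.le
          _ = D/4 := mul_one _
      have hWval : W p.2 = ‖p.2.1 - p.2.2‖⁻¹ + M := by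
        rw [hWdef, indicator_of_mem (Set.mk_mem_prod hx hy)]
      have hWnn' : (0:ℝ) ≤ ‖p.2.1 - p.2.2‖⁻¹ + M := by positivity
      rw [Real.norm_eq_abs, abs_mul, abs_mul, abs_mul, abs_mul,
        abs_of_nonneg (hφ0 p.1.1), abs_of_nonneg (hφ0 p.1.2)]
      have hC := hC₁bdd p.2.1 hx p.2.2 hy
      calc |f (p.2.1 + η.1 • p.1.1)| * |fderiv ℝ f (p.2.2 + η.2 • p.1.2) e₀|
            * |C₁ p.2.1 p.2.2| * φ p.1.1 * φ p.1.2
          ≤ B₁ * B₂ * (‖p.2.1 - p.2.2‖⁻¹ + M) * φ p.1.1 * φ p.1.2 := by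
            have := hB₁ (p.2.1 + η.1 • p.1.1)
            have := hB₂ (p.2.2 + η.2 • p.1.2)
            rw [Real.norm_eq_abs] at *
            gcongr <;> first | exact hφ0 _ | positivity
        _ = Φ p := by rw [hΦdef]; dsimp only; rw [hWval]; ring
  have hGint : ∀ η : ℝ × ℝ, η ∈ Set.Ioo (0:ℝ) (D/4) ×ˢ Set.Ioo (0:ℝ) (D/4) →
      Integrable (fun p : (((EuclideanSpace ℝ (Fin d)) × (EuclideanSpace ℝ (Fin d))) × (EuclideanSpace ℝ (Fin d)) × (EuclideanSpace ℝ (Fin d))) =>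
        f (p.2.1 + η.1 • p.1.1) * fderiv ℝ f (p.2.2 + η.2 • p.1.2) e₀
          * C₁ p.2.1 p.2.2 * φ p.1.1 * φ p.1.2) volume :=
    fun η hη => hΦint.mono' (hGmeas η) (ae_of_all _ (hGbound η hη))
  -- transfer via the shear
  have hOG : ∀ η : ℝ × ℝ,
      (∫ p : (((EuclideanSpace ℝ (Fin d)) × (EuclideanSpace ℝ (Fin d))) × (EuclideanSpace ℝ (Fin d)) × (EuclideanSpace ℝ (Fin d))), f p.2.1 * fderiv ℝ f (p.2.2 + η.2 • p.1.2) e₀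
          * C₁ (p.2.1 - η.1 • p.1.1) p.2.2 * φ p.1.1 * φ p.1.2)
        = (∫ p : (((EuclideanSpace ℝ (Fin d)) × (EuclideanSpace ℝ (Fin d))) × (EuclideanSpace ℝ (Fin d)) × (EuclideanSpace ℝ (Fin d))), f (p.2.1 + η.1 • p.1.1) * fderiv ℝ f (p.2.2 + η.2 • p.1.2) e₀
          * C₁ p.2.1 p.2.2 * φ p.1.1 * φ p.1.2) ∧
      (Integrable (fun p : (((EuclideanSpace ℝ (Fin d)) × (EuclideanSpace ℝ (Fin d))) × (EuclideanSpace ℝ (Fin d)) × (EuclideanSpace ℝ (Fin d))) =>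
          f (p.2.1 + η.1 • p.1.1) * fderiv ℝ f (p.2.2 + η.2 • p.1.2) e₀
          * C₁ p.2.1 p.2.2 * φ p.1.1 * φ p.1.2) volume →
        Integrable (fun p : (((EuclideanSpace ℝ (Fin d)) × (EuclideanSpace ℝ (Fin d))) × (EuclideanSpace ℝ (Fin d)) × (EuclideanSpace ℝ (Fin d))) =>
          f p.2.1 * fderiv ℝ f (p.2.2 + η.2 • p.1.2) e₀
          * C₁ (p.2.1 - η.1 • p.1.1) p.2.2 * φ p.1.1 * φ p.1.2) volume) := by
    intro η
    obtain ⟨T, hTmp, hTval⟩ := aux_shear d η.1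
    have hcomp : (fun p : (((EuclideanSpace ℝ (Fin d)) × (EuclideanSpace ℝ (Fin d))) × (EuclideanSpace ℝ (Fin d)) × (EuclideanSpace ℝ (Fin d))) =>
        f (p.2.1 + η.1 • p.1.1) * fderiv ℝ f (p.2.2 + η.2 • p.1.2) e₀
          * C₁ p.2.1 p.2.2 * φ p.1.1 * φ p.1.2)
        = (fun p : (((EuclideanSpace ℝ (Fin d)) × (EuclideanSpace ℝ (Fin d))) × (EuclideanSpace ℝ (Fin d)) × (EuclideanSpace ℝ (Fin d))) => f p.2.1 * fderiv ℝ f (p.2.2 + η.2 • p.1.2) e₀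
          * C₁ (p.2.1 - η.1 • p.1.1) p.2.2 * φ p.1.1 * φ p.1.2) ∘ T := by
      funext p
      simp only [Function.comp_apply, hTval p]
      simp [add_sub_cancel_right]
    constructor
    · calc (∫ p : (((EuclideanSpace ℝ (Fin d)) × (EuclideanSpace ℝ (Fin d))) × (EuclideanSpace ℝ (Fin d)) × (EuclideanSpace ℝ (Fin d))), f p.2.1 * fderiv ℝ f (p.2.2 + η.2 • p.1.2) e₀
          * C₁ (p.2.1 - η.1 • p.1.1) p.2.2 * φ p.1.1 * φ p.1.2)
          = ∫ p : (((EuclideanSpace ℝ (Fin d)) × (EuclideanSpace ℝ (Fin d))) × (EuclideanSpace ℝ (Fin d)) × (EuclideanSpace ℝ (Fin d))), ((fun p : (((EuclideanSpace ℝ (Fin d)) × (EuclideanSpace ℝ (Fin d))) × (EuclideanSpace ℝ (Fin d)) × (EuclideanSpace ℝ (Fin d))) =>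
              f p.2.1 * fderiv ℝ f (p.2.2 + η.2 • p.1.2) e₀
              * C₁ (p.2.1 - η.1 • p.1.1) p.2.2 * φ p.1.1 * φ p.1.2) ∘ T) p :=
            (hTmp.integral_comp T.measurableEmbedding _).symm
        _ = _ := by rw [← hcomp]
    · intro hint
      rw [hcomp] at hint
      exact (hTmp.integrable_comp_emb T.measurableEmbedding).mp hint
  refine ⟨?_, ?_⟩
  · intro η₁ h₁ η₂ h₂
    exact (hOG (η₁, η₂)).2 (hGint (η₁, η₂) ⟨h₁, h₂⟩)
  · have hlfil : (𝓝[>] (0:ℝ)) ×ˢ (𝓝[>] (0:ℝ)) ≤ 𝓝 ((0:ℝ), (0:ℝ)) := by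
      rw [nhds_prod_eq]
      exact Filter.prod_mono nhdsWithin_le_nhds nhdsWithin_le_nhds
    have hS : (Set.Ioo (0:ℝ) (D/4)) ×ˢ (Set.Ioo (0:ℝ) (D/4)) ∈
        (𝓝[>] (0:ℝ)) ×ˢ (𝓝[>] (0:ℝ)) :=
      prod_mem_prod (Ioo_mem_nhdsGT_of_mem ⟨le_refl 0, hD4⟩)
        (Ioo_mem_nhdsGT_of_mem ⟨le_refl 0, hD4⟩)
    have hDCT : Tendsto (fun η : ℝ × ℝ => ∫ p : (((EuclideanSpace ℝ (Fin d)) × (EuclideanSpace ℝ (Fin d))) × (EuclideanSpace ℝ (Fin d)) × (EuclideanSpace ℝ (Fin d))),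
        f (p.2.1 + η.1 • p.1.1) * fderiv ℝ f (p.2.2 + η.2 • p.1.2) e₀
          * C₁ p.2.1 p.2.2 * φ p.1.1 * φ p.1.2)
        ((𝓝[>] (0:ℝ)) ×ˢ (𝓝[>] (0:ℝ)))
        (𝓝 (∫ p : (((EuclideanSpace ℝ (Fin d)) × (EuclideanSpace ℝ (Fin d))) × (EuclideanSpace ℝ (Fin d)) × (EuclideanSpace ℝ (Fin d))), f p.2.1 * fderiv ℝ f p.2.2 e₀
          * C₁ p.2.1 p.2.2 * φ p.1.1 * φ p.1.2)) := by
      refine tendsto_integral_filter_of_dominated_convergence Φ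
        (Eventually.of_forall hGmeas)
        (eventually_of_mem hS fun η hη => ae_of_all _ (hGbound η hη))
        hΦint (ae_of_all _ fun p => ?_)
      have hcont : Continuous (fun η : ℝ × ℝ =>
          f (p.2.1 + η.1 • p.1.1) * fderiv ℝ f (p.2.2 + η.2 • p.1.2) e₀
          * C₁ p.2.1 p.2.2 * φ p.1.1 * φ p.1.2) := by
        refine ((((hf.continuous.comp ?_).mul (hdf_cont.comp ?_)).mul
          continuous_const).mul continuous_const).mul continuous_const
        · exact continuous_const.add (continuous_fst.smul continuous_const)
        · exact continuous_const.add (continuous_snd.smul continuous_const)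
      have h := (hcont.tendsto ((0:ℝ), (0:ℝ))).mono_left hlfil
      simpa using h
    have hval : (∫ p : (((EuclideanSpace ℝ (Fin d)) × (EuclideanSpace ℝ (Fin d))) × (EuclideanSpace ℝ (Fin d)) × (EuclideanSpace ℝ (Fin d))), f p.2.1 * fderiv ℝ f p.2.2 e₀
        * C₁ p.2.1 p.2.2 * φ p.1.1 * φ p.1.2)
        = ∫ q : (EuclideanSpace ℝ (Fin d)) × (EuclideanSpace ℝ (Fin d)), f q.1 * fderiv ℝ f q.2 e₀ * C₁ q.1 q.2 := by
      rw [Measure.volume_eq_prod]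
      have h1 : (fun p : (((EuclideanSpace ℝ (Fin d)) × (EuclideanSpace ℝ (Fin d))) × (EuclideanSpace ℝ (Fin d)) × (EuclideanSpace ℝ (Fin d))) => f p.2.1 * fderiv ℝ f p.2.2 e₀
          * C₁ p.2.1 p.2.2 * φ p.1.1 * φ p.1.2)
          = fun p : (((EuclideanSpace ℝ (Fin d)) × (EuclideanSpace ℝ (Fin d))) × (EuclideanSpace ℝ (Fin d)) × (EuclideanSpace ℝ (Fin d))) => (fun w : (EuclideanSpace ℝ (Fin d)) × (EuclideanSpace ℝ (Fin d)) => φ w.1 * φ w.2) p.1 *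
            (fun q : (EuclideanSpace ℝ (Fin d)) × (EuclideanSpace ℝ (Fin d)) => f q.1 * fderiv ℝ f q.2 e₀ * C₁ q.1 q.2) p.2 := by
        funext p; dsimp only; ring
      rw [h1, integral_prod_mul (fun w : (EuclideanSpace ℝ (Fin d)) × (EuclideanSpace ℝ (Fin d)) => φ w.1 * φ w.2)
        (fun q : (EuclideanSpace ℝ (Fin d)) × (EuclideanSpace ℝ (Fin d)) => f q.1 * fderiv ℝ f q.2 e₀ * C₁ q.1 q.2)]
      have h2 : (∫ w : (EuclideanSpace ℝ (Fin d)) × (EuclideanSpace ℝ (Fin d)), φ w.1 * φ w.2) = 1 := by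
        rw [Measure.volume_eq_prod, integral_prod_mul φ φ, hφint]; norm_num
      rw [h2, one_mul]
    rw [hval] at hDCT
    exact hDCT.congr fun η => ((hOG η).1).symm
end

section
/- Suppose that: (i) there is M ≥ 0 with ‖H_n‖ ≤ M for all n; (ii) there are a real number c and complex numbers c_{n,m} (defined for n > m ≥ 1) such that |⟨H_n, H_m⟩ − c_{n,m}| ≤ M ε_n^a ε_m^{−b} for all n > m, and such that for every δ > 0 there exists N₀ with |c_{n,m} − c| < δ whenever n > m ≥ N₀. Then ‖(1/N) ∑_{n=1}^N H_n‖² → c as N → ∞. -/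
open Filter
open scoped Topology

section AuxStmt16

-- key exponent inequality: error term bound by geometric q^m
lemma errbound_aux (a b K : ℝ) (ha : 0 < a) (hb : 0 < b) (hK1 : 1 < K) (hd : b < a * K)
    (m n : ℕ) (hmn : m < n) :
    ((2:ℝ) ^ (-(K ^ n))) ^ a * ((2:ℝ) ^ (-(K ^ m))) ^ (-b)
      ≤ ((2:ℝ) ^ (-((a * K - b) * (K - 1)))) ^ m := by
  have h2 : (0:ℝ) < 2 := by norm_num
  rw [← Real.rpow_natCast ((2:ℝ) ^ (-((a * K - b) * (K - 1)))) m,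
    ← Real.rpow_mul (by norm_num), ← Real.rpow_mul (by norm_num),
    ← Real.rpow_mul (by norm_num), ← Real.rpow_add h2]
  apply Real.rpow_le_rpow_left_iff (by norm_num : (1:ℝ) < 2) |>.2
  have hK0 : (0:ℝ) < K := lt_trans one_pos hK1
  have hbern : 1 + (m:ℝ) * (K - 1) ≤ K ^ m := by
    simpa using one_add_mul_le_pow (by linarith : (-2:ℝ) ≤ K - 1) m
  have hpow : K ^ (m + 1) ≤ K ^ n := pow_le_pow_right₀ hK1.le hmn
  have hKm : (0:ℝ) < K ^ m := pow_pos hK0 m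
  have : K ^ (m+1) = K * K ^ m := by ring
  nlinarith [mul_le_mul_of_nonneg_left hpow ha.le, mul_pos hKm (by linarith : (0:ℝ) < a * K - b)]


open Filter Finset
open scoped Topology

lemma ind_nonneg (P : Prop) [Decidable P] : (0:ℝ) ≤ if P then (1:ℝ) else 0 := by
  split <;> norm_num

lemma keybound {E : Type*} [NormedAddCommGroup E] [InnerProductSpace ℂ E]
    (H : ℕ → E) (M q B δ c : ℝ) (hM : 0 ≤ M) (hq0 : 0 < q) (hq1 : q < 1)
    (hB0 : 0 ≤ B) (hδ : 0 ≤ δ) (N₀ N : ℕ)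
    (hpt : ∀ n m : ℕ, 1 ≤ n → 1 ≤ m →
      ‖(inner ℂ (H n) (H m) : ℂ) - (c : ℂ)‖
        ≤ M * q ^ (min n m) + (if N₀ ≤ min n m ∧ n ≠ m then δ else B)) :
    ‖(inner ℂ (∑ n ∈ Icc 1 N, H n) (∑ n ∈ Icc 1 N, H n) : ℂ) - (N:ℂ)^2 * c‖
      ≤ (N:ℝ) * (2 * M * (1 - q)⁻¹ + B * (2 * N₀ + 1)) + δ * N ^ 2 := by
  set s := Icc 1 N with hs
  have hcard : s.card = N := by simp [hs]
  have hinner : (inner ℂ (∑ n ∈ s, H n) (∑ n ∈ s, H n) : ℂ)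
      = ∑ p ∈ s ×ˢ s, (inner ℂ (H p.1) (H p.2) : ℂ) := by
    rw [sum_inner, Finset.sum_product]
    exact Finset.sum_congr rfl fun n _ => inner_sum ..
  have hdiff : (inner ℂ (∑ n ∈ s, H n) (∑ n ∈ s, H n) : ℂ) - (N:ℂ)^2 * c
      = ∑ p ∈ s ×ˢ s, ((inner ℂ (H p.1) (H p.2) : ℂ) - (c : ℂ)) := by
    rw [Finset.sum_sub_distrib, hinner, Finset.sum_const, Finset.card_product, hcard]
    push_cast
    ring
  rw [hdiff]
  have hG : ∑ n ∈ s, q ^ n ≤ (1 - q)⁻¹ :=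
    (Summable.sum_le_tsum s (fun i _ => (pow_pos hq0 i).le)
      (summable_geometric_of_lt_one hq0.le hq1)).trans_eq
      (tsum_geometric_of_lt_one hq0.le hq1)
  calc ‖∑ p ∈ s ×ˢ s, ((inner ℂ (H p.1) (H p.2) : ℂ) - (c : ℂ))‖
      ≤ ∑ p ∈ s ×ˢ s, ‖(inner ℂ (H p.1) (H p.2) : ℂ) - (c : ℂ)‖ := norm_sum_le _ _
    _ ≤ ∑ p ∈ s ×ˢ s, (M * q ^ (min p.1 p.2)
          + (if N₀ ≤ min p.1 p.2 ∧ p.1 ≠ p.2 then δ else B)) := by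
        refine Finset.sum_le_sum fun p hp => ?_
        rw [Finset.mem_product, hs, Finset.mem_Icc, Finset.mem_Icc] at hp
        exact hpt p.1 p.2 hp.1.1 hp.2.1
    _ ≤ ∑ p ∈ s ×ˢ s, (M * (q ^ p.1 + q ^ p.2)
          + (δ + B * ((if p.1 < N₀ then (1:ℝ) else 0) + (if p.2 < N₀ then (1:ℝ) else 0)
              + (if p.1 = p.2 then (1:ℝ) else 0)))) := by
        refine Finset.sum_le_sum fun p _ => ?_
        have i1 := ind_nonneg (p.1 < N₀)
        have i2 := ind_nonneg (p.2 < N₀)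
        have i3 := ind_nonneg (p.1 = p.2)
        gcongr ?_ + ?_
        · have : q ^ (min p.1 p.2) ≤ q ^ p.1 + q ^ p.2 := by
            rcases min_choice p.1 p.2 with h | h <;> rw [h] <;>
              [exact le_add_of_nonneg_right (pow_pos hq0 _).le;
               exact le_add_of_nonneg_left (pow_pos hq0 _).le]
          exact mul_le_mul_of_nonneg_left this hM
        · by_cases hcond : N₀ ≤ min p.1 p.2 ∧ p.1 ≠ p.2
          · rw [if_pos hcond]
            nlinarith
          · rw [if_neg hcond]
            have h1 : (1:ℝ) ≤ (if p.1 < N₀ then (1:ℝ) else 0) + (if p.2 < N₀ then (1:ℝ) else 0)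
                + (if p.1 = p.2 then (1:ℝ) else 0) := by
              rw [not_and_or, not_le, min_lt_iff, not_not] at hcond
              rcases hcond with (h | h) | h
              · rw [if_pos h]; linarith
              · rw [if_pos h]; linarith
              · rw [if_pos h]; linarith
            nlinarith
    _ = M * ((∑ p ∈ s ×ˢ s, q ^ p.1) + ∑ p ∈ s ×ˢ s, q ^ p.2)
          + (δ * (s ×ˢ s).card
             + B * ((∑ p ∈ s ×ˢ s, (if p.1 < N₀ then (1:ℝ) else 0))
                + (∑ p ∈ s ×ˢ s, (if p.2 < N₀ then (1:ℝ) else 0))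
                + (∑ p ∈ s ×ˢ s, (if p.1 = p.2 then (1:ℝ) else 0)))) := by
        simp only [Finset.sum_add_distrib, ← Finset.mul_sum, Finset.sum_const, nsmul_eq_mul]
        ring
    _ ≤ (N:ℝ) * (2 * M * (1 - q)⁻¹ + B * (2 * N₀ + 1)) + δ * N ^ 2 := by
        have e1 : ∑ p ∈ s ×ˢ s, q ^ p.1 = (N:ℝ) * ∑ n ∈ s, q ^ n := by
          rw [Finset.sum_product]
          simp [Finset.sum_const, hcard, Finset.mul_sum, mul_comm]
        have e2 : ∑ p ∈ s ×ˢ s, q ^ p.2 = (N:ℝ) * ∑ n ∈ s, q ^ n := by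
          rw [Finset.sum_product]
          simp [Finset.sum_const, hcard, Finset.mul_sum]
        have hcard2 : ((s ×ˢ s).card : ℝ) = (N:ℝ)^2 := by
          rw [Finset.card_product, hcard]; push_cast; ring
        have hind : ∑ n ∈ s, (if n < N₀ then (1:ℝ) else 0) ≤ (N₀ : ℝ) := by
          rw [Finset.sum_boole]
          have hsub : (s.filter (· < N₀)) ⊆ Finset.range N₀ := fun x hx => by
            simp only [Finset.mem_filter] at hx
            exact Finset.mem_range.2 hx.2
          exact_mod_cast Nat.cast_le.2 ((Finset.card_le_card hsub).trans_eq (Finset.card_range N₀))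
        have e3 : ∑ p ∈ s ×ˢ s, (if p.1 < N₀ then (1:ℝ) else 0) ≤ (N:ℝ) * N₀ := by
          rw [Finset.sum_product]
          have hc : ∀ n, ∑ _m ∈ s, (if n < N₀ then (1:ℝ) else 0)
              = (N:ℝ) * (if n < N₀ then (1:ℝ) else 0) := fun n => by
            rw [Finset.sum_const, hcard, nsmul_eq_mul]
          calc ∑ n ∈ s, ∑ _m ∈ s, (if n < N₀ then (1:ℝ) else 0)
              = (N:ℝ) * ∑ n ∈ s, (if n < N₀ then (1:ℝ) else 0) := by
                rw [Finset.sum_congr rfl (fun n _ => hc n), ← Finset.mul_sum]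
            _ ≤ (N:ℝ) * N₀ := mul_le_mul_of_nonneg_left hind (Nat.cast_nonneg N)
        have e4 : ∑ p ∈ s ×ˢ s, (if p.2 < N₀ then (1:ℝ) else 0) ≤ (N:ℝ) * N₀ := by
          rw [Finset.sum_product]
          calc ∑ _n ∈ s, ∑ m ∈ s, (if m < N₀ then (1:ℝ) else 0)
              = (N:ℝ) * ∑ m ∈ s, (if m < N₀ then (1:ℝ) else 0) := by
                simp [Finset.sum_const, hcard, Finset.mul_sum]
            _ ≤ (N:ℝ) * N₀ := mul_le_mul_of_nonneg_left hind (Nat.cast_nonneg N)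
        have e5 : ∑ p ∈ s ×ˢ s, (if p.1 = p.2 then (1:ℝ) else 0) ≤ (N:ℝ) := by
          rw [Finset.sum_product]
          calc ∑ n ∈ s, ∑ m ∈ s, (if n = m then (1:ℝ) else 0)
              = ∑ n ∈ s, (if n ∈ s then (1:ℝ) else 0) :=
                Finset.sum_congr rfl fun n _ => Finset.sum_ite_eq s n (fun _ => (1:ℝ))
            _ ≤ ∑ _n ∈ s, (1:ℝ) := by
                refine Finset.sum_le_sum fun n _ => ?_
                split <;> norm_num
            _ = (N:ℝ) := by simp [hcard]
        rw [e1, e2, hcard2]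
        have hGge : (0:ℝ) ≤ (1 - q)⁻¹ := inv_nonneg.2 (by linarith)
        have hGnn : 0 ≤ ∑ n ∈ s, q ^ n :=
          Finset.sum_nonneg fun i _ => (pow_pos hq0 i).le
        have hN : (0:ℝ) ≤ (N:ℝ) := Nat.cast_nonneg N
        nlinarith [mul_le_mul_of_nonneg_left hG (mul_nonneg hM hN),
          mul_le_mul_of_nonneg_left (add_le_add (add_le_add e3 e4) e5) hB0]

end AuxStmt16

/-- **Law of large numbers for the averaged approximations.**
Let `E` be a complex inner product space, `H : ℕ → E`, `a, b > 0`, `K > max(1, b/a)` and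
`ε_n = 2^{−K^n}`. Suppose `‖H_n‖ ≤ M` for all `n`, and there are a real `c` and complex
`c_{n,m}` with `|⟨H_n, H_m⟩ − c_{n,m}| ≤ M ε_n^a ε_m^{−b}` for `n > m ≥ 1` and
`c_{n,m} → c` as `n > m → ∞`. Then `‖(1/N) ∑_{n=1}^N H_n‖² → c` as `N → ∞`. -/
theorem stmt16 {E : Type*} [NormedAddCommGroup E] [InnerProductSpace ℂ E]
    (H : ℕ → E) (a b : ℝ) (ha : 0 < a) (hb : 0 < b)
    (K : ℝ) (hK : max 1 (b / a) < K)
    (ε : ℕ → ℝ) (hε : ∀ n, ε n = (2:ℝ) ^ (-(K ^ n)))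
    (M : ℝ) (hM : 0 ≤ M) (hHbd : ∀ n, ‖H n‖ ≤ M)
    (c : ℝ) (cc : ℕ → ℕ → ℂ)
    (hcc : ∀ n m : ℕ, 1 ≤ m → m < n →
      ‖(inner ℂ (H n) (H m) : ℂ) - cc n m‖ ≤ M * ε n ^ a * ε m ^ (-b))
    (hlim : ∀ δ : ℝ, 0 < δ → ∃ N₀ : ℕ, ∀ n m : ℕ, N₀ ≤ m → m < n →
      ‖cc n m - (c : ℂ)‖ < δ) :
    Tendsto (fun N : ℕ => ‖(N : ℂ)⁻¹ • ∑ n ∈ Finset.Icc 1 N, H n‖ ^ 2) atTop (𝓝 c) := by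
  have hK1 : 1 < K := lt_of_le_of_lt (le_max_left _ _) hK
  have hKba : b < a * K := by
    have h := lt_of_le_of_lt (le_max_right 1 (b / a)) hK
    rw [div_lt_iff₀ ha] at h; linarith
  set q : ℝ := (2:ℝ) ^ (-((a * K - b) * (K - 1))) with hqdef
  have hq0 : 0 < q := Real.rpow_pos_of_pos two_pos _
  have hq1 : q < 1 := Real.rpow_lt_one_of_one_lt_of_neg (by norm_num) (by nlinarith)
  have h1q : (0:ℝ) < 1 - q := by linarith
  set B : ℝ := M ^ 2 + |c| with hBdef
  have hB0 : 0 ≤ B := by positivity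
  rw [Metric.tendsto_atTop]
  intro εe hεe
  set δ := εe / 3 with hδdef
  have hδ0 : 0 < δ := by positivity
  obtain ⟨N₀, hN₀⟩ := hlim δ hδ0
  -- pointwise bound
  have hone : ∀ n m : ℕ, 1 ≤ m → m < n → N₀ ≤ m →
      ‖(inner ℂ (H n) (H m) : ℂ) - (c:ℂ)‖ ≤ M * q ^ m + δ := by
    intro n m hm hmn hN
    have h1 : ‖(inner ℂ (H n) (H m) : ℂ) - cc n m‖ ≤ M * q ^ m := by
      have h := hcc n m hm hmn
      refine h.trans ?_
      rw [hε, hε, mul_assoc]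
      exact mul_le_mul_of_nonneg_left (errbound_aux a b K ha hb hK1 hKba m n hmn) hM
    have h2 : ‖cc n m - (c:ℂ)‖ ≤ δ := by
      have := hN₀ n m hN hmn
      exact this.le
    calc ‖(inner ℂ (H n) (H m) : ℂ) - (c:ℂ)‖
        = ‖((inner ℂ (H n) (H m) : ℂ) - cc n m) + (cc n m - (c:ℂ))‖ := by ring_nf
      _ ≤ ‖(inner ℂ (H n) (H m) : ℂ) - cc n m‖ + ‖cc n m - (c:ℂ)‖ := norm_add_le _ _
      _ ≤ M * q ^ m + δ := add_le_add h1 h2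
  have hpt : ∀ n m : ℕ, 1 ≤ n → 1 ≤ m →
      ‖(inner ℂ (H n) (H m) : ℂ) - (c:ℂ)‖
        ≤ M * q ^ (min n m) + (if N₀ ≤ min n m ∧ n ≠ m then δ else B) := by
    intro n m hn hm
    by_cases hcond : N₀ ≤ min n m ∧ n ≠ m
    · rw [if_pos hcond]
      obtain ⟨hmin, hne⟩ := hcond
      rcases hne.lt_or_gt with h | h
      · have hx : (inner ℂ (H n) (H m) : ℂ) = (starRingEnd ℂ) (inner ℂ (H m) (H n) : ℂ) :=
          (inner_conj_symm _ _).symm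
        have heq : ‖(inner ℂ (H n) (H m) : ℂ) - (c:ℂ)‖ = ‖(inner ℂ (H m) (H n) : ℂ) - (c:ℂ)‖ := by
          rw [hx]
          nth_rewrite 1 [show ((c:ℂ)) = (starRingEnd ℂ) ((c:ℂ)) from (Complex.conj_ofReal c).symm]
          rw [← map_sub, RCLike.norm_conj]
        rw [heq, min_eq_left h.le]
        exact hone m n hn h (by rw [min_eq_left h.le] at hmin; exact hmin)
      · rw [min_eq_right h.le]
        exact hone n m hm h (by rw [min_eq_right h.le] at hmin; exact hmin)
    · rw [if_neg hcond]
      have hCS : ‖(inner ℂ (H n) (H m) : ℂ)‖ ≤ M * M :=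
        (norm_inner_le_norm _ _).trans
          (mul_le_mul (hHbd n) (hHbd m) (norm_nonneg _) hM)
      have htri : ‖(inner ℂ (H n) (H m) : ℂ) - (c:ℂ)‖
          ≤ ‖(inner ℂ (H n) (H m) : ℂ)‖ + ‖(c:ℂ)‖ := norm_sub_le _ _
      have hcn : ‖(c:ℂ)‖ = |c| := by rw [Complex.norm_real, Real.norm_eq_abs]
      have hmq : 0 ≤ M * q ^ (min n m) := mul_nonneg hM (pow_pos hq0 _).le
      rw [hcn] at htri
      nlinarith
  set C : ℝ := 2 * M * (1 - q)⁻¹ + B * (2 * N₀ + 1) with hCdef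
  have hC0 : 0 ≤ C := by positivity
  obtain ⟨N₁, hN₁⟩ := exists_nat_gt (C / δ)
  refine ⟨max N₁ 1, fun N hN => ?_⟩
  have hN1 : 1 ≤ N := le_trans (le_max_right _ _) hN
  have hNN1 : N₁ ≤ N := le_trans (le_max_left _ _) hN
  have hNpos : (0:ℝ) < N := by exact_mod_cast hN1
  have hkey := keybound H M q B δ c hM hq0 hq1 hB0 hδ0.le N₀ N hpt
  set S : E := ∑ n ∈ Finset.Icc 1 N, H n with hSdef
  have hreal : |‖S‖ ^ 2 - (N:ℝ)^2 * c| ≤ (N:ℝ) * C + δ * N ^ 2 := by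
    have hcast : ((‖S‖ ^ 2 - (N:ℝ)^2 * c : ℝ) : ℂ)
        = (inner ℂ S S : ℂ) - (N:ℂ)^2 * (c:ℂ) := by
      rw [inner_self_eq_norm_sq_to_K]
      norm_cast
      rw [Complex.ofReal_sub]
      norm_num
    calc |‖S‖ ^ 2 - (N:ℝ)^2 * c|
        = ‖((‖S‖ ^ 2 - (N:ℝ)^2 * c : ℝ) : ℂ)‖ := (Complex.norm_real _).symm
      _ = ‖(inner ℂ S S : ℂ) - (N:ℂ)^2 * (c:ℂ)‖ := by rw [hcast]
      _ ≤ (N:ℝ) * C + δ * N ^ 2 := hkey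
  have hfn : ‖(N:ℂ)⁻¹ • S‖ ^ 2 = ((N:ℝ)^2)⁻¹ * ‖S‖ ^ 2 := by
    rw [norm_smul, norm_inv, Complex.norm_natCast, mul_pow, inv_pow]
  rw [Real.dist_eq, hfn]
  have hsplit : ((N:ℝ)^2)⁻¹ * ‖S‖ ^ 2 - c = ((N:ℝ)^2)⁻¹ * (‖S‖ ^ 2 - (N:ℝ)^2 * c) := by
    field_simp
  rw [hsplit, abs_mul, abs_of_nonneg (by positivity : (0:ℝ) ≤ ((N:ℝ)^2)⁻¹)]
  have hCN : C / (N:ℝ) < δ := by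
    rw [div_lt_iff₀ hNpos]
    have : C / δ < (N:ℝ) := lt_of_lt_of_le hN₁ (by exact_mod_cast hNN1)
    rw [div_lt_iff₀ hδ0] at this
    linarith
  calc ((N:ℝ)^2)⁻¹ * |‖S‖ ^ 2 - (N:ℝ)^2 * c|
      ≤ ((N:ℝ)^2)⁻¹ * ((N:ℝ) * C + δ * N ^ 2) :=
        mul_le_mul_of_nonneg_left hreal (by positivity)
    _ = C / (N:ℝ) + δ := by field_simp
    _ < δ + δ := by linarith
    _ < εe := by rw [hδdef]; linarith
end
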